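/- arXiv:0912.0335 — 6 statements merged into one kernel-verified Lean document; each statement's English description precedes it below -/
import Mathlib

section
/- Let r ≥ 2 and let s₁,…,s_r be natural numbers (each positive). Then the sum over all permutations π of {1,…,r} of the product ∏_{j=2}^{r} s_{π(j)} / (∑_{i=1}^{j} s_{π(i)}) equals 1. -/
open Finset

lemma Ici_succ_eq_map (n : ℕ) (k : Fin n) :
    Finset.Ici k.succ = (Finset.Ici k).map (Fin.succEmb n) := by
  ext x
  simp only [Finset.mem_map, Finset.mem_Ici, Fin.succEmb, Function.Embedding.coeFn_mk]
  constructor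
  · intro hx
    induction x using Fin.cases with
    | zero => exact absurd hx (by simp [Fin.lt_iff_val_lt_val, Fin.le_def])
    | succ i => exact ⟨i, Fin.succ_le_succ_iff.mp hx, rfl⟩
  · rintro ⟨i, hi, rfl⟩
    exact Fin.succ_le_succ_iff.mpr hi

-- suffix-sum version, over all k
lemma aux_suffix (n : ℕ) (s : Fin n → ℝ) (hs : ∀ i, 0 < s i) :
    ∑ π : Equiv.Perm (Fin n),
      ∏ k : Fin n, s (π k) / ∑ i ∈ Finset.Ici k, s (π i) = 1 := by
  induction n with
  | zero => simp
  | succ n ih =>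
    rw [← Equiv.sum_comp (Equiv.Perm.decomposeFin).symm, Fintype.sum_prod_type]
    have hIci0 : (Finset.Ici (0 : Fin (n+1))) = Finset.univ := by
      ext x; simp [Fin.zero_le]
    have hS : 0 < ∑ i, s i := Finset.sum_pos (fun i _ => hs i) Finset.univ_nonempty
    have key : ∀ p : Fin (n+1), ∀ e : Equiv.Perm (Fin n),
        (∏ k : Fin (n+1),
          s (Equiv.Perm.decomposeFin.symm (p, e) k) /
            ∑ i ∈ Finset.Ici k, s (Equiv.Perm.decomposeFin.symm (p, e) i))
          = (s p / ∑ i, s i) *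
            ∏ k : Fin n, s (Equiv.swap 0 p (e k).succ) /
              ∑ i ∈ Finset.Ici k, s (Equiv.swap 0 p (e i).succ) := by
      intro p e
      rw [Fin.prod_univ_succ]
      congr 1
      · rw [hIci0, Equiv.Perm.decomposeFin_symm_apply_zero]
        exact congrArg (s p / ·) (Equiv.sum_comp (Equiv.Perm.decomposeFin.symm (p, e)) s)
      · refine Finset.prod_congr rfl fun k _ => ?_
        rw [Equiv.Perm.decomposeFin_symm_apply_succ, Ici_succ_eq_map, Finset.sum_map]
        exact congrArg (s (Equiv.swap 0 p (e k).succ) / ·)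
          (Finset.sum_congr rfl fun i _ => by
            simp [Fin.succEmb, Equiv.Perm.decomposeFin_symm_apply_succ])
    calc ∑ p : Fin (n+1), ∑ e : Equiv.Perm (Fin n),
          ∏ k : Fin (n+1),
            s (Equiv.Perm.decomposeFin.symm (p, e) k) /
              ∑ i ∈ Finset.Ici k, s (Equiv.Perm.decomposeFin.symm (p, e) i)
        = ∑ p : Fin (n+1), (s p / ∑ i, s i) * 1 := by
          refine Finset.sum_congr rfl fun p _ => ?_
          simp only [key]
          rw [← Finset.mul_sum, ih (fun k => s (Equiv.swap 0 p k.succ)) (fun k => hs _)]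
      _ = 1 := by
          simp only [mul_one]
          rw [← Finset.sum_div, div_self hS.ne']

/-- Lemma (permutation identity): for `r ≥ 2` and positive naturals `s₁,…,s_r`,
the sum over all permutations `π` of `{1,…,r}` of
`∏_{j=2}^{r} s_{π(j)} / (s_{π(1)} + ⋯ + s_{π(j)})` equals `1`.
(Indices are 0-based: `j` ranges over the nonzero elements of `Fin r`, and the
denominator is the partial sum `∑_{i ≤ j} s_{π(i)}`.) -/
theorem stmt_0 (r : ℕ) (hr : 2 ≤ r) (s : Fin r → ℕ) (hs : ∀ i, 0 < s i) :
    ∑ π : Equiv.Perm (Fin r),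
      ∏ j ∈ Finset.univ.filter (fun j : Fin r => j ≠ ⟨0, by omega⟩),
        ((s (π j) : ℝ) / ∑ i ∈ Finset.Iic j, (s (π i) : ℝ)) = 1 := by
  haveI : NeZero r := ⟨by omega⟩
  have hS : ∀ i : Fin r, 0 < ((s i : ℝ)) := fun i => by exact_mod_cast hs i
  have hsum : ∀ (π : Equiv.Perm (Fin r)) (j : Fin r),
      ∑ i ∈ Finset.Iic j, (s (π i.rev) : ℝ) = ∑ i ∈ Finset.Ici j.rev, (s (π i) : ℝ) := by
    intro π j
    refine Finset.sum_nbij' (fun i => Fin.rev i) (fun i => Fin.rev i) ?_ ?_ ?_ ?_ ?_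
    · intro a ha
      simp only [Finset.mem_Iic] at ha
      simpa [Finset.mem_Ici] using Fin.rev_le_rev.mpr ha
    · intro a ha
      simp only [Finset.mem_Ici] at ha
      have := Fin.rev_le_rev.mpr ha
      simpa [Finset.mem_Iic] using this
    · intro a _; exact Fin.rev_rev a
    · intro a _; exact Fin.rev_rev a
    · intro a _; rfl
  set L : Fin r := Fin.rev ⟨0, by omega⟩ with hL
  have hLval : (L : ℕ) = r - 1 := by simp [hL, Fin.val_rev]
  have hIciL : Finset.Ici L = {L} := by
    ext x
    simp only [Finset.mem_Ici, Finset.mem_singleton]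
    constructor
    · intro h
      refine le_antisymm ?_ h
      rw [Fin.le_def, hLval]
      omega
    · rintro rfl; exact le_refl _
  have main : ∀ π : Equiv.Perm (Fin r),
      (∏ j ∈ Finset.univ.filter (fun j : Fin r => j ≠ ⟨0, by omega⟩),
        ((s (π j.rev) : ℝ) / ∑ i ∈ Finset.Iic j, (s (π i.rev) : ℝ)))
      = ∏ k : Fin r, (s (π k) : ℝ) / ∑ i ∈ Finset.Ici k, (s (π i) : ℝ) := by
    intro π
    have hB : ∀ j : Fin r, ((s (π j.rev) : ℝ) / ∑ i ∈ Finset.Iic j, (s (π i.rev) : ℝ))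
        = (s (π j.rev) : ℝ) / ∑ i ∈ Finset.Ici j.rev, (s (π i) : ℝ) := by
      intro j; rw [hsum]
    calc (∏ j ∈ Finset.univ.filter (fun j : Fin r => j ≠ ⟨0, by omega⟩),
          ((s (π j.rev) : ℝ) / ∑ i ∈ Finset.Iic j, (s (π i.rev) : ℝ)))
        = ∏ k ∈ Finset.univ.filter (fun k : Fin r => k ≠ L),
            ((s (π k) : ℝ) / ∑ i ∈ Finset.Ici k, (s (π i) : ℝ)) := by
          refine Finset.prod_nbij' (fun j => Fin.rev j) (fun k => Fin.rev k) ?_ ?_ ?_ ?_ ?_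
          · intro a ha
            simp only [Finset.mem_filter, Finset.mem_univ, true_and] at ha ⊢
            intro hc
            exact ha (by rw [Fin.rev_eq_iff.mp hc, hL, Fin.rev_rev])
          · intro a ha
            simp only [Finset.mem_filter, Finset.mem_univ, true_and] at ha ⊢
            intro hc
            exact ha (by rw [hL, ← hc, Fin.rev_rev])
          · intro a _; exact Fin.rev_rev a
          · intro a _; exact Fin.rev_rev a
          · intro a _; exact hB a
      _ = ∏ k : Fin r, (s (π k) : ℝ) / ∑ i ∈ Finset.Ici k, (s (π i) : ℝ) := by
          rw [Finset.filter_ne']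
          rw [← Finset.mul_prod_erase Finset.univ _ (Finset.mem_univ L)]
          rw [hIciL, Finset.sum_singleton, div_self (hS (π L)).ne', one_mul]
  calc ∑ π : Equiv.Perm (Fin r),
        ∏ j ∈ Finset.univ.filter (fun j : Fin r => j ≠ ⟨0, by omega⟩),
          ((s (π j) : ℝ) / ∑ i ∈ Finset.Iic j, (s (π i) : ℝ))
      = ∑ π : Equiv.Perm (Fin r),
        ∏ j ∈ Finset.univ.filter (fun j : Fin r => j ≠ ⟨0, by omega⟩),
          ((s (π j.rev) : ℝ) / ∑ i ∈ Finset.Iic j, (s (π i.rev) : ℝ)) := by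
        exact (Equiv.sum_comp (Equiv.mulRight (Fin.revPerm : Equiv.Perm (Fin r)))
          (fun π : Equiv.Perm (Fin r) =>
            ∏ j ∈ Finset.univ.filter (fun j : Fin r => j ≠ ⟨0, by omega⟩),
              ((s (π j) : ℝ) / ∑ i ∈ Finset.Iic j, (s (π i) : ℝ)))).symm
    _ = ∑ π : Equiv.Perm (Fin r),
        ∏ k : Fin r, (s (π k) : ℝ) / ∑ i ∈ Finset.Ici k, (s (π i) : ℝ) :=
        Finset.sum_congr rfl fun π _ => main π
    _ = 1 := aux_suffix r (fun i => (s i : ℝ)) hS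
end

section
/- Let T be a uniformly random Cayley tree (labelled tree) on n vertices with a distinguished root r, and let v be a uniformly random vertex of T. Then for each k with 1 ≤ k ≤ n, the probability that the graph distance from r to v equals k−1 is k·(n)_k / n^{k+1}, where (n)_k = n(n−1)⋯(n−k+1). -/
open Function Finset

section IterLemmas
variable {α : Type*}

lemma iter_agree {h₁ h₂ : α → α} {S : Set α} (hag : ∀ z, z ∉ S → h₁ z = h₂ z)
    {x : α} {t : ℕ} (hpre : ∀ m, m < t → h₁^[m] x ∉ S) :
    ∀ m, m ≤ t → h₂^[m] x = h₁^[m] x := by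
  intro m hm
  induction m with
  | zero => rfl
  | succ m ih =>
    rw [Function.iterate_succ_apply', Function.iterate_succ_apply',
      ih (le_of_lt hm)]
    exact (hag _ (hpre m hm)).symm

lemma iter_agree_sigma {h₁ h₂ σ : α → α} {S : Set α} (hσ : ∀ z, z ∉ S → σ z = z)
    (hag : ∀ z, z ∉ S → h₂ z = σ (h₁ z))
    {x : α} {t : ℕ} (hpre : ∀ m, m < t → h₁^[m] x ∉ S) :
    ∀ m, 1 ≤ m → m ≤ t → h₂^[m] x = σ (h₁^[m] x) := by
  intro m hm1 hmt
  induction m with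
  | zero => omega
  | succ m ih =>
    rcases Nat.eq_zero_or_pos m with hm0 | hmpos
    · subst hm0
      simpa using hag x (hpre 0 (by omega))
    · rw [Function.iterate_succ_apply', Function.iterate_succ_apply',
        ih hmpos (by omega), hσ _ (hpre m (by omega))]
      exact hag _ (hpre m (by omega))

lemma iter_distinct {h : α → α} {S : Set α} {x : α} {t : ℕ}
    (hpre : ∀ m, m < t → h^[m] x ∉ S) (hit : h^[t] x ∈ S) :
    ∀ i j, i < j → j ≤ t → h^[i] x ≠ h^[j] x := by
  intro i j hij hjt heq
  have h1 : h^[t] x = h^[(t - j) + j] x := by congr 1; omega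
  have h2 : h^[(t-j) + j] x = h^[t-j] (h^[j] x) := Function.iterate_add_apply h (t-j) j x
  have h3 : h^[t-j] (h^[i] x) = h^[(t-j) + i] x := (Function.iterate_add_apply h (t-j) i x).symm
  have : h^[(t-j)+i] x ∈ S := by
    rw [← h3, heq, ← h2, ← h1]; exact hit
  exact hpre _ (by omega) this

lemma no_escape_of_periodic {h : α → α} {S : Set α} {x : α} {p : ℕ} (hp : 1 ≤ p)
    (hper : h^[p] x = x) (hcyc : ∀ j, j < p → h^[j] x ∉ S) : ∀ m, h^[m] x ∉ S := by
  intro m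
  have hpp : Function.IsPeriodicPt h p x := hper
  have : h^[m % p] x = h^[m] x := hpp.iterate_mod_apply m
  rw [← this]
  exact hcyc _ (Nat.mod_lt _ hp)

end IterLemmas

section CardLemmas

lemma nat_card_sigma {ι : Type*} [Fintype ι] (f : ι → Type*) [∀ i, Finite (f i)] :
    Nat.card (Σ i, f i) = ∑ i, Nat.card (f i) := by
  letI : ∀ i, Fintype (f i) := fun i => Fintype.ofFinite _
  simp [Nat.card_eq_fintype_card]

lemma nat_card_prod_subtype {β γ : Type*} [Fintype β] [Finite γ] (p : β → γ → Prop) :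
    Nat.card {z : β × γ // p z.1 z.2} = ∑ b : β, Nat.card {c : γ // p b c} := by
  rw [Nat.card_congr (Equiv.subtypeProdEquivSigmaSubtype p)]
  exact nat_card_sigma _

lemma nat_card_fiber_sum {β γ : Type*} [Finite β] [Fintype γ] (f : β → γ) :
    Nat.card β = ∑ c : γ, Nat.card {b : β // f b = c} := by
  rw [← Nat.card_congr (Equiv.sigmaFiberEquiv f)]
  exact nat_card_sigma _

lemma nat_card_split {β : Type*} [Finite β] (p : β → Prop) :
    Nat.card {b // p b} + Nat.card {b // ¬ p b} = Nat.card β := by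
  classical
  rw [← Nat.card_sum]
  exact Nat.card_congr (Equiv.sumCompl p)

end CardLemmas

section Acy
variable {n : ℕ}

/-- Functions that fix `P` pointwise and whose every trajectory eventually enters `P`. -/
def Acy (n : ℕ) (P : Finset (Fin n)) : Type :=
  {h : Fin n → Fin n // (∀ x ∈ P, h x = x) ∧ ∀ x : Fin n, ∃ m, h^[m] x ∈ P}

instance {P : Finset (Fin n)} : Finite (Acy n P) := by unfold Acy; infer_instance

/-- first entry point of trajectory of `y` into `P`. -/
def exitF {P : Finset (Fin n)} (a : Acy n P) (y : Fin n) : Fin n :=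
  a.1^[Nat.find (a.2.2 y)] y

lemma exitF_mem {P : Finset (Fin n)} (a : Acy n P) (y : Fin n) : exitF a y ∈ P :=
  Nat.find_spec (a.2.2 y)

lemma exitF_eq_of {P : Finset (Fin n)} (a : Acy n P) (y : Fin n) {t : ℕ}
    (hmem : a.1^[t] y ∈ P) (hpre : ∀ m, m < t → a.1^[m] y ∉ P) :
    exitF a y = a.1^[t] y := by
  have : Nat.find (a.2.2 y) = t := by
    rw [Nat.find_eq_iff]
    exact ⟨hmem, fun m hm => hpre m hm⟩
  rw [exitF, this]

lemma exitF_of_mem {P : Finset (Fin n)} (a : Acy n P) {y : Fin n} (hy : y ∈ P) :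
    exitF a y = y := by
  have := exitF_eq_of a y (t := 0) (by simpa using hy) (by omega)
  simpa using this

end Acy

section Swap
variable {n : ℕ}

/-- The swap involution on `Acy n P`, swapping exit targets `x` and `s` in `P`. -/
def swapAcy {P : Finset (Fin n)} (x s : Fin n) (hx : x ∈ P) (hs : s ∈ P)
    (a : Acy n P) : Acy n P := by
  refine ⟨fun z => if z ∈ P then z else Equiv.swap x s (a.1 z), fun z hz => if_pos hz, ?_⟩
  · intro z
    obtain ⟨t, ht⟩ := a.2.2 z
    -- use the least t
    have hex := a.2.2 z
    set T := Nat.find hex with hT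
    have hmem : a.1^[T] z ∈ P := Nat.find_spec hex
    have hpre : ∀ m, m < T → a.1^[m] z ∉ P := fun m hm => Nat.find_min hex hm
    rcases Nat.eq_zero_or_pos T with h0 | hTpos
    · exact ⟨0, by rw [h0] at hmem; simpa using hmem⟩
    · refine ⟨T, ?_⟩
      have hag : ∀ w, w ∉ (↑P : Set (Fin n)) →
          (fun z => if z ∈ P then z else Equiv.swap x s (a.1 z)) w = Equiv.swap x s (a.1 w) := by
        intro w hw; simp only [Finset.mem_coe] at hw; simp [if_neg hw]
      have hσ : ∀ w, w ∉ (↑P : Set (Fin n)) → Equiv.swap x s w = w := by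
        intro w hw; simp only [Finset.mem_coe] at hw
        exact Equiv.swap_apply_of_ne_of_ne (fun h => hw (h ▸ hx)) (fun h => hw (h ▸ hs))
      have := iter_agree_sigma (σ := Equiv.swap x s) hσ hag
        (x := z) (t := T) (fun m hm => by simpa using hpre m hm) T hTpos le_rfl
      rw [this]
      have : Equiv.swap x s (a.1^[T] z) ∈ P := by
        rcases eq_or_ne (a.1^[T] z) x with h | hne1
        · rw [h, Equiv.swap_apply_left]; exact hs
        · rcases eq_or_ne (a.1^[T] z) s with h | hne2
          · rw [h, Equiv.swap_apply_right]; exact hx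
          · rw [Equiv.swap_apply_of_ne_of_ne hne1 hne2]; exact hmem
      exact this

lemma swapAcy_exit {P : Finset (Fin n)} (x s : Fin n) (hx : x ∈ P) (hs : s ∈ P)
    (a : Acy n P) {y : Fin n} (hy : y ∉ P) :
    exitF (swapAcy x s hx hs a) y = Equiv.swap x s (exitF a y) := by
  have hex := a.2.2 y
  set T := Nat.find hex with hT
  have hmem : a.1^[T] y ∈ P := Nat.find_spec hex
  have hpre : ∀ m, m < T → a.1^[m] y ∉ P := fun m hm => Nat.find_min hex hm
  have hTpos : 0 < T := by
    rcases Nat.eq_zero_or_pos T with h0 | h; · rw [h0] at hmem; simp at hmem; exact absurd hmem hy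
    · exact h
  have hag : ∀ w, w ∉ (↑P : Set (Fin n)) →
      (swapAcy x s hx hs a).1 w = Equiv.swap x s (a.1 w) := by
    intro w hw; simp only [Finset.mem_coe] at hw
    show (if w ∈ P then w else Equiv.swap x s (a.1 w)) = _
    simp [if_neg hw]
  have hσ : ∀ w, w ∉ (↑P : Set (Fin n)) → Equiv.swap x s w = w := by
    intro w hw; simp only [Finset.mem_coe] at hw
    exact Equiv.swap_apply_of_ne_of_ne (fun h => hw (h ▸ hx)) (fun h => hw (h ▸ hs))
  have key : ∀ m, 1 ≤ m → m ≤ T → (swapAcy x s hx hs a).1^[m] y = Equiv.swap x s (a.1^[m] y) :=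
    iter_agree_sigma hσ hag (fun m hm => by simpa using hpre m hm)
  have hswapP : ∀ w, w ∈ P → Equiv.swap x s w ∈ P := by
    intro w hw
    rcases eq_or_ne w x with h | h1
    · rw [h, Equiv.swap_apply_left]; exact hs
    rcases eq_or_ne w s with h | h2
    · rw [h, Equiv.swap_apply_right]; exact hx
    · rwa [Equiv.swap_apply_of_ne_of_ne h1 h2]
  have hpre' : ∀ m, m < T → (swapAcy x s hx hs a).1^[m] y ∉ P := by
    intro m hm
    rcases Nat.eq_zero_or_pos m with h0 | hmp
    · subst h0; simpa using hy
    · rw [key m hmp (le_of_lt hm), hσ _ (by simpa using hpre m hm)]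
      exact hpre m hm
  have hmem' : (swapAcy x s hx hs a).1^[T] y ∈ P := by
    rw [key T hTpos le_rfl]; exact hswapP _ hmem
  rw [exitF_eq_of _ _ hmem' hpre', key T hTpos le_rfl]
  rfl

lemma swapAcy_invol {P : Finset (Fin n)} (x s : Fin n) (hx : x ∈ P) (hs : s ∈ P)
    (a : Acy n P) : swapAcy x s hx hs (swapAcy x s hx hs a) = a := by
  apply Subtype.ext
  funext z
  show (if z ∈ P then z else Equiv.swap x s ((swapAcy x s hx hs a).1 z)) = a.1 z
  by_cases hz : z ∈ P
  · rw [if_pos hz]; exact (a.2.1 z hz).symm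
  · rw [if_neg hz]
    show Equiv.swap x s (if z ∈ P then z else Equiv.swap x s (a.1 z)) = a.1 z
    rw [if_neg hz, Equiv.swap_apply_self]

/-- all exit fibers over points of `P` have the same cardinality -/
lemma card_exit_fiber_eq {P : Finset (Fin n)} (x s : Fin n) (hx : x ∈ P) (hs : s ∈ P)
    {y : Fin n} (hy : y ∉ P) :
    Nat.card {a : Acy n P // exitF a y = x} = Nat.card {a : Acy n P // exitF a y = s} := by
  apply Nat.card_eq_of_bijective
    (f := fun a => ⟨swapAcy x s hx hs a.1, by
      rw [swapAcy_exit x s hx hs a.1 hy, a.2, Equiv.swap_apply_left]⟩)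
  constructor
  · rintro ⟨a, ha⟩ ⟨b, hb⟩ hab
    simp only [Subtype.mk.injEq] at hab
    have := congrArg (swapAcy x s hx hs) hab
    rw [swapAcy_invol, swapAcy_invol] at this
    exact Subtype.ext this
  · rintro ⟨b, hb⟩
    refine ⟨⟨swapAcy x s hx hs b, ?_⟩, ?_⟩
    · rw [swapAcy_exit x s hx hs b hy, hb, Equiv.swap_apply_right]
    · apply Subtype.ext
      simp [swapAcy_invol]

lemma card_exit_fiber {P : Finset (Fin n)} (x : Fin n) (hx : x ∈ P)
    {y : Fin n} (hy : y ∉ P) :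
    Nat.card (Acy n P) = P.card * Nat.card {a : Acy n P // exitF a y = x} := by
  rw [nat_card_fiber_sum (fun a : Acy n P => exitF a y)]
  have hzero : ∀ s ∈ Finset.univ, s ∉ P → Nat.card {a : Acy n P // exitF a y = s} = 0 := by
    intro s _ hsP
    rw [Nat.card_eq_zero]
    left
    refine ⟨fun a => hsP ?_⟩
    rw [← a.2]; exact exitF_mem a.1 y
  rw [← Finset.sum_subset (Finset.subset_univ P) hzero]
  calc ∑ s ∈ P, Nat.card {a : Acy n P // exitF a y = s}
      = ∑ _s ∈ P, Nat.card {a : Acy n P // exitF a y = x} :=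
        Finset.sum_congr rfl (fun s hs => (card_exit_fiber_eq x s hx hs hy).symm)
    _ = P.card * Nat.card {a : Acy n P // exitF a y = x} := by
        rw [Finset.sum_const, smul_eq_mul]

section Update
variable {n : ℕ}

lemma self_ne_of_escape {P : Finset (Fin n)} {h : Fin n → Fin n} {x : Fin n}
    (hx : x ∉ P) (hesc : ∃ m, h^[m] x ∈ P) : h x ≠ x := by
  intro hfix
  obtain ⟨m, hm⟩ := hesc
  rw [Function.iterate_fixed hfix] at hm
  exact hx hm

/-- E1: deleting `x` from the sink set, via `Function.update`. -/
def updEquiv {P : Finset (Fin n)} {x : Fin n} (hx : x ∉ P) :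
    Acy n P ≃ {z : Acy n (insert x P) × Fin n // exitF z.1 z.2 ≠ x} := by
  set P' := insert x P with hP'
  have hagree : ∀ (f g : Fin n → Fin n), (∀ w, w ≠ x → f w = g w) →
      ∀ (z : Fin n) (t : ℕ), (∀ m, m < t → f^[m] z ∉ P') →
      ∀ m, m ≤ t → g^[m] z = f^[m] z := by
    intro f g hfg z t hpre
    refine iter_agree (S := (↑P' : Set (Fin n))) ?_ (by simpa using hpre)
    intro w hw
    simp only [Finset.mem_coe, hP', Finset.mem_insert, not_or] at hw
    exact hfg w hw.1
  refine ⟨fun a => ⟨(⟨Function.update a.1 x x, ?_, ?_⟩, a.1 x), ?_⟩,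
    fun z => ⟨Function.update z.1.1.1 x z.1.2, ?_, ?_⟩, ?_, ?_⟩
  case _ =>
    intro z hz
    rcases Finset.mem_insert.1 hz with rfl | hzP
    · simp
    · rw [Function.update_of_ne (fun hzx => hx (by rwa [hzx] at hzP)) _ _]
      exact a.2.1 z hzP
  case _ =>
    intro z
    have hex : ∃ m, a.1^[m] z ∈ P' := by
      obtain ⟨m, hm⟩ := a.2.2 z
      exact ⟨m, Finset.mem_insert_of_mem hm⟩
    refine ⟨Nat.find hex, ?_⟩
    rw [hagree a.1 _ (fun w hw => (Function.update_of_ne hw _ _).symm) z (Nat.find hex)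
      (fun m hm => Nat.find_min hex hm) _ le_rfl]
    exact Nat.find_spec hex
  case _ =>
    -- exit of (update a x x) from (a x) is ≠ x
    have habs : ∀ (b : Acy n P'), b.1 = Function.update a.1 x x → exitF b (a.1 x) ≠ x := by
      intro b hb
      set y := a.1 x with hy
      have hex : ∃ m, a.1^[m] y ∈ P' := by
        obtain ⟨m, hm⟩ := a.2.2 y
        exact ⟨m, Finset.mem_insert_of_mem hm⟩
      set T := Nat.find hex with hT
      have hmem : a.1^[T] y ∈ P' := Nat.find_spec hex
      have hpre : ∀ m, m < T → a.1^[m] y ∉ P' := fun m hm => Nat.find_min hex hm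
      have hne : a.1^[T] y ≠ x := by
        intro hbad
        have hper : a.1^[T + 1] x = x := by
          rw [Function.iterate_succ_apply, ← hy, hbad]
        have hcyc : ∀ j, j < T + 1 → a.1^[j] x ∉ (↑P : Set (Fin n)) := by
          intro j hj
          rcases Nat.eq_zero_or_pos j with rfl | hjpos
          · simpa using hx
          · obtain ⟨i, rfl⟩ := Nat.exists_eq_succ_of_ne_zero (Nat.pos_iff_ne_zero.mp hjpos)
            simp only [Finset.mem_coe]
            intro hmemP
            have hiter : a.1^[i + 1] x = a.1^[i] y := by
              rw [Function.iterate_succ_apply, ← hy]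
            rw [hiter] at hmemP
            exact hpre i (by omega) (Finset.mem_insert_of_mem hmemP)
        obtain ⟨m, hm⟩ := a.2.2 x
        exact no_escape_of_periodic (by omega) hper hcyc m (by simpa using hm)
      have key : ∀ m, m ≤ T → b.1^[m] y = a.1^[m] y := by
        rw [hb]
        exact hagree a.1 _ (fun w hw => (Function.update_of_ne hw _ _).symm) y T hpre
      have hfinal : exitF b y = b.1^[T] y := by
        apply exitF_eq_of
        · rw [key T le_rfl]; exact hmem
        · intro m hm; rw [key m (le_of_lt hm)]; exact hpre m hm
      rw [key T le_rfl] at hfinal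
      simpa [hfinal] using hne
    exact habs _ rfl
  case _ =>
    -- backward: fixes P
    intro w hw
    rw [Function.update_of_ne (fun hwx => hx (by rwa [hwx] at hw)) _ _]
    exact z.1.1.2.1 w (Finset.mem_insert_of_mem hw)
  case _ =>
    -- backward: escapes to P
    obtain ⟨⟨a', y⟩, hne⟩ := z
    dsimp only at *
    set h := Function.update a'.1 x y with hh
    have hagree' : ∀ (zz : Fin n) (t : ℕ), (∀ m, m < t → a'.1^[m] zz ∉ P') →
        ∀ m, m ≤ t → h^[m] zz = a'.1^[m] zz :=
      hagree a'.1 h (fun w hw => (Function.update_of_ne hw _ _).symm)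
    -- trajectory of y reaches P (not just P')
    have hyP : ∃ m, h^[m] y ∈ P := by
      have hex := a'.2.2 y
      set T := Nat.find hex with hT
      have hmem : a'.1^[T] y ∈ P' := Nat.find_spec hex
      have hpre : ∀ m, m < T → a'.1^[m] y ∉ P' := fun m hm => Nat.find_min hex hm
      have hexit : exitF a' y = a'.1^[T] y := rfl
      have : a'.1^[T] y ∈ P := by
        rcases Finset.mem_insert.1 hmem with hbad | hgood
        · exact absurd (hexit.trans hbad) hne
        · exact hgood
      exact ⟨T, by rw [hagree' y T hpre T le_rfl]; exact this⟩
    have hxP : ∃ m, h^[m] x ∈ P := by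
      obtain ⟨m, hm⟩ := hyP
      refine ⟨m + 1, ?_⟩
      rw [Function.iterate_succ_apply, hh, Function.update_self]
      exact hm
    intro zz
    have hex := a'.2.2 zz
    set T := Nat.find hex with hT
    have hmem : a'.1^[T] zz ∈ P' := Nat.find_spec hex
    have hpre : ∀ m, m < T → a'.1^[m] zz ∉ P' := fun m hm => Nat.find_min hex hm
    have hTz : h^[T] zz = a'.1^[T] zz := hagree' zz T hpre T le_rfl
    rcases Finset.mem_insert.1 hmem with hbad | hgood
    · obtain ⟨m, hm⟩ := hxP
      refine ⟨m + T, ?_⟩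
      rw [Function.iterate_add_apply, hTz, hbad]
      exact hm
    · exact ⟨T, by rw [hTz]; exact hgood⟩
  case _ =>
    -- left inverse
    intro a
    apply Subtype.ext
    show Function.update (Function.update a.1 x x) x (a.1 x) = a.1
    rw [Function.update_idem, Function.update_eq_self]
  case _ =>
    -- right inverse
    rintro ⟨⟨a', y⟩, hne⟩
    apply Subtype.ext
    apply Prod.ext
    · apply Subtype.ext
      show Function.update (Function.update a'.1 x y) x x = a'.1
      rw [Function.update_idem]
      have : a'.1 x = x := a'.2.1 x (Finset.mem_insert_self x P)
      nth_rewrite 2 [← this]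
      exact Function.update_eq_self x a'.1
    · show Function.update a'.1 x y x = y
      exact Function.update_self x y a'.1

end Update

section MainCount
variable {n : ℕ}

theorem acy_card : ∀ (q : ℕ) (P : Finset (Fin n)), P.Nonempty → n - P.card = q →
    Nat.card (Acy n P) * n = P.card * n ^ (n - P.card) := by
  intro q
  induction q with
  | zero =>
    intro P hP hq
    have hle : P.card ≤ n := by
      simpa using Finset.card_le_univ P
    have hcard : P.card = n := by omega
    have hPu : P = Finset.univ := Finset.eq_univ_of_card P (by simpa using hcard)
    subst hPu
    letI : Unique (Acy n Finset.univ) :=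
      ⟨⟨⟨id, fun x _ => rfl, fun x => ⟨0, by simp⟩⟩⟩,
        fun a => Subtype.ext (funext fun z => a.2.1 z (Finset.mem_univ z))⟩
    rw [Nat.card_unique]
    simp [hcard]
  | succ q ih =>
    intro P hP hq
    have hle : P.card ≤ n := by simpa using Finset.card_le_univ P
    have hcompl : (Pᶜ : Finset (Fin n)).Nonempty := by
      rw [← Finset.card_pos, Finset.card_compl]
      simp only [Fintype.card_fin]
      omega
    obtain ⟨x, hxc⟩ := hcompl
    have hx : x ∉ P := Finset.mem_compl.mp hxc
    set P' := insert x P with hP'def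
    have hcardP' : P'.card = P.card + 1 := Finset.card_insert_of_notMem hx
    have hq2 : n - P'.card = q := by omega
    have hIH : Nat.card (Acy n P') * n = P'.card * n ^ q :=
      hq2 ▸ ih P' ⟨x, Finset.mem_insert_self x P⟩ hq2
    set F' := Nat.card (Acy n P') with hF'
    set A := Nat.card (Acy n P) with hA
    set e := Nat.card {z : Acy n P' × Fin n // exitF z.1 z.2 = x} with he
    -- split
    have h1 : e + A = F' * n := by
      have hsplit := nat_card_split (β := Acy n P' × Fin n)
        (fun z => exitF z.1 z.2 = x)
      rw [Nat.card_prod] at hsplit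
      have hAcong : Nat.card {z : Acy n P' × Fin n // ¬ exitF z.1 z.2 = x} = A := by
        rw [hA]
        exact (Nat.card_congr (updEquiv hx)).symm
      rw [hAcong] at hsplit
      simpa [Nat.card_eq_fintype_card] using hsplit
    -- fiber computation
    have h2 : P'.card * e = P'.card * F' + (n - P'.card) * F' := by
      have hcomm : e = ∑ y : Fin n, Nat.card {a : Acy n P' // exitF a y = x} := by
        have step : Nat.card {z : Acy n P' × Fin n // exitF z.1 z.2 = x}
            = Nat.card {w : Fin n × Acy n P' // exitF w.2 w.1 = x} :=
          Nat.card_congr (Equiv.subtypeEquiv (Equiv.prodComm (Acy n P') (Fin n))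
            (fun z => Iff.rfl))
        rw [he, step]
        exact nat_card_prod_subtype (fun (y : Fin n) (a : Acy n P') => exitF a y = x)
      rw [hcomm, Finset.mul_sum, ← Finset.sum_add_sum_compl P']
      congr 1
      · -- sum over P'
        rw [Finset.sum_eq_single x]
        · rw [Nat.card_congr (Equiv.subtypeUnivEquiv
            (fun a => exitF_of_mem a (Finset.mem_insert_self x P)))]
        · intro y hy hyx
          have : IsEmpty {a : Acy n P' // exitF a y = x} := by
            refine ⟨fun a => hyx ?_⟩
            rw [← a.2, exitF_of_mem a.1 hy]
          rw [Nat.card_of_isEmpty, mul_zero]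
        · intro hxx
          exact absurd (Finset.mem_insert_self x P) hxx
      · -- sum over complement
        have hconst : ∀ y ∈ P'ᶜ, P'.card * Nat.card {a : Acy n P' // exitF a y = x} = F' := by
          intro y hy
          exact (card_exit_fiber x (Finset.mem_insert_self x P) (Finset.mem_compl.mp hy)).symm
        rw [Finset.sum_congr rfl hconst, Finset.sum_const, smul_eq_mul,
          Finset.card_compl]
        simp [Fintype.card_fin]
    -- arithmetic
    have hn : P.card + 1 + q = n := by omega
    rw [hq]
    have hz1 : (e : ℤ) + A = F' * n := by exact_mod_cast h1
    have hz2 : ((P.card : ℤ) + 1) * e = ((P.card : ℤ) + 1) * F' + q * F' := by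
      rw [hq2, hcardP'] at h2
      exact_mod_cast h2
    have hzIH : (F' : ℤ) * n = ((P.card : ℤ) + 1) * n ^ q := by
      rw [hcardP'] at hIH
      exact_mod_cast hIH
    have hzn : (P.card : ℤ) + 1 + q = n := by exact_mod_cast hn
    have hc : ((P.card : ℤ) + 1) * ((A : ℤ) * n) = ((P.card : ℤ) + 1) * ((P.card : ℤ) * n ^ (q + 1)) := by
      linear_combination ((n : ℤ) * ((P.card : ℤ) + 1)) * hz1 - (n : ℤ) * hz2
        + ((P.card : ℤ) * n) * hzIH - ((F' : ℤ) * n) * hzn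
    have hfin : (A : ℤ) * n = (P.card : ℤ) * n ^ (q + 1) :=
      mul_left_cancel₀ (by positivity) hc
    exact_mod_cast hfin

end MainCount

section PathDecomp

/-- rooted functional trees with a marked vertex at "first-hit time" `k-1`. -/
def RootedDist (n k : ℕ) : Type :=
  {q : (Fin n → Fin n) × Fin n × Fin n //
    q.1 q.2.1 = q.2.1 ∧ (∀ x, ∃ m, q.1^[m] x = q.2.1) ∧
    q.1^[k-1] q.2.2 = q.2.1 ∧ ∀ m, m < k-1 → q.1^[m] q.2.2 ≠ q.2.1}

/-- a path (embedding of `Fin k`) together with an acyclic structure on the rest. -/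
def Good (n k : ℕ) : Type :=
  {z : (Fin k ↪ Fin n) × (Fin n → Fin n) //
    (∀ x ∈ Finset.univ.map z.1, z.2 x = x) ∧
    ∀ x : Fin n, ∃ m, z.2^[m] x ∈ Finset.univ.map z.1}

variable {n k : ℕ}

lemma mem_map_univ_iff {w : Fin k ↪ Fin n} {x : Fin n} :
    x ∈ Finset.univ.map w ↔ ∃ i, w i = x := by
  simp [Finset.mem_map]

/-- the path, read off backwards from the marked vertex -/
def pathW (hk : 1 ≤ k) (q : RootedDist n k) : Fin k ↪ Fin n := by
  refine ⟨fun i => q.1.1^[(k-1) - i.val] q.1.2.2, ?_⟩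
  obtain ⟨⟨f, r, v⟩, hr, hesc, hkv, hkpre⟩ := q
  simp only
  have hdis : ∀ i j : ℕ, i < j → j ≤ k - 1 → f^[i] v ≠ f^[j] v := by
    refine iter_distinct (S := {r}) ?_ (by simpa using hkv)
    intro m hm
    simpa using hkpre m hm
  intro i j hij
  by_contra hne
  have hi : i.val ≤ k - 1 := by omega
  have hj : j.val ≤ k - 1 := by omega
  rcases Nat.lt_trichotomy ((k-1) - i.val) ((k-1) - j.val) with h | h | h
  · exact hdis _ _ h (by omega) hij
  · exact hne (Fin.ext (by omega))
  · exact hdis _ _ h (by omega) hij.symm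

lemma pathW_apply (hk : 1 ≤ k) (q : RootedDist n k) (i : Fin k) :
    pathW hk q i = q.1.1^[(k-1) - i.val] q.1.2.2 := rfl

lemma pathW_root (hk : 1 ≤ k) (q : RootedDist n k) :
    pathW hk q ⟨0, by omega⟩ = q.1.2.1 := by
  rw [pathW_apply]
  simpa using q.2.2.2.1

/-- forward: extract the path and the residual structure -/
def pathF (hk : 1 ≤ k) (q : RootedDist n k) : Good n k := by
  refine ⟨(pathW hk q,
    fun x => if x ∈ Finset.univ.map (pathW hk q) then x else q.1.1 x),
    fun x hx => if_pos hx, ?_⟩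
  intro x
  set f := q.1.1 with hfq
  set R := Finset.univ.map (pathW hk q) with hR
  have hrR : q.1.2.1 ∈ R := by
    rw [hR, mem_map_univ_iff]
    exact ⟨⟨0, by omega⟩, pathW_root hk q⟩
  have hex : ∃ m, f^[m] x ∈ R := by
    obtain ⟨m, hm⟩ := q.2.2.1 x
    exact ⟨m, by rw [hfq, hm]; exact hrR⟩
  set T := Nat.find hex with hT
  refine ⟨T, ?_⟩
  have hag : ∀ z, z ∉ (↑R : Set (Fin n)) → f z =
      (fun x => if x ∈ R then x else f x) z := by
    intro z hz; simp only [Finset.mem_coe] at hz; simp [if_neg hz]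
  have := iter_agree hag (x := x) (t := T)
    (fun m hm => by simpa using Nat.find_min hex hm) T le_rfl
  simp only at this ⊢
  rw [this]
  exact Nat.find_spec hex

/-- rebuild the function from path plus residual structure -/
noncomputable def buildF (w : Fin k ↪ Fin n) (h : Fin n → Fin n) : Fin n → Fin n :=
  fun x => if hx : ∃ i : Fin k, w i = x then
    w ⟨hx.choose.val - 1, Nat.lt_of_le_of_lt (Nat.sub_le _ _) hx.choose.isLt⟩ else h x

lemma buildF_w (w : Fin k ↪ Fin n) (h : Fin n → Fin n) (i : Fin k) :
    buildF w h (w i) = w ⟨i.val - 1, Nat.lt_of_le_of_lt (Nat.sub_le _ _) i.isLt⟩ := by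
  have hx : ∃ j : Fin k, w j = w i := ⟨i, rfl⟩
  have hch : hx.choose = i := w.injective hx.choose_spec
  unfold buildF
  rw [dif_pos hx]
  congr 1
  apply Fin.ext
  show hx.choose.val - 1 = i.val - 1
  rw [hch]

lemma buildF_off (w : Fin k ↪ Fin n) (h : Fin n → Fin n) {x : Fin n}
    (hx : x ∉ Finset.univ.map w) : buildF w h x = h x := by
  have : ¬ ∃ i : Fin k, w i = x := by rwa [mem_map_univ_iff] at hx
  unfold buildF
  rw [dif_neg this]

lemma buildF_desc (w : Fin k ↪ Fin n) (h : Fin n → Fin n) (i : Fin k) :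
    ∀ (m : ℕ), m ≤ i.val → (buildF w h)^[m] (w i)
      = w ⟨i.val - m, Nat.lt_of_le_of_lt (Nat.sub_le _ _) i.isLt⟩ := by
  intro m
  induction m with
  | zero => intro _; simp
  | succ m ih =>
    intro hm
    rw [Function.iterate_succ_apply', ih (by omega), buildF_w]
    exact congrArg w (Fin.ext (by show i.val - m - 1 = i.val - (m+1); omega))

/-- backward map -/
noncomputable def pathB (hk : 1 ≤ k) (z : Good n k) : RootedDist n k := by
  obtain ⟨⟨w, h⟩, hfix, hesc⟩ := z
  set R := Finset.univ.map w with hR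
  set f : Fin n → Fin n := buildF w h with hf
  refine ⟨(f, w ⟨0, by omega⟩, w ⟨k-1, by omega⟩), ?_, ?_, ?_, ?_⟩
  · show f (w ⟨0, by omega⟩) = w ⟨0, by omega⟩
    rw [hf, buildF_w]
    exact congrArg w (Fin.ext (by simp))
  · intro x
    have hex : ∃ m, h^[m] x ∈ R := hesc x
    set T := Nat.find hex with hT
    have hmem : h^[T] x ∈ R := Nat.find_spec hex
    have hag : ∀ z, z ∉ (↑R : Set (Fin n)) → h z = f z := by
      intro z hz; simp only [Finset.mem_coe] at hz
      exact (buildF_off w h hz).symm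
    have hagree := iter_agree hag (x := x) (t := T)
      (fun m' hm' => by simpa using Nat.find_min hex hm') T le_rfl
    rw [hR, mem_map_univ_iff] at hmem
    obtain ⟨i, hi⟩ := hmem
    refine ⟨i.val + T, ?_⟩
    show f^[i.val + T] x = w ⟨0, by omega⟩
    rw [Function.iterate_add_apply, hagree, ← hi, hf, buildF_desc w h i i.val le_rfl]
    exact congrArg w (Fin.ext (by simp))
  · show f^[k-1] (w ⟨k-1, by omega⟩) = w ⟨0, by omega⟩
    rw [hf, buildF_desc w h ⟨k-1, by omega⟩ (k-1) le_rfl]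
    exact congrArg w (Fin.ext (by simp))
  · intro m hm
    show f^[m] (w ⟨k-1, by omega⟩) ≠ w ⟨0, by omega⟩
    rw [hf, buildF_desc w h ⟨k-1, by omega⟩ m (by show m ≤ k-1; omega)]
    intro hbad
    have := w.injective hbad
    rw [Fin.ext_iff] at this
    simp only at this
    omega

lemma pathB_val (hk : 1 ≤ k) (z : Good n k) :
    (pathB hk z).1 = (buildF z.1.1 z.1.2, z.1.1 ⟨0, by omega⟩, z.1.1 ⟨k-1, by omega⟩) := by
  obtain ⟨⟨w, h⟩, hfix, hesc⟩ := z
  rfl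

lemma pathF_val (hk : 1 ≤ k) (q : RootedDist n k) :
    (pathF hk q).1 = (pathW hk q,
      fun x => if x ∈ Finset.univ.map (pathW hk q) then x else q.1.1 x) := rfl

end PathDecomp
section Roundtrips
variable {n k : ℕ}

lemma pathBF (hk : 1 ≤ k) (q : RootedDist n k) : pathB hk (pathF hk q) = q := by
  apply Subtype.ext
  rw [pathB_val, pathF_val]
  obtain ⟨⟨f, r, v⟩, hr, hesc, hkv, hkpre⟩ := q
  simp only
  set Q : RootedDist n k := ⟨(f, r, v), hr, hesc, hkv, hkpre⟩ with hQ
  have hroot : pathW hk Q ⟨0, by omega⟩ = r := pathW_root hk _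
  have hv : pathW hk Q ⟨k-1, by omega⟩ = v := by
    rw [pathW_apply]; simp [hQ]
  set w := pathW hk Q with hwdef
  have hwap : ∀ i : Fin k, w i = f^[(k-1) - i.val] v := fun i => rfl
  set h' : Fin n → Fin n := fun x => if x ∈ Finset.univ.map w then x else f x with hh'
  have f_w : ∀ i : Fin k, f (w i) =
      w ⟨i.val - 1, Nat.lt_of_le_of_lt (Nat.sub_le _ _) i.isLt⟩ := by
    intro i
    rcases Nat.eq_zero_or_pos i.val with h0 | hpos
    · have hkv' : f^[k-1] v = r := hkv
      have e1 : (k-1) - i.val = k-1 := by omega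
      have e2 : (k-1) - (i.val - 1) = k-1 := by omega
      simp only [hwap]
      show f (f^[k-1 - i.val] v) = f^[k-1 - (i.val - 1)] v
      rw [e1, e2, hkv']
      exact hr
    · rw [hwap, hwap]
      have harith : ((k-1) - i.val) + 1 = (k-1) - (i.val - 1) := by
        have := i.isLt; omega
      rw [← harith, Function.iterate_succ_apply' f]
  have hcomp1 : buildF w h' = f := by
    funext x
    by_cases hx : ∃ i : Fin k, w i = x
    · obtain ⟨i, hi⟩ := hx
      rw [← hi, buildF_w, f_w]
    · have hxR : x ∉ Finset.univ.map w := by rwa [mem_map_univ_iff]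
      rw [buildF_off w h' hxR, hh']
      simp only [if_neg hxR]
  rw [hcomp1, hroot, hv]

lemma pathFB (hk : 1 ≤ k) (z : Good n k) : pathF hk (pathB hk z) = z := by
  obtain ⟨⟨w, h⟩, hfix, hesc⟩ := z
  apply Subtype.ext
  rw [pathF_val]
  set q := pathB hk ⟨(w, h), hfix, hesc⟩ with hqdef
  have hqv : q.1 = (buildF w h, w ⟨0, by omega⟩, w ⟨k-1, by omega⟩) := pathB_val hk _
  have hq1 : q.1.1 = buildF w h := by rw [hqv]
  have hq3 : q.1.2.2 = w ⟨k-1, by omega⟩ := by rw [hqv]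
  have hw : pathW hk q = w := by
    apply Function.Embedding.ext
    intro i
    rw [pathW_apply, hq1, hq3, buildF_desc w h ⟨k-1, by omega⟩ ((k-1) - i.val)
      (by show (k-1) - i.val ≤ k-1; omega)]
    exact congrArg w (Fin.ext (by show (k-1) - ((k-1) - i.val) = i.val; have := i.isLt; omega))
  show (pathW hk q, fun x => if x ∈ Finset.univ.map (pathW hk q) then x else q.1.1 x)
      = (w, h)
  rw [hw, hq1]
  refine Prod.ext rfl ?_
  funext x
  by_cases hx : x ∈ Finset.univ.map w
  · simp only [if_pos hx]
    exact (hfix x hx).symm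
  · simp only [if_neg hx]
    exact buildF_off w h hx

lemma card_RD (hk : 1 ≤ k) : Nat.card (RootedDist n k) = Nat.card (Good n k) :=
  Nat.card_eq_of_bijective (pathF hk)
    (Function.bijective_iff_has_inverse.mpr ⟨pathB hk, pathBF hk, pathFB hk⟩)

lemma good_card (hk : 1 ≤ k) (hkn : k ≤ n) :
    Nat.card (Good n k) * n = n.descFactorial k * (k * n ^ (n - k)) := by
  have h1 : Nat.card (Good n k)
      = ∑ w : Fin k ↪ Fin n, Nat.card (Acy n (Finset.univ.map w)) :=
    nat_card_prod_subtype (fun (w : Fin k ↪ Fin n) (h : Fin n → Fin n) =>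
      (∀ x ∈ Finset.univ.map w, h x = x) ∧ ∀ x : Fin n, ∃ m, h^[m] x ∈ Finset.univ.map w)
  rw [h1, Finset.sum_mul]
  have h2 : ∀ w : Fin k ↪ Fin n, Nat.card (Acy n (Finset.univ.map w)) * n
      = k * n ^ (n - k) := by
    intro w
    have hne : (Finset.univ.map w).Nonempty := ⟨w ⟨0, hk⟩, mem_map_univ_iff.mpr ⟨_, rfl⟩⟩
    have hcard : (Finset.univ.map w).card = k := by simp
    have := acy_card (n - k) (Finset.univ.map w) hne (by rw [hcard])
    rwa [hcard] at this
  rw [Finset.sum_congr rfl (fun w _ => h2 w), Finset.sum_const, smul_eq_mul,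
    Finset.card_univ, Fintype.card_embedding_eq]
  simp
section GraphOfFn
open SimpleGraph

variable {n : ℕ} {f : Fin n → Fin n} {r : Fin n}

/-- the graph of the parent function -/
def Gf (f : Fin n → Fin n) (r : Fin n) : SimpleGraph (Fin n) :=
  SimpleGraph.fromRel (fun a b => a ≠ r ∧ f a = b)


/-- time to reach the root -/
noncomputable def tG (hesc : ∀ x : Fin n, ∃ m, f^[m] x = r) (x : Fin n) : ℕ :=
  Nat.find (hesc x)

lemma tG_spec (hesc : ∀ x : Fin n, ∃ m, f^[m] x = r) (x : Fin n) : f^[tG hesc x] x = r := Nat.find_spec (hesc x)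

lemma tG_min (hesc : ∀ x : Fin n, ∃ m, f^[m] x = r) {x : Fin n} {m : ℕ} (hm : m < tG hesc x) : f^[m] x ≠ r :=
  Nat.find_min (hesc x) hm

lemma tG_eq_zero_iff (hesc : ∀ x : Fin n, ∃ m, f^[m] x = r) {x : Fin n} : tG hesc x = 0 ↔ x = r := by
  unfold tG
  rw [Nat.find_eq_zero]
  simp

lemma f_ne_self (hesc : ∀ x : Fin n, ∃ m, f^[m] x = r) {x : Fin n} (hx : x ≠ r) : f x ≠ x := by
  intro hfix
  obtain ⟨m, hm⟩ := hesc x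
  rw [Function.iterate_fixed hfix] at hm
  exact hx hm

lemma tG_succ (hesc : ∀ x : Fin n, ∃ m, f^[m] x = r) {x : Fin n} (hx : x ≠ r) : tG hesc (f x) + 1 = tG hesc x := by
  have h1 : tG hesc x ≠ 0 := fun h0 => hx (tG_eq_zero_iff hesc |>.mp h0)
  have h2 : f^[tG hesc x - 1] (f x) = r := by
    have h2' : f^[tG hesc x] x = r := tG_spec hesc x
    have he : tG hesc x - 1 + 1 = tG hesc x := by omega
    rw [← he, Function.iterate_succ_apply] at h2'
    exact h2'
  have h3 : tG hesc (f x) ≤ tG hesc x - 1 := Nat.find_le h2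
  have h4 : f^[tG hesc (f x) + 1] x = r := by
    rw [Function.iterate_succ_apply]
    exact tG_spec hesc (f x)
  have h5 : tG hesc x ≤ tG hesc (f x) + 1 := Nat.find_le h4
  omega

lemma Gf_adj {a b : Fin n} :
    (Gf f r).Adj a b ↔ a ≠ b ∧ ((a ≠ r ∧ f a = b) ∨ (b ≠ r ∧ f b = a)) :=
  SimpleGraph.fromRel_adj _ a b

lemma adj_f (hesc : ∀ x : Fin n, ∃ m, f^[m] x = r) {x : Fin n} (hx : x ≠ r) : (Gf f r).Adj x (f x) :=
  Gf_adj.mpr ⟨(f_ne_self hesc hx).symm, Or.inl ⟨hx, rfl⟩⟩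

lemma walk_exists (hesc : ∀ x : Fin n, ∃ m, f^[m] x = r) : ∀ (m : ℕ) (x : Fin n), f^[m] x = r →
    ∃ W : (Gf f r).Walk x r, W.length ≤ m := by
  intro m
  induction m with
  | zero =>
    intro x hx
    simp only [Function.iterate_zero, id] at hx
    subst hx
    exact ⟨SimpleGraph.Walk.nil, by simp⟩
  | succ m ih =>
    intro x hx
    rcases eq_or_ne x r with rfl | hne
    · exact ⟨SimpleGraph.Walk.nil, by simp⟩
    · rw [Function.iterate_succ_apply] at hx
      obtain ⟨W', hW'⟩ := ih (f x) hx
      exact ⟨SimpleGraph.Walk.cons (adj_f hesc hne) W', by simp [SimpleGraph.Walk.length_cons]; omega⟩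

lemma Gf_conn (hesc : ∀ x : Fin n, ∃ m, f^[m] x = r) : (Gf f r).Connected := by
  have hpre : (Gf f r).Preconnected := by
    intro a b
    obtain ⟨ma, hma⟩ := hesc a
    obtain ⟨mb, hmb⟩ := hesc b
    obtain ⟨Wa, _⟩ := walk_exists hesc ma a hma
    obtain ⟨Wb, _⟩ := walk_exists hesc mb b hmb
    exact Wa.reachable.trans Wb.reachable.symm
  have : Nonempty (Fin n) := ⟨r⟩
  exact ⟨hpre⟩

lemma dist_le_tG (hesc : ∀ x : Fin n, ∃ m, f^[m] x = r) (x : Fin n) : (Gf f r).dist x r ≤ tG hesc x := by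
  obtain ⟨W, hW⟩ := walk_exists hesc (tG hesc x) x (tG_spec hesc x)
  exact le_trans (SimpleGraph.dist_le W) hW

lemma tG_le_dist (hesc : ∀ x : Fin n, ∃ m, f^[m] x = r) (x : Fin n) : tG hesc x ≤ (Gf f r).dist x r := by
  suffices H : ∀ (d : ℕ) (x : Fin n), (Gf f r).dist x r = d → tG hesc x ≤ d by
    exact H _ x rfl
  intro d
  induction d using Nat.strong_induction_on with
  | _ d ih =>
    intro x hdx
    rcases eq_or_ne x r with heq | hne
    · have h0 : tG hesc x = 0 := (tG_eq_zero_iff hesc).mpr heq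
      omega
    · have hdpos : 0 < d := by
        rw [← hdx]
        exact SimpleGraph.Connected.pos_dist_of_ne (Gf_conn hesc) hne
      obtain ⟨W, hWlen⟩ := SimpleGraph.Connected.exists_walk_length_eq_dist (Gf_conn hesc) x r
      cases W with
      | nil => exact absurd rfl hne
      | @cons _ y _ hadj W' =>
        rw [SimpleGraph.Walk.length_cons, hdx] at hWlen
        have hdy_le : (Gf f r).dist y r ≤ d - 1 := by
          have := SimpleGraph.dist_le W'
          omega
        have hxy : (Gf f r).dist x y = 1 := SimpleGraph.dist_eq_one_iff_adj.mpr hadj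
        have hge : d ≤ 1 + (Gf f r).dist y r := by
          rw [← hdx, ← hxy]
          exact SimpleGraph.Connected.dist_triangle (Gf_conn hesc)
        have hdy : (Gf f r).dist y r = d - 1 := by omega
        have hty : tG hesc y ≤ d - 1 := ih (d-1) (by omega) y hdy
        rcases (Gf_adj.mp hadj).2 with ⟨hxr, hfx⟩ | ⟨hyr, hfy⟩
        · rw [← tG_succ hesc hxr, hfx]
          omega
        · have := tG_succ hesc hyr
          rw [hfy] at this
          omega

lemma dist_eq_tG (hesc : ∀ x : Fin n, ∃ m, f^[m] x = r) (x : Fin n) : (Gf f r).dist x r = tG hesc x :=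
  le_antisymm (dist_le_tG hesc x) (tG_le_dist hesc x)

end GraphOfFn
section GraphAcyclic
open SimpleGraph

variable {n : ℕ} {f : Fin n → Fin n} {r : Fin n}

lemma Gf_acyclic (hesc : ∀ x : Fin n, ∃ m, f^[m] x = r) : (Gf f r).IsAcyclic := by
  intro u0 c hc
  have hne : c.support.toFinset.Nonempty := ⟨u0, by simp [Walk.start_mem_support]⟩
  obtain ⟨u, huF, hmax⟩ := Finset.exists_max_image c.support.toFinset (tG hesc) hne
  have hu : u ∈ c.support := List.mem_toFinset.mp huF
  have hmax' : ∀ z, z ∈ c.support → tG hesc z ≤ tG hesc u :=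
    fun z hz => hmax z (List.mem_toFinset.mpr hz)
  set c' := c.rotate u hu with hc'def
  have hc' : c'.IsCycle := hc.rotate hu
  have hsup : ∀ z, z ∈ c'.support → z ∈ c.support := by
    intro z hz
    rw [Walk.support_eq_cons] at hz
    rcases List.mem_cons.mp hz with rfl | hz'
    · exact hu
    · have hperm := Walk.support_rotate c u hu
      have hmem := hperm.mem_iff.mp hz'
      rw [Walk.support_eq_cons c]
      exact List.mem_cons_of_mem _ hmem
  have hnil : ¬ c'.Nil := hc'.not_nil
  obtain ⟨w₁, hadj₁, q, hq⟩ := Walk.not_nil_iff.mp hnil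
  have hnil2 : ¬ c'.reverse.Nil := by
    rw [Walk.nil_iff_length_eq, Walk.length_reverse]
    have := hc'.three_le_length
    omega
  obtain ⟨w₂, hadj₂, q₂, hq₂⟩ := Walk.not_nil_iff.mp hnil2
  have hw₁mem : w₁ ∈ c'.support := by rw [hq]; simp
  have hw₂mem : w₂ ∈ c'.support := by
    have : w₂ ∈ c'.reverse.support := by rw [hq₂]; simp
    rwa [Walk.support_reverse, List.mem_reverse] at this
  have hur : u ≠ r := by
    intro hurr
    have hle : tG hesc w₁ ≤ tG hesc u := hmax' _ (hsup _ hw₁mem)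
    have h0 : tG hesc u = 0 := (tG_eq_zero_iff hesc).mpr hurr
    have hw₁r : w₁ = r := (tG_eq_zero_iff hesc).mp (by omega)
    exact hadj₁.ne (hurr.trans hw₁r.symm)
  have hnb : ∀ w, (Gf f r).Adj u w → w ∈ c'.support → w = f u := by
    intro w hadj hw
    rcases (Gf_adj.mp hadj).2 with ⟨_, hfu⟩ | ⟨hwr, hfw⟩
    · exact hfu.symm
    · exfalso
      have hts := tG_succ hesc hwr
      rw [hfw] at hts
      have hle : tG hesc w ≤ tG hesc u := hmax' _ (hsup _ hw)
      omega
  have hw₁f : w₁ = f u := hnb w₁ hadj₁ hw₁mem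
  have hw₂f : w₂ = f u := hnb w₂ hadj₂ hw₂mem
  have hedges : c'.edges = s(u, w₁) :: q.edges := by rw [hq]; simp [Walk.edges_cons]
  have hsym : s(u, w₂) = s(u, w₁) := by rw [hw₂f, hw₁f]
  have hedges₂ : c'.edges.reverse = s(u, w₁) :: q₂.edges := by
    rw [← Walk.edges_reverse, hq₂, Walk.edges_cons, hsym]
  have heq : s(u, w₁) :: q.edges = q₂.edges.reverse ++ [s(u, w₁)] := by
    have hrr := congrArg List.reverse hedges₂
    rw [List.reverse_reverse, List.reverse_cons] at hrr
    rw [hedges] at hrr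
    exact hrr
  have hlen : 1 ≤ q.edges.length := by
    have h3 := hc'.three_le_length
    have hle : c'.edges.length = c'.length := Walk.length_edges c'
    rw [hedges] at hle
    simp only [List.length_cons] at hle
    omega
  have hnodup : c'.edges.Nodup := hc'.isCircuit.isTrail.edges_nodup
  rw [hedges] at hnodup
  have hnotmem : s(u, w₁) ∉ q.edges := (List.nodup_cons.mp hnodup).1
  cases hrev : q₂.edges.reverse with
  | nil =>
    rw [hrev, List.nil_append] at heq
    have hnilq : q.edges = [] := (List.cons.injEq _ _ _ _ ▸ heq).2
    rw [hnilq] at hlen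
    exact absurd hlen (by simp)
  | cons x l' =>
    rw [hrev] at heq
    have hx := List.cons.injEq _ _ _ _ ▸ heq
    rw [List.cons_append] at heq
    have h1 : s(u, w₁) = x ∧ q.edges = l' ++ [s(u, w₁)] := by
      constructor
      · exact (List.cons.injEq _ _ _ _ ▸ heq).1
      · exact (List.cons.injEq _ _ _ _ ▸ heq).2
    apply hnotmem
    rw [h1.2]
    simp

lemma Gf_istree (hesc : ∀ x : Fin n, ∃ m, f^[m] x = r) : (Gf f r).IsTree :=
  ⟨Gf_conn hesc, Gf_acyclic hesc⟩

end GraphAcyclic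
section TreeSide
open SimpleGraph

variable {n : ℕ} {G : SimpleGraph (Fin n)} {r : Fin n}

lemma exists_parent (ht : G.IsTree) {x : Fin n} (hx : x ≠ r) :
    ∃ y, G.Adj x y ∧ G.dist y r + 1 = G.dist x r := by
  have hconn := ht.isConnected
  have hpos : 0 < G.dist x r := hconn.pos_dist_of_ne hx
  obtain ⟨W, hWlen⟩ := hconn.exists_walk_length_eq_dist x r
  cases W with
  | nil => exact absurd rfl hx
  | @cons _ y _ hadj W' =>
    refine ⟨y, hadj, ?_⟩
    rw [Walk.length_cons] at hWlen
    have h1 : G.dist y r ≤ W'.length := SimpleGraph.dist_le W'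
    have hxy : G.dist x y = 1 := SimpleGraph.dist_eq_one_iff_adj.mpr hadj
    have h2 : G.dist x r ≤ 1 + G.dist y r := by
      rw [← hxy]; exact hconn.dist_triangle
    omega

noncomputable def parent (ht : G.IsTree) (r : Fin n) : Fin n → Fin n := fun x =>
  if hx : x = r then r else (exists_parent ht hx).choose

lemma parent_root (ht : G.IsTree) : parent ht r r = r := dif_pos rfl

lemma parent_spec (ht : G.IsTree) {x : Fin n} (hx : x ≠ r) :
    G.Adj x (parent ht r x) ∧ G.dist (parent ht r x) r + 1 = G.dist x r := by
  rw [parent, dif_neg hx]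
  exact (exists_parent ht hx).choose_spec

lemma parent_iter_dist (ht : G.IsTree) (x : Fin n) :
    ∀ m, m ≤ G.dist x r → G.dist ((parent ht r)^[m] x) r = G.dist x r - m := by
  intro m
  induction m with
  | zero => intro _; simp
  | succ m ih =>
    intro hm
    have hz := ih (by omega)
    set z := (parent ht r)^[m] x with hzdef
    have hzr : z ≠ r := by
      intro hzr
      rw [hzr, SimpleGraph.dist_self] at hz
      omega
    rw [Function.iterate_succ_apply', ← hzdef]
    have := (parent_spec ht hzr).2
    omega

lemma parent_escape (ht : G.IsTree) (x : Fin n) : ∃ m, (parent ht r)^[m] x = r := by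
  refine ⟨G.dist x r, ?_⟩
  have := parent_iter_dist ht x (G.dist x r) le_rfl
  simp only [Nat.sub_self] at this
  have hreach : G.Reachable ((parent ht r)^[G.dist x r] x) r := ht.isConnected _ _
  exact (SimpleGraph.Reachable.dist_eq_zero_iff hreach).mp this

lemma parent_premin (ht : G.IsTree) (x : Fin n) {m : ℕ} (hm : m < G.dist x r) :
    (parent ht r)^[m] x ≠ r := by
  have := parent_iter_dist (r := r) ht x m (by omega)
  intro hbad
  rw [hbad, SimpleGraph.dist_self] at this
  omega

lemma path_length_eq (ht : G.IsTree) {a : Fin n} {p : G.Walk a r} (hp : p.IsPath) :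
    p.length = G.dist a r := by
  obtain ⟨p', hp', hlen⟩ := ht.isConnected.exists_path_of_dist a r
  have := (ht.existsUnique_path a r).unique hp hp'
  rw [this, hlen]

lemma adj_dist_ne (ht : G.IsTree) {a b : Fin n} (hadj : G.Adj a b) :
    G.dist a r ≠ G.dist b r := by
  intro heq
  classical
  obtain ⟨pa, hpa, hlena⟩ := ht.isConnected.exists_path_of_dist a r
  by_cases hb : b ∈ pa.support
  · have hdrop : (pa.dropUntil b hb).IsPath := hpa.dropUntil hb
    have hlend : (pa.dropUntil b hb).length = G.dist b r := path_length_eq ht hdrop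
    have hspec := pa.take_spec hb
    have hlens := congrArg Walk.length hspec
    rw [Walk.length_append] at hlens
    have htake : (pa.takeUntil b hb).length = 0 := by omega
    have := Walk.eq_of_length_eq_zero htake
    exact hadj.ne this
  · have hW : (Walk.cons hadj.symm pa).IsPath := by
      rw [Walk.cons_isPath_iff]
      exact ⟨hpa, hb⟩
    have := path_length_eq ht hW
    rw [Walk.length_cons] at this
    omega

lemma parent_of_adj (ht : G.IsTree) {a b : Fin n} (hadj : G.Adj a b)
    (hd : G.dist b r = G.dist a r + 1) : parent ht r b = a := by
  classical
  have hbr : b ≠ r := by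
    intro hbr
    rw [hbr, SimpleGraph.dist_self] at hd
    omega
  set y := parent ht r b with hy
  have hyspec := parent_spec ht hbr
  rw [← hy] at hyspec
  obtain ⟨pa, hpa, hlena⟩ := ht.isConnected.exists_path_of_dist a r
  obtain ⟨py, hpy, hleny⟩ := ht.isConnected.exists_path_of_dist y r
  have hbnotpa : b ∉ pa.support := by
    intro hb
    have hdrop : (pa.dropUntil b hb).IsPath := hpa.dropUntil hb
    have : G.dist b r ≤ (pa.dropUntil b hb).length := SimpleGraph.dist_le _
    have hspec := pa.take_spec hb
    have hlens := congrArg Walk.length hspec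
    rw [Walk.length_append] at hlens
    omega
  have hbnotpy : b ∉ py.support := by
    intro hb
    have : G.dist b r ≤ (py.dropUntil b hb).length := SimpleGraph.dist_le _
    have hspec := py.take_spec hb
    have hlens := congrArg Walk.length hspec
    rw [Walk.length_append] at hlens
    omega
  have hWa : (Walk.cons hadj.symm pa).IsPath := by
    rw [Walk.cons_isPath_iff]; exact ⟨hpa, hbnotpa⟩
  have hWy : (Walk.cons hyspec.1 py).IsPath := by
    rw [Walk.cons_isPath_iff]; exact ⟨hpy, hbnotpy⟩
  have huniq := (ht.existsUnique_path b r).unique hWy hWa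
  have hs := congrArg Walk.support huniq
  rw [Walk.support_cons, Walk.support_cons, Walk.support_eq_cons pa,
    Walk.support_eq_cons py] at hs
  have := (List.cons.injEq _ _ _ _ ▸ hs).2
  exact (List.cons.injEq _ _ _ _ ▸ this).1

lemma tree_adj_iff (ht : G.IsTree) (a b : Fin n) :
    G.Adj a b ↔ ((a ≠ r ∧ parent ht r a = b) ∨ (b ≠ r ∧ parent ht r b = a)) := by
  constructor
  · intro hadj
    have hne := adj_dist_ne (r := r) ht hadj
    have h1 : G.dist a r ≤ G.dist b r + 1 := by
      have hxy : G.dist a b = 1 := SimpleGraph.dist_eq_one_iff_adj.mpr hadj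
      have := ht.isConnected.dist_triangle (u := a) (v := b) (w := r)
      omega
    have h2 : G.dist b r ≤ G.dist a r + 1 := by
      have hxy : G.dist b a = 1 := SimpleGraph.dist_eq_one_iff_adj.mpr hadj.symm
      have := ht.isConnected.dist_triangle (u := b) (v := a) (w := r)
      omega
    rcases Nat.lt_or_ge (G.dist a r) (G.dist b r) with h | h
    · right
      have hbr : b ≠ r := by
        intro hbr; rw [hbr, SimpleGraph.dist_self] at h; omega
      exact ⟨hbr, parent_of_adj ht hadj (by omega)⟩
    · left
      have hlt : G.dist b r < G.dist a r := by omega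
      have har : a ≠ r := by
        intro har; rw [har, SimpleGraph.dist_self] at hlt; omega
      exact ⟨har, parent_of_adj ht hadj.symm (by omega)⟩
  · rintro (⟨har, hpa⟩ | ⟨hbr, hpb⟩)
    · exact hpa ▸ (parent_spec ht har).1
    · exact (hpb ▸ (parent_spec ht hbr).1).symm

end TreeSide
section Final
open SimpleGraph

variable {n k : ℕ}

/-- doubly rooted trees with root-to-vertex distance `k-1`. -/
def TreeS (n k : ℕ) : Type :=
  {p : SimpleGraph (Fin n) × Fin n × Fin n //
    p.1.IsTree ∧ p.1.dist p.2.1 p.2.2 = k - 1}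

noncomputable def toRD (p : TreeS n k) : RootedDist n k := by
  obtain ⟨⟨G, r, v⟩, ht, hdist⟩ := p
  have hd : (G, r, v).1.dist v r = k - 1 := by rw [SimpleGraph.dist_comm]; exact hdist
  refine ⟨(parent ht r, r, v), parent_root ht, fun x => parent_escape ht x, ?_, ?_⟩
  · have h := parent_iter_dist (r := r) ht v (k-1) (by omega)
    rw [hd, Nat.sub_self] at h
    have hreach : G.Reachable ((parent ht r)^[k-1] v) r := ht.isConnected _ _
    exact (SimpleGraph.Reachable.dist_eq_zero_iff hreach).mp h
  · intro m hm
    exact parent_premin ht v (by omega)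

lemma toRD_val (p : TreeS n k) :
    (toRD p).1 = (parent p.2.1 p.1.2.1, p.1.2.1, p.1.2.2) := by
  obtain ⟨⟨G, r, v⟩, ht, hdist⟩ := p
  rfl

noncomputable def fromRD (q : RootedDist n k) : TreeS n k := by
  obtain ⟨⟨f, r, v⟩, hr, hesc, hit, hpre⟩ := q
  refine ⟨(Gf f r, r, v), Gf_istree hesc, ?_⟩
  rw [SimpleGraph.dist_comm, dist_eq_tG hesc]
  unfold tG
  rw [Nat.find_eq_iff]
  exact ⟨hit, fun m hm => hpre m hm⟩

lemma fromRD_val (q : RootedDist n k) :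
    (fromRD q).1 = (Gf q.1.1 q.1.2.1, q.1.2.1, q.1.2.2) := by
  obtain ⟨⟨f, r, v⟩, hr, hesc, hit, hpre⟩ := q
  rfl

lemma parent_Gf {f : Fin n → Fin n} {r : Fin n} (hr : f r = r)
    (hesc : ∀ x : Fin n, ∃ m, f^[m] x = r) (ht : (Gf f r).IsTree) :
    parent ht r = f := by
  funext x
  rcases eq_or_ne x r with rfl | hx
  · rw [parent_root ht]; exact hr.symm
  · have hs := parent_spec ht hx
    rcases (Gf_adj.mp hs.1).2 with ⟨_, hfx⟩ | ⟨hyr, hfy⟩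
    · exact hfx.symm
    · exfalso
      have h1 := tG_succ hesc hyr
      rw [hfy] at h1
      have h2 := hs.2
      rw [dist_eq_tG hesc, dist_eq_tG hesc] at h2
      omega

lemma toRD_bij : Function.Bijective (toRD : TreeS n k → RootedDist n k) := by
  constructor
  · intro p₁ p₂ heq
    have hval := congrArg Subtype.val heq
    rw [toRD_val, toRD_val] at hval
    rw [Prod.ext_iff] at hval
    obtain ⟨hpar, hrv⟩ := hval
    rw [Prod.ext_iff] at hrv
    obtain ⟨hrr, hvv⟩ := hrv
    simp only at hpar hrr hvv
    obtain ⟨⟨G₁, r₁, v₁⟩, ht₁, hd₁⟩ := p₁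
    obtain ⟨⟨G₂, r₂, v₂⟩, ht₂, hd₂⟩ := p₂
    simp only at hpar hrr hvv
    subst hrr
    subst hvv
    have hG : G₁ = G₂ := by
      ext a b
      rw [tree_adj_iff (r := r₁) ht₁ a b, tree_adj_iff (r := r₁) ht₂ a b, hpar]
    subst hG
    rfl
  · intro q
    refine ⟨fromRD q, ?_⟩
    apply Subtype.ext
    rw [toRD_val]
    have hval : (fromRD q).1 = (Gf q.1.1 q.1.2.1, q.1.2.1, q.1.2.2) := fromRD_val q
    have h21 : (fromRD q).1.2.1 = q.1.2.1 := by rw [hval]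
    have h22 : (fromRD q).1.2.2 = q.1.2.2 := by rw [hval]
    have h11 : (fromRD q).1.1 = Gf q.1.1 q.1.2.1 := by rw [hval]
    have hpar : ∀ (G' : SimpleGraph (Fin n)) (r' : Fin n) (ht : G'.IsTree),
        G' = Gf q.1.1 q.1.2.1 → r' = q.1.2.1 → parent ht r' = q.1.1 := by
      intro G' r' ht hG hr'
      subst hG
      subst hr'
      exact parent_Gf q.2.1 q.2.2.1 ht
    refine Prod.ext ?_ (Prod.ext ?_ ?_)
    · show parent (fromRD q).2.1 (fromRD q).1.2.1 = q.1.1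
      exact hpar _ _ _ h11 h21
    · show (fromRD q).1.2.1 = q.1.2.1
      exact h21
    · show (fromRD q).1.2.2 = q.1.2.2
      exact h22

lemma card_TreeS_eq : Nat.card (TreeS n k) = Nat.card (RootedDist n k) :=
  Nat.card_eq_of_bijective toRD toRD_bij

theorem count_main (hn : 1 ≤ n) (hk : 1 ≤ k) (hkn : k ≤ n) :
    Nat.card (TreeS n k) * n ^ (k+1) = k * n.descFactorial k * n ^ n := by
  have h1 := card_TreeS_eq (n := n) (k := k)
  have h2 := card_RD (n := n) hk
  have h3 := good_card (n := n) hk hkn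
  calc Nat.card (TreeS n k) * n ^ (k+1)
      = (Nat.card (Good n k) * n) * n ^ k := by
        rw [h1, h2, pow_succ]
        ring
    _ = (n.descFactorial k * (k * n ^ (n-k))) * n ^ k := by rw [h3]
    _ = k * n.descFactorial k * (n ^ (n-k) * n ^ k) := by ring
    _ = k * n.descFactorial k * n ^ n := by
        rw [← pow_add, Nat.sub_add_cancel hkn]

end Final

/-- Let `T` be a uniformly random rooted labelled tree on `n` vertices (there are
`n^{n-1}` of them) and `v` an independent uniform vertex. Then
`P(dist(r,v) = k-1) = k·(n)_k / n^{k+1}` for `1 ≤ k ≤ n`. Equivalently, the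
number of triples `(G, r, v)` with `G` a labelled tree on `{1,…,n}` and
`dist_G(r,v) = k-1`, divided by `n^n`, equals `k·(n)_k / n^{k+1}`. -/
theorem stmt_2 (n k : ℕ) (hn : 1 ≤ n) (hk : 1 ≤ k) (hkn : k ≤ n) :
    (Nat.card {p : SimpleGraph (Fin n) × Fin n × Fin n //
        p.1.IsTree ∧ p.1.dist p.2.1 p.2.2 = k - 1} : ℝ) / (n : ℝ) ^ n
      = (k : ℝ) * (n.descFactorial k : ℝ) / (n : ℝ) ^ (k + 1) := by
  have key := count_main hn hk hkn
  have hnpos : (0 : ℝ) < (n : ℝ) ^ n := by positivity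
  have hkpos : (0 : ℝ) < (n : ℝ) ^ (k+1) := by
    have : (0:ℝ) < (n:ℝ) := by exact_mod_cast hn
    positivity
  rw [div_eq_div_iff hnpos.ne' hkpos.ne']
  have : ((Nat.card (TreeS n k) : ℝ)) * (n : ℝ) ^ (k+1)
      = ((k : ℝ) * (n.descFactorial k : ℝ)) * (n : ℝ) ^ n := by
    exact_mod_cast congrArg (fun t : ℕ => (t : ℝ)) key
  exact this
end Roundtrips
end Swap
end

section
/- The total population size N of a Poisson(λ) Galton–Watson branching process (λ ≤ 1, or conditioned on extinction) satisfies P(N = n) = e^{−λn}(λn)^{n−1}/n! for every positive integer n. -/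
open MeasureTheory ProbabilityTheory Finset

namespace GWAux

variable {n : ℕ} [NeZero n]

/-- Partial sum of the `n`-periodic extension of `a`. -/
def psum (a : ZMod n → ℕ) (m : ℕ) : ℕ := ∑ i ∈ Finset.range m, a (i : ZMod n)

/-- Cyclic rotation of `a` by `r`. -/
def rot (r : ZMod n) (a : ZMod n → ℕ) : ZMod n → ℕ := fun i => a (i + r)

/-- The centered walk. -/
def F (a : ZMod n → ℕ) (m : ℕ) : ℤ := (psum a m : ℤ) - m

/-- Goodness: walk stays nonnegative strictly before time `n`. -/
def GoodF (a : ZMod n → ℕ) : Prop := ∀ m, m < n → (0 : ℤ) ≤ F a m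

@[to_additive]
lemma prod_range_cast {M : Type*} [CommMonoid M] (f : ZMod n → M) :
    ∏ i ∈ Finset.range n, f (i : ZMod n) = ∏ i, f i := by
  refine Finset.prod_nbij' (fun i => (i : ZMod n)) (fun j => j.val) ?_ ?_ ?_ ?_ ?_
  · intro i _; exact Finset.mem_univ _
  · intro j _; exact Finset.mem_range.2 (ZMod.val_lt j)
  · intro i hi; exact ZMod.val_cast_of_lt (Finset.mem_range.1 hi)
  · intro j _; exact ZMod.natCast_zmod_val j
  · intro i _; rfl

lemma rot_rot (r s : ZMod n) (a : ZMod n → ℕ) : rot r (rot s a) = rot (s + r) a := by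
  funext i; simp only [rot]; ring_nf

lemma rot_zero (a : ZMod n → ℕ) : rot 0 a = a := by funext i; simp [rot]

lemma sum_rot (r : ZMod n) (a : ZMod n → ℕ) : ∑ i, rot r a i = ∑ i, a i :=
  Fintype.sum_equiv (Equiv.addRight r) _ _ fun i => rfl

lemma psum_add (a : ZMod n → ℕ) (r m : ℕ) :
    psum a (r + m) = psum a r + psum (rot (r : ZMod n) a) m := by
  induction m with
  | zero => simp [psum]
  | succ m ih =>
      have hh : r + (m + 1) = (r + m) + 1 := by ring
      rw [hh]
      simp only [psum, Finset.sum_range_succ] at *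
      rw [ih]
      have : ((↑(r + m) : ZMod n)) = (m : ZMod n) + (r : ZMod n) := by push_cast; ring
      rw [this]
      simp [rot, add_assoc]

lemma psum_univ (a : ZMod n → ℕ) : psum a n = ∑ i, a i := sum_range_cast a

lemma F_rot (a : ZMod n → ℕ) (r m : ℕ) :
    F (rot (r : ZMod n) a) m = F a (r + m) - F a r := by
  simp only [F, psum_add a r m]
  push_cast
  ring

lemma F_zero (a : ZMod n → ℕ) : F a 0 = 0 := by simp [F, psum]

lemma F_add_n (a : ZMod n → ℕ) (htot : ∑ i, a i = n - 1) (m : ℕ) :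
    F a (m + n) = F a m - 1 := by
  have hn : 1 ≤ n := Nat.one_le_iff_ne_zero.2 (NeZero.ne n)
  have h1 : psum a (m + n) = psum a m + (n - 1) := by
    rw [psum_add, psum_univ, sum_rot, htot]
  simp only [F, h1]
  have : ((n - 1 : ℕ) : ℤ) = (n : ℤ) - 1 := by
    omega
  push_cast [this]
  ring

lemma good_rot_eq_zero (a : ZMod n → ℕ) (htot : ∑ i, a i = n - 1)
    (ha : GoodF a) (r : ZMod n) (hb : GoodF (rot r a)) : r = 0 := by
  have hn : 1 ≤ n := Nat.one_le_iff_ne_zero.2 (NeZero.ne n)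
  by_contra hr0
  obtain ⟨r₀, hrv, hrc⟩ : ∃ r₀, r₀ < n ∧ (r₀ : ZMod n) = r :=
    ⟨r.val, ZMod.val_lt r, ZMod.natCast_zmod_val r⟩
  have hrpos : 1 ≤ r₀ := by
    rcases Nat.eq_zero_or_pos r₀ with h | h
    · exact absurd (by rw [← hrc, h, Nat.cast_zero]) hr0
    · exact h
  have hm : n - r₀ < n := by omega
  have h1 : (0 : ℤ) ≤ F (rot r a) (n - r₀) := hb _ hm
  rw [← hrc, F_rot] at h1
  have hsum : r₀ + (n - r₀) = 0 + n := by omega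
  rw [hsum, F_add_n a htot 0, F_zero] at h1
  have h2 : (0 : ℤ) ≤ F a r₀ := ha _ hrv
  omega

lemma exists_good_rot (a : ZMod n → ℕ) (htot : ∑ i, a i = n - 1) :
    ∃ r₀ : ℕ, r₀ < n ∧ GoodF (rot (r₀ : ZMod n) a) := by
  have hn : 0 < n := Nat.pos_of_ne_zero (NeZero.ne n)
  have hex : ∃ m, m < n ∧ ∀ k, k < n → F a m ≤ F a k := by
    obtain ⟨m, hm, hmin⟩ := Finset.exists_min_image (Finset.range n) (F a) ⟨0, Finset.mem_range.2 hn⟩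
    exact ⟨m, Finset.mem_range.1 hm, fun k hk => hmin k (Finset.mem_range.2 hk)⟩
  classical
  obtain ⟨hr₀n, hmin⟩ := Nat.find_spec hex
  have hleast : ∀ j, j < Nat.find hex → F a (Nat.find hex) < F a j := by
    intro j hj
    have hspec := Nat.find_min hex hj
    push_neg at hspec
    have hjn : j < n := lt_trans hj hr₀n
    obtain ⟨k, hk, hkl⟩ := hspec hjn
    exact lt_of_le_of_lt (hmin k hk) hkl
  refine ⟨Nat.find hex, hr₀n, ?_⟩
  intro m hm
  rw [F_rot]
  by_cases h : Nat.find hex + m < n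
  · have := hmin _ h
    omega
  · push_neg at h
    have hj : Nat.find hex + m - n < Nat.find hex := by omega
    have heq : Nat.find hex + m = (Nat.find hex + m - n) + n := by omega
    rw [heq, F_add_n a htot]
    have := hleast _ hj
    omega


lemma goodF_iff_ne (a : ZMod n → ℕ) :
    GoodF a ↔ ∀ m, 1 ≤ m → m < n → psum a m ≠ m - 1 := by
  constructor
  · intro hg m hm1 hmn hne
    have := hg m hmn
    simp only [F] at this
    omega
  · intro h
    have key : ∀ m, m < n → m ≤ psum a m := by
      intro m
      induction m with
      | zero => intro _; exact Nat.zero_le _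
      | succ m ih =>
          intro hmn
          have h1 : m ≤ psum a m := ih (lt_trans (Nat.lt_succ_self m) hmn)
          have h2 : psum a m ≤ psum a (m + 1) := by
            simp only [psum, Finset.sum_range_succ]; omega
          have h3 : psum a (m + 1) ≠ m := by
            have := h (m + 1) (by omega) hmn
            simpa using this
          omega
    intro m hmn
    have := key m hmn
    simp only [F]
    omega

variable (n) in
/-- Sequences with total sum `n-1`. -/
abbrev AllT : Type _ := {a : ZMod n → ℕ // ∑ i, a i = n - 1}

variable (n) in
/-- Good sequences with total sum `n-1`. -/
abbrev GoodT : Type _ := {a : ZMod n → ℕ // (∑ i, a i = n - 1) ∧ GoodF a}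

/-- The cycle-lemma bijection. -/
noncomputable def cycleEquiv : ZMod n × GoodT n ≃ AllT n := by
  refine Equiv.ofBijective
    (fun p => ⟨rot p.1 p.2.1, by rw [sum_rot]; exact p.2.2.1⟩) ⟨?_, ?_⟩
  · rintro ⟨r, a, ha⟩ ⟨r', a', ha'⟩ hEq
    have hval : rot r a = rot r' a' := congrArg Subtype.val hEq
    have h1 : a' = rot (r + -r') a := by
      have := congrArg (rot (-r')) hval
      rw [rot_rot, rot_rot, add_neg_cancel, rot_zero] at this
      exact this.symm
    have hg' : GoodF (rot (r + -r') a) := h1 ▸ ha'.2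
    have hr : r + -r' = 0 := good_rot_eq_zero a ha.1 ha.2 _ hg'
    have hrr : r = r' := by
      have := congrArg (· + r') hr
      simpa [add_assoc] using this
    subst hrr
    have haa : a = a' := by
      funext i
      have := congrFun hval (i - r)
      simpa [rot, sub_add_cancel] using this
    simp [haa]
  · rintro ⟨b, hb⟩
    obtain ⟨r₀, _, hgood⟩ := exists_good_rot b hb
    refine ⟨⟨-(r₀ : ZMod n), ⟨rot (r₀ : ZMod n) b, ?_, hgood⟩⟩, ?_⟩
    · rw [sum_rot]; exact hb
    · apply Subtype.ext
      show rot (-(r₀ : ZMod n)) (rot (r₀ : ZMod n) b) = b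
      rw [rot_rot, add_neg_cancel, rot_zero]

lemma tsum_all_eq (w : (ZMod n → ℕ) → ENNReal) (hw : ∀ r a, w (rot r a) = w a) :
    ∑' b : AllT n, w b.1 = n * ∑' a : GoodT n, w a.1 := by
  rw [← Equiv.tsum_eq (cycleEquiv (n := n)) (fun b => w b.1)]
  have : ∀ p : ZMod n × GoodT n, w ((cycleEquiv p).1 : ZMod n → ℕ) = w p.2.1 := by
    rintro ⟨r, a⟩
    simp only [cycleEquiv, Equiv.ofBijective_apply]
    exact hw r a.1
  calc ∑' p : ZMod n × GoodT n, w ((cycleEquiv p).1 : ZMod n → ℕ)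
      = ∑' p : ZMod n × GoodT n, w p.2.1 := tsum_congr this
    _ = ∑' (r : ZMod n), ∑' (a : GoodT n), w a.1 := by
        rw [← ENNReal.tsum_prod]
    _ = n * ∑' a : GoodT n, w a.1 := by
        rw [tsum_fintype, Finset.sum_const, Finset.card_univ, ZMod.card, nsmul_eq_mul]



lemma ofReal_prod_nonneg {ι : Type*} (s : Finset ι) (f : ι → ℝ) (hf : ∀ i ∈ s, 0 ≤ f i) :
    ENNReal.ofReal (∏ i ∈ s, f i) = ∏ i ∈ s, ENNReal.ofReal (f i) := by
  classical
  induction s using Finset.cons_induction with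
  | empty => simp
  | cons j s hj ih =>
      rw [Finset.prod_cons, Finset.prod_cons,
        ENNReal.ofReal_mul (hf j (Finset.mem_cons_self j s)),
        ih (fun i hi => hf i (Finset.mem_cons_of_mem hi))]

lemma sum_inv_factorial (k : ℕ) :
    ∑ a ∈ Finset.piAntidiag (Finset.univ : Finset (ZMod n)) k,
      (∏ i, ((a i).factorial : ℝ))⁻¹ = n ^ k / k.factorial := by
  classical
  have hpow := Finset.sum_pow_eq_sum_piAntidiag (Finset.univ : Finset (ZMod n))
    (fun _ => (1 : ℝ)) k
  simp only [Finset.sum_const, Finset.card_univ, ZMod.card, nsmul_eq_mul, mul_one, one_pow,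
    Finset.prod_const_one] at hpow
  have hterm : ∀ a ∈ Finset.piAntidiag (Finset.univ : Finset (ZMod n)) k,
      (∏ i, ((a i).factorial : ℝ))⁻¹ = (Nat.multinomial Finset.univ a : ℝ) / k.factorial := by
    intro a ha
    have hsum : ∑ i, a i = k := ((Finset.mem_piAntidiag).1 ha).1
    have hspec := Nat.multinomial_spec (Finset.univ : Finset (ZMod n)) a
    rw [hsum] at hspec
    have hprodpos : (0 : ℝ) < ∏ i, ((a i).factorial : ℝ) :=
      Finset.prod_pos fun i _ => by exact_mod_cast Nat.factorial_pos (a i)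
    have hkpos : (0 : ℝ) < k.factorial := by exact_mod_cast Nat.factorial_pos k
    have hcast : (∏ i, ((a i).factorial : ℝ)) * (Nat.multinomial Finset.univ a : ℝ)
        = k.factorial := by exact_mod_cast congrArg (fun m : ℕ => (m : ℝ)) hspec
    field_simp
    linarith [hcast]
  rw [Finset.sum_congr rfl hterm, ← Finset.sum_div, ← hpow]


lemma tsum_allT (lam : ℝ) (hlam : 0 ≤ lam) :
    ∑' b : AllT n, ∏ i, ENNReal.ofReal (Real.exp (-lam) * lam ^ (b.1 i) / (b.1 i).factorial)
      = ENNReal.ofReal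
          (Real.exp (-(lam * n)) * (lam * n) ^ (n - 1) / (n - 1 : ℕ).factorial) := by
  classical
  set k := n - 1 with hk
  have hiff : ∀ a : ZMod n → ℕ, (∑ i, a i = n - 1) ↔
      a ∈ Finset.piAntidiag (Finset.univ : Finset (ZMod n)) k := by
    intro a
    simp [Finset.mem_piAntidiag, hk]
  set e : AllT n ≃ {a // a ∈ Finset.piAntidiag (Finset.univ : Finset (ZMod n)) k} :=
    Equiv.subtypeEquivRight hiff with he
  have h1 : ∑' b : AllT n, ∏ i, ENNReal.ofReal
        (Real.exp (-lam) * lam ^ (b.1 i) / (b.1 i).factorial)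
      = ∑ a ∈ Finset.piAntidiag (Finset.univ : Finset (ZMod n)) k,
          ∏ i, ENNReal.ofReal (Real.exp (-lam) * lam ^ (a i) / (a i).factorial) := by
    rw [← Equiv.tsum_eq e.symm (fun b =>
      ∏ i, ENNReal.ofReal (Real.exp (-lam) * lam ^ (b.1 i) / (b.1 i).factorial))]
    have : ∀ c : {a // a ∈ Finset.piAntidiag (Finset.univ : Finset (ZMod n)) k},
        (∏ i, ENNReal.ofReal
          (Real.exp (-lam) * lam ^ ((e.symm c).1 i) / ((e.symm c).1 i).factorial))
        = ∏ i, ENNReal.ofReal (Real.exp (-lam) * lam ^ (c.1 i) / (c.1 i).factorial) := by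
      intro c
      have hc : ((e.symm c).1 : ZMod n → ℕ) = c.1 := by
        rw [he]; rfl
      rw [hc]
    rw [tsum_congr this]
    exact Finset.tsum_subtype _ (fun (a : ZMod n → ℕ) =>
      ∏ i, ENNReal.ofReal (Real.exp (-lam) * lam ^ (a i) / (a i).factorial))
  rw [h1]
  have hterm : ∀ a ∈ Finset.piAntidiag (Finset.univ : Finset (ZMod n)) k,
      (∏ i, ENNReal.ofReal (Real.exp (-lam) * lam ^ (a i) / (a i).factorial))
        = ENNReal.ofReal ((Real.exp (-lam) ^ n * lam ^ k) * (∏ i, ((a i).factorial : ℝ))⁻¹) := by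
    intro a ha
    have hsum : ∑ i, a i = k := ((Finset.mem_piAntidiag).1 ha).1
    rw [← ofReal_prod_nonneg _ _ (fun i _ => by positivity)]
    congr 1
    simp only [div_eq_mul_inv]
    rw [Finset.prod_mul_distrib, Finset.prod_mul_distrib, Finset.prod_const,
      Finset.card_univ, ZMod.card, Finset.prod_pow_eq_pow_sum, hsum, Finset.prod_inv_distrib]
  rw [Finset.sum_congr rfl hterm]
  rw [← ENNReal.ofReal_sum_of_nonneg (fun a _ => by positivity)]
  rw [← Finset.mul_sum, sum_inv_factorial]
  congr 1
  have hexp : Real.exp (-lam) ^ n = Real.exp (-(lam * n)) := by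
    rw [← Real.exp_nat_mul, show ((n : ℝ) * -lam) = -(lam * n) by ring]
  rw [hexp]
  have hkfac : ((k.factorial : ℝ)) ≠ 0 := by
    exact_mod_cast (Nat.factorial_pos k).ne'
  field_simp
  ring

end GWAux

open GWAux in

/-- The total population size `N` of a Poisson(λ) Galton–Watson process with
`0 < λ ≤ 1` satisfies `P(N = n) = e^{-λn}(λn)^{n-1}/n!` for every `n ≥ 1`.
The total progeny is modelled, via the standard queue/random-walk encoding,
as `N = inf{n ≥ 1 : X₁ + ⋯ + Xₙ = n - 1}` where the `Xᵢ` are i.i.d.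
Poisson(λ) offspring numbers. -/
theorem stmt_6 {Ω : Type*} [MeasurableSpace Ω] (μ : Measure Ω) [IsProbabilityMeasure μ]
    (lam : ℝ) (hlam0 : 0 < lam) (hlam1 : lam ≤ 1)
    (X : ℕ → Ω → ℕ) (hmeas : ∀ i, Measurable (X i))
    (hindep : iIndepFun X μ)
    (hdist : ∀ i k, μ {ω | X i ω = k}
      = ENNReal.ofReal (Real.exp (-lam) * lam ^ k / Nat.factorial k))
    (N : Ω → ℕ)
    (hN : ∀ ω, N ω = sInf {n : ℕ | 1 ≤ n ∧ (∑ i ∈ Finset.range n, X i ω) = n - 1})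
    (n : ℕ) (hn : 1 ≤ n) :
    μ {ω | N ω = n}
      = ENNReal.ofReal (Real.exp (-(lam * n)) * (lam * n) ^ (n - 1) / Nat.factorial n) := by
  classical
  haveI : NeZero n := ⟨by omega⟩
  set q : ℕ → ENNReal := fun k => ENNReal.ofReal (Real.exp (-lam) * lam ^ k / k.factorial)
    with hq
  set T : Ω → (ZMod n → ℕ) := fun ω i => X i.val ω with hT
  have hps : ∀ ω (m : ℕ), m ≤ n → GWAux.psum (T ω) m = ∑ i ∈ Finset.range m, X i ω := by
    intro ω m hm
    apply Finset.sum_congr rfl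
    intro i hi
    have hv : ((i : ZMod n)).val = i :=
      ZMod.val_cast_of_lt (lt_of_lt_of_le (Finset.mem_range.1 hi) hm)
    simp [hT, hv]
  have hevent : ∀ ω, N ω = n ↔ ((∑ i, T ω i = n - 1) ∧ GWAux.GoodF (T ω)) := by
    intro ω
    rw [hN ω]
    constructor
    · intro h
      have hSne : {m : ℕ | 1 ≤ m ∧ (∑ i ∈ Finset.range m, X i ω) = m - 1}.Nonempty := by
        by_contra hc
        rw [Set.not_nonempty_iff_eq_empty] at hc
        rw [hc, Nat.sInf_empty] at h
        omega
      have hmem := Nat.sInf_mem hSne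
      rw [h] at hmem
      have hlt : ∀ m, m < n →
          m ∉ {m : ℕ | 1 ≤ m ∧ (∑ i ∈ Finset.range m, X i ω) = m - 1} := by
        intro m hm hmS
        have := Nat.sInf_le hmS
        omega
      refine ⟨?_, ?_⟩
      · rw [← GWAux.psum_univ, hps ω n le_rfl]
        exact hmem.2
      · rw [GWAux.goodF_iff_ne]
        intro m hm1 hmn hne
        rw [hps ω m (le_of_lt hmn)] at hne
        exact hlt m hmn ⟨hm1, hne⟩
    · rintro ⟨h1, h2⟩
      have hnS : n ∈ {m : ℕ | 1 ≤ m ∧ (∑ i ∈ Finset.range m, X i ω) = m - 1} := by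
        refine ⟨hn, ?_⟩
        rw [← hps ω n le_rfl, GWAux.psum_univ]
        exact h1
      refine le_antisymm (Nat.sInf_le hnS) ?_
      refine le_csInf ⟨n, hnS⟩ ?_
      intro m hmS
      by_contra hc
      push_neg at hc
      have := (GWAux.goodF_iff_ne (T ω)).1 h2 m hmS.1 hc
      rw [hps ω m (le_of_lt hc)] at this
      exact this hmS.2
  have hset : {ω | N ω = n} = ⋃ (a : GWAux.GoodT n), {ω | T ω = a.1} := by
    ext ω
    simp only [Set.mem_setOf_eq, Set.mem_iUnion]
    rw [hevent ω]
    constructor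
    · rintro ⟨h1, h2⟩; exact ⟨⟨T ω, h1, h2⟩, rfl⟩
    · rintro ⟨a, ha⟩; rw [ha]; exact a.2
  have hcyl : ∀ a : ZMod n → ℕ,
      {ω | T ω = a} = ⋂ i ∈ Finset.range n, X i ⁻¹' {a (i : ZMod n)} := by
    intro a
    ext ω
    simp only [Set.mem_setOf_eq, Set.mem_iInter, Set.mem_preimage, Set.mem_singleton_iff]
    constructor
    · intro h i hi
      have h2 := congrFun h ((i : ZMod n))
      simp only [hT] at h2
      rwa [show ((i : ZMod n)).val = i from ZMod.val_cast_of_lt (Finset.mem_range.1 hi)] at h2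
    · intro h
      funext j
      show X j.val ω = a j
      rw [h j.val (Finset.mem_range.2 (ZMod.val_lt j)), ZMod.natCast_zmod_val]
  have hcylm : ∀ a : ZMod n → ℕ, MeasurableSet {ω | T ω = a} := by
    intro a
    rw [hcyl a]
    exact MeasurableSet.biInter (Finset.range n).countable_toSet
      (fun i _ => (hmeas i) (measurableSet_singleton _))
  have hcylμ : ∀ a : ZMod n → ℕ, μ {ω | T ω = a} = ∏ i, q (a i) := by
    intro a
    rw [hcyl a]
    rw [hindep.meas_biInter (S := Finset.range n)
      (s := fun i => X i ⁻¹' {a (i : ZMod n)})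
      (fun i _ => ⟨{a (i : ZMod n)}, measurableSet_singleton _, rfl⟩)]
    rw [← GWAux.prod_range_cast (n := n) (fun j => q (a j))]
    apply Finset.prod_congr rfl
    intro i _
    have : X i ⁻¹' {a (i : ZMod n)} = {ω | X i ω = a (i : ZMod n)} := rfl
    rw [this, hdist i (a (i : ZMod n)), hq]
  have hμN : μ {ω | N ω = n} = ∑' (a : GWAux.GoodT n), ∏ i, q (a.1 i) := by
    have hdisj : Pairwise (Function.onFun Disjoint
        (fun a : GWAux.GoodT n => {ω | T ω = a.1})) := by
      intro a b hab
      simp only [Function.onFun]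
      apply Set.disjoint_left.2
      intro ω h1 h2
      simp only [Set.mem_setOf_eq] at h1 h2
      exact hab (Subtype.ext (h1 ▸ h2 ▸ rfl))
    rw [hset, measure_iUnion hdisj (fun a => hcylm a.1)]
    exact tsum_congr fun a => hcylμ a.1
  have hkey : (n : ENNReal) * μ {ω | N ω = n}
      = ENNReal.ofReal
          (Real.exp (-(lam * n)) * (lam * n) ^ (n - 1) / (n - 1 : ℕ).factorial) := by
    rw [hμN, ← GWAux.tsum_all_eq (fun a => ∏ i, q (a i))
      (fun r a => Fintype.prod_equiv (Equiv.addRight r) _ _ (fun i => rfl))]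
    rw [← GWAux.tsum_allT (n := n) lam hlam0.le]
  have hn0 : (n : ENNReal) ≠ 0 := Nat.cast_ne_zero.2 (by omega)
  have hnt : (n : ENNReal) ≠ ⊤ := ENNReal.natCast_ne_top n
  have hμeq : μ {ω | N ω = n}
      = ENNReal.ofReal
          (Real.exp (-(lam * n)) * (lam * n) ^ (n - 1) / (n - 1 : ℕ).factorial) / n :=
    (ENNReal.eq_div_iff hn0 hnt).2 hkey
  rw [hμeq]
  have hnpos : (0 : ℝ) < n := by exact_mod_cast (by omega : 0 < n)
  rw [← ENNReal.ofReal_natCast n, ← ENNReal.ofReal_div_of_pos hnpos]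
  congr 1
  have hfac : (n.factorial : ℝ) = n * (n - 1 : ℕ).factorial := by
    exact_mod_cast (Nat.mul_factorial_pred (by omega)).symm
  rw [div_div, hfac]
  ring
end

section
/- For 0 < λ < 1, summing the Borel(λ) probabilities gives ∑_{n=1}^{∞} e^{−λn}(λn)^{n−1}/n! = 1. -/
open Finset Filter Polynomial Topology
open scoped NNReal ENNReal

/-! Auxiliary definitions and lemmas for the Borel(λ) normalization. -/

noncomputable def borelC : ℕ → ℝ
  | 0 => 0
  | (j+1) => ((j : ℝ) + 1) ^ j / (Nat.factorial (j+1))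

lemma pow_div_factorial_le_exp (x : ℝ) (hx : 0 ≤ x) (m : ℕ) :
    x ^ m / m.factorial ≤ Real.exp x := by
  calc x ^ m / m.factorial
      ≤ ∑ i ∈ range (m+1), x ^ i / i.factorial := by
        refine Finset.single_le_sum (f := fun i => x ^ i / (i.factorial : ℝ))
          (fun i _ => by positivity) (self_mem_range_succ m)
    _ ≤ Real.exp x := Real.sum_le_exp_of_nonneg hx _

lemma borelC_nonneg (n : ℕ) : 0 ≤ borelC n := by
  cases n with
  | zero => simp [borelC]
  | succ j => simp only [borelC]; positivity

lemma coef_le_exp (j : ℕ) : ((j : ℝ) + 1) ^ j / (Nat.factorial (j+1)) ≤ Real.exp 1 ^ (j+1) := by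
  have hb : (1:ℝ) ≤ (j:ℝ) + 1 := by
    have := Nat.cast_nonneg (α := ℝ) j
    linarith
  have hnum : ((j : ℝ) + 1) ^ j ≤ ((j : ℝ) + 1) ^ (j+1) := pow_le_pow_right₀ hb (Nat.le_succ j)
  have h1 : ((j : ℝ) + 1) ^ j / (Nat.factorial (j+1)) ≤
      ((j : ℝ) + 1) ^ (j+1) / (Nat.factorial (j+1)) :=
    (div_le_div_iff_of_pos_right (by positivity : (0:ℝ) < (Nat.factorial (j+1) : ℝ))).mpr hnum
  have h2 : ((j : ℝ) + 1) ^ (j+1) / (Nat.factorial (j+1)) ≤ Real.exp ((j : ℝ) + 1) :=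
    pow_div_factorial_le_exp ((j : ℝ) + 1) (by positivity) (j+1)
  have h3 : Real.exp ((j : ℝ) + 1) = Real.exp 1 ^ (j+1) := by
    rw [← Real.exp_nat_mul]
    congr 1
    push_cast
    ring
  linarith

lemma borelC_le (n : ℕ) : borelC n ≤ Real.exp 1 ^ n := by
  cases n with
  | zero => simp [borelC]
  | succ j => simpa [borelC] using coef_le_exp j

/-- Alternating sums of binomial coefficients against a polynomial of low degree vanish. -/
lemma alt_sum_poly : ∀ (N : ℕ) (p : Polynomial ℝ), p.degree < N →
    ∑ i ∈ range (N+1), (-1 : ℝ) ^ i * (N.choose i) * p.eval (i : ℝ) = 0 := by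
  intro N
  induction N with
  | zero =>
    intro p hp
    have hp0 : p = 0 := by
      by_contra hne
      rw [p.degree_eq_natDegree hne] at hp
      exact absurd hp (by simp)
    subst hp0
    simp
  | succ N ih =>
    intro p hp
    set q : Polynomial ℝ := p - p.comp (X + 1) with hq
    have hqdeg : q.degree < N := by
      by_cases hc : p.natDegree = 0
      · obtain ⟨a, rfl⟩ := Polynomial.natDegree_eq_zero.mp hc
        have : q = 0 := by simp [hq]
        rw [this, Polynomial.degree_zero]
        exact WithBot.bot_lt_coe _
      · have hp0 : p ≠ 0 := fun h => hc (by simp [h])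
        have hXdeg : (X + (1 : Polynomial ℝ)).natDegree = 1 := by
          simpa using Polynomial.natDegree_X_add_C (1 : ℝ)
        have hdegc : (p.comp (X + 1)).degree = p.degree := by
          have h1 : (p.comp (X + 1)).natDegree = p.natDegree := by
            rw [Polynomial.natDegree_comp, hXdeg, mul_one]
          have hc0 : p.comp (X + 1) ≠ 0 := by
            intro h
            have := Polynomial.leadingCoeff_comp (p := p) (q := X + 1) (by rw [hXdeg]; norm_num)
            rw [h] at this
            simp only [Polynomial.leadingCoeff_zero] at this
            have hlc : p.leadingCoeff ≠ 0 := Polynomial.leadingCoeff_ne_zero.mpr hp0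
            have hX1 : (X + (1 : Polynomial ℝ)).leadingCoeff = 1 := by
              simpa using (Polynomial.monic_X_add_C (1 : ℝ)).leadingCoeff
            rw [hX1] at this
            simp at this
            exact hlc this.symm
          rw [Polynomial.degree_eq_natDegree hc0, Polynomial.degree_eq_natDegree hp0, h1]
        have hlc : p.leadingCoeff = (p.comp (X + 1)).leadingCoeff := by
          rw [Polynomial.leadingCoeff_comp (by rw [hXdeg]; norm_num)]
          have hX1 : (X + (1 : Polynomial ℝ)).leadingCoeff = 1 := by
            simpa using (Polynomial.monic_X_add_C (1 : ℝ)).leadingCoeff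
          rw [hX1, one_pow, mul_one]
        have hlt : q.degree < p.degree := Polynomial.degree_sub_lt hdegc.symm hp0 hlc
        have hple : p.degree ≤ (N : WithBot ℕ) := by
          rw [Polynomial.degree_eq_natDegree hp0] at hp ⊢
          exact_mod_cast Nat.lt_succ_iff.mp (by exact_mod_cast hp)
        exact lt_of_lt_of_le hlt hple
    have key := Finset.sum_choose_succ_mul (fun i _ => (-1 : ℝ) ^ i * p.eval (i : ℝ)) N
    have goal1 : ∑ i ∈ range (N+2), (-1 : ℝ) ^ i * ((N+1).choose i) * p.eval (i : ℝ)
        = ∑ i ∈ range (N+2), ((N+1).choose i : ℝ) * ((-1 : ℝ) ^ i * p.eval (i : ℝ)) := by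
      refine Finset.sum_congr rfl fun i _ => by ring
    have step : ∑ i ∈ range (N+2), (-1 : ℝ) ^ i * ((N+1).choose i) * p.eval (i : ℝ)
        = ∑ i ∈ range (N+1), (-1 : ℝ) ^ i * (N.choose i) * q.eval (i : ℝ) := by
      rw [goal1, key, ← Finset.sum_add_distrib]
      refine Finset.sum_congr rfl fun i _ => ?_
      have hev : q.eval (i : ℝ) = p.eval (i : ℝ) - p.eval ((i : ℝ) + 1) := by
        simp [hq, Polynomial.eval_comp]
      have hcast : ((i : ℝ) + 1) = ((i + 1 : ℕ) : ℝ) := by push_cast; ring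
      rw [hev, ← hcast]
      push_cast
      ring
    have hNsucc : ((N : ℕ) + 1 + 1) = N + 2 := rfl
    calc ∑ i ∈ range (N+1+1), (-1 : ℝ) ^ i * ((N+1).choose i) * p.eval (i : ℝ)
        = ∑ i ∈ range (N+1), (-1 : ℝ) ^ i * (N.choose i) * q.eval (i : ℝ) := step
      _ = 0 := ih q hqdeg

lemma inner_zero (m : ℕ) (hm : m ≠ 0) :
    ∑ j ∈ range (m+1), (-1 : ℝ) ^ j * ((m+1).choose (j+1)) * ((j : ℝ) + 1) ^ m = 0 := by
  have hdeg : (X ^ m : Polynomial ℝ).degree < ((m+1 : ℕ) : WithBot ℕ) := by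
    rw [Polynomial.degree_X_pow]
    exact_mod_cast Nat.lt_succ_self m
  have h := alt_sum_poly (m+1) (X ^ m) hdeg
  rw [Finset.sum_range_succ'] at h
  simp only [Polynomial.eval_pow, Polynomial.eval_X] at h
  have h0 : (-1 : ℝ) ^ 0 * (((m+1).choose 0 : ℕ) : ℝ) * ((0 : ℕ) : ℝ) ^ m = 0 := by
    simp [zero_pow hm]
  rw [h0, add_zero] at h
  have : ∑ j ∈ range (m+1), (-1 : ℝ) ^ j * ((m+1).choose (j+1)) * ((j : ℝ) + 1) ^ m
      = - ∑ j ∈ range (m+1), (-1 : ℝ) ^ (j+1) * (((m+1).choose (j+1) : ℕ) : ℝ) * (((j+1 : ℕ)) : ℝ) ^ m := by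
    rw [← Finset.sum_neg_distrib]
    refine Finset.sum_congr rfl fun j _ => ?_
    push_cast
    ring
  rw [this, h, neg_zero]

lemma S_zero (m : ℕ) (hm : m ≠ 0) :
    ∑ j ∈ range (m+1),
      (-1 : ℝ) ^ (m-j) * ((j : ℝ) + 1) ^ m /
        ((Nat.factorial (j+1)) * (Nat.factorial (m-j))) = 0 := by
  have key : ∀ j ∈ range (m+1),
      (-1 : ℝ) ^ (m-j) * ((j : ℝ) + 1) ^ m /
        ((Nat.factorial (j+1)) * (Nat.factorial (m-j)))
      = ((-1 : ℝ) ^ m * ((Nat.factorial (m+1) : ℝ))⁻¹) *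
        ((-1 : ℝ) ^ j * ((m+1).choose (j+1)) * ((j : ℝ) + 1) ^ m) := by
    intro j hj
    have hjm : j ≤ m := Finset.mem_range_succ_iff.mp hj
    have hC : (((m+1).choose (j+1) : ℕ) : ℝ) * (Nat.factorial (j+1)) * (Nat.factorial (m-j))
        = (Nat.factorial (m+1) : ℝ) := by
      have := Nat.choose_mul_factorial_mul_factorial (Nat.succ_le_succ hjm)
      have h2 : (m + 1) - (j + 1) = m - j := by omega
      rw [h2] at this
      exact_mod_cast congrArg (Nat.cast : ℕ → ℝ) this
    have h1 : ((-1 : ℝ) ^ j) * ((-1 : ℝ) ^ j) = 1 := by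
      rw [← mul_pow]; norm_num
    have hs : (-1 : ℝ) ^ (m-j) * (-1 : ℝ) ^ j = (-1 : ℝ) ^ m := by
      rw [← pow_add, Nat.sub_add_cancel hjm]
    have hs2 : (-1 : ℝ) ^ (m-j) = (-1 : ℝ) ^ m * (-1 : ℝ) ^ j := by
      rw [← hs, mul_assoc, h1, mul_one]
    have hfj : (Nat.factorial (j+1) : ℝ) ≠ 0 := by positivity
    have hfmj : (Nat.factorial (m-j) : ℝ) ≠ 0 := by positivity
    have hfm : (Nat.factorial (m+1) : ℝ) ≠ 0 := by positivity
    rw [hs2]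
    field_simp
    linear_combination (-1 : ℝ) * hC
  rw [Finset.sum_congr rfl key, ← Finset.mul_sum, inner_zero m hm, mul_zero]

lemma antidiag_zero (l : ℝ) (m : ℕ) (hm : m ≠ 0) :
    ∑ p ∈ antidiagonal m,
      (((p.1 : ℝ) + 1) ^ p.1 / (Nat.factorial (p.1+1))) * l ^ (p.1+1) *
        ((-(l * ((p.1 : ℝ) + 1))) ^ p.2 / (Nat.factorial p.2)) = 0 := by
  rw [Finset.Nat.sum_antidiagonal_eq_sum_range_succ_mk]
  have key : ∀ j ∈ range (m+1),
      (((j : ℝ) + 1) ^ j / (Nat.factorial (j+1))) * l ^ (j+1) *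
        ((-(l * ((j : ℝ) + 1))) ^ (m-j) / (Nat.factorial (m-j)))
      = l ^ (m+1) * ((-1 : ℝ) ^ (m-j) * ((j : ℝ) + 1) ^ m /
          ((Nat.factorial (j+1)) * (Nat.factorial (m-j)))) := by
    intro j hj
    have hjm : j ≤ m := Finset.mem_range_succ_iff.mp hj
    obtain ⟨k, rfl⟩ : ∃ k, m = j + k := ⟨m - j, by omega⟩
    have hk : j + k - j = k := by omega
    rw [hk, neg_pow, mul_pow]
    have hfj : (Nat.factorial (j+1) : ℝ) ≠ 0 := by positivity
    have hfk : (Nat.factorial k : ℝ) ≠ 0 := by positivity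
    field_simp
    ring
  rw [Finset.sum_congr rfl key, ← Finset.mul_sum, S_zero m hm, mul_zero]

lemma exp_tsum (x : ℝ) : ∑' k : ℕ, x ^ k / (Nat.factorial k) = Real.exp x := by
  rw [Real.exp_eq_exp_ℝ, NormedSpace.exp_eq_tsum_div]

set_option maxHeartbeats 2000000 in
lemma step1 (l : ℝ) (h0 : 0 < l) (h4 : l < 1/4) :
    ∑' j : ℕ, ((j : ℝ) + 1) ^ j / (Nat.factorial (j+1)) * (l * Real.exp (-l)) ^ (j+1) = l := by
  classical
  set F : ℕ × ℕ → ℝ := fun p => (((p.1 : ℝ) + 1) ^ p.1 / (Nat.factorial (p.1+1))) * l ^ (p.1+1) *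
      ((-(l * ((p.1 : ℝ) + 1))) ^ p.2 / (Nat.factorial p.2)) with hF
  set G : ℕ × ℕ → ℝ := fun p => (((p.1 : ℝ) + 1) ^ p.1 / (Nat.factorial (p.1+1))) * l ^ (p.1+1) *
      ((l * ((p.1 : ℝ) + 1)) ^ p.2 / (Nat.factorial p.2)) with hG
  have hGnn : ∀ p, 0 ≤ G p := by
    intro p
    have h1 : (0:ℝ) ≤ ((p.1 : ℝ) + 1) ^ p.1 / (Nat.factorial (p.1+1)) := by positivity
    have h2 : (0:ℝ) ≤ l ^ (p.1+1) := pow_nonneg h0.le _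
    have h3 : (0:ℝ) ≤ (l * ((p.1 : ℝ) + 1)) ^ p.2 / (Nat.factorial p.2) := by
      apply div_nonneg _ (by positivity)
      exact pow_nonneg (mul_nonneg h0.le (by positivity)) _
    exact mul_nonneg (mul_nonneg h1 h2) h3
  have habs : ∀ p, |F p| = G p := by
    intro p
    have hFG : F p = (-1 : ℝ) ^ p.2 * G p := by
      have hneg : (-(l * ((p.1 : ℝ) + 1))) ^ p.2
          = (-1 : ℝ) ^ p.2 * (l * ((p.1 : ℝ) + 1)) ^ p.2 := neg_pow _ _
      simp only [hF, hG]
      rw [hneg]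
      ring
    rw [hFG, abs_mul, abs_pow, abs_neg, abs_one, one_pow, one_mul, abs_of_nonneg (hGnn p)]
  have hGrows : ∀ j : ℕ, Summable (fun k => G (j, k)) := by
    intro j
    have := (Real.summable_pow_div_factorial (l * ((j : ℝ) + 1))).mul_left
      ((((j : ℝ) + 1) ^ j / (Nat.factorial (j+1))) * l ^ (j+1))
    exact this
  have hGrowsum : ∀ j : ℕ, ∑' k, G (j, k)
      = ((((j : ℝ) + 1) ^ j / (Nat.factorial (j+1))) * l ^ (j+1)) * Real.exp (l * ((j : ℝ) + 1)) := by
    intro j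
    rw [← exp_tsum (l * ((j : ℝ) + 1)), ← tsum_mul_left]
  -- geometric bound for row sums
  set r : ℝ := l * Real.exp l * Real.exp 1 with hr
  have hr0 : 0 ≤ r := by positivity
  have hr1 : r < 1 := by
    have hel : Real.exp l ≤ 4/3 := by
      have h14 : Real.exp (1/4 : ℝ) ≤ 4/3 := by
        have h := Real.add_one_le_exp (-(1/4) : ℝ)
        rw [Real.exp_neg] at h
        have hp : 0 < Real.exp (1/4 : ℝ) := Real.exp_pos _
        have h3 : Real.exp (1/4 : ℝ) * (3/4 : ℝ) ≤
            Real.exp (1/4 : ℝ) * (Real.exp (1/4 : ℝ))⁻¹ :=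
          mul_le_mul_of_nonneg_left (by linarith) hp.le
        rw [mul_inv_cancel₀ hp.ne'] at h3
        linarith
      have := Real.exp_le_exp.mpr h4.le
      linarith
    have he1 : Real.exp 1 < 2.7182818286 := Real.exp_one_lt_d9
    have h1' : l * Real.exp l < 1/3 := by nlinarith [Real.exp_pos l]
    have h3 : (l * Real.exp l) * Real.exp 1 < (1/3) * 2.7182818286 :=
      mul_lt_mul'' h1' he1 (by positivity) (Real.exp_pos 1).le
    rw [hr]
    nlinarith
  have hrowbound : ∀ j : ℕ,
      ((((j : ℝ) + 1) ^ j / (Nat.factorial (j+1))) * l ^ (j+1)) * Real.exp (l * ((j : ℝ) + 1))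
        ≤ r ^ (j+1) := by
    intro j
    have hexp : Real.exp (l * ((j : ℝ) + 1)) = Real.exp l ^ (j+1) := by
      rw [← Real.exp_nat_mul]
      congr 1
      push_cast
      ring
    rw [hexp, hr]
    have h1 := coef_le_exp j
    have h2 : (0:ℝ) ≤ ((j : ℝ) + 1) ^ j / (Nat.factorial (j+1)) := by positivity
    calc (((j : ℝ) + 1) ^ j / (Nat.factorial (j+1))) * l ^ (j+1) * Real.exp l ^ (j+1)
        ≤ (Real.exp 1 ^ (j+1)) * l ^ (j+1) * Real.exp l ^ (j+1) := by
          have : (0:ℝ) ≤ l ^ (j+1) * Real.exp l ^ (j+1) := by positivity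
          nlinarith [mul_le_mul_of_nonneg_right h1 this]
      _ = (l * Real.exp l * Real.exp 1) ^ (j+1) := by
          rw [mul_pow, mul_pow]
          ring
  have hrowsummable : Summable (fun j : ℕ => ∑' k, G (j, k)) := by
    have hgeo : Summable (fun j : ℕ => r ^ (j+1)) := by
      have := (summable_geometric_of_lt_one hr0 hr1).mul_left r
      refine this.congr fun j => ?_
      rw [pow_succ']
    refine Summable.of_nonneg_of_le (fun j => ?_) (fun j => ?_) hgeo
    · rw [hGrowsum j]
      have := hGnn
      positivity
    · rw [hGrowsum j]
      exact hrowbound j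
  have hGsum : Summable G := by
    refine (summable_prod_of_nonneg hGnn).mpr ⟨hGrows, hrowsummable⟩
  have hFsum : Summable F := by
    apply Summable.of_abs
    refine hGsum.congr fun p => (habs p).symm
  have hFrows : ∀ j : ℕ, Summable (fun k => F (j, k)) := by
    intro j
    apply Summable.of_abs
    refine (hGrows j).congr fun k => (habs (j, k)).symm
  -- row sums of F give the original terms
  have hFrowsum : ∀ j : ℕ, ∑' k, F (j, k)
      = ((j : ℝ) + 1) ^ j / (Nat.factorial (j+1)) * (l * Real.exp (-l)) ^ (j+1) := by
    intro j
    have h1 : ∑' k, F (j, k)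
        = ((((j : ℝ) + 1) ^ j / (Nat.factorial (j+1))) * l ^ (j+1)) *
            Real.exp (-(l * ((j : ℝ) + 1))) := by
      rw [← exp_tsum (-(l * ((j : ℝ) + 1))), ← tsum_mul_left]
    rw [h1]
    have hexp : Real.exp (-(l * ((j : ℝ) + 1))) = Real.exp (-l) ^ (j+1) := by
      rw [← Real.exp_nat_mul]
      congr 1
      push_cast
      ring
    rw [hexp, mul_pow]
    ring
  calc ∑' j : ℕ, ((j : ℝ) + 1) ^ j / (Nat.factorial (j+1)) * (l * Real.exp (-l)) ^ (j+1)
      = ∑' j : ℕ, ∑' k : ℕ, F (j, k) := by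
        exact tsum_congr fun j => (hFrowsum j).symm
    _ = ∑' p : ℕ × ℕ, F p := (Summable.tsum_prod' hFsum hFrows).symm
    _ = ∑' x : (Σ n : ℕ, antidiagonal n), F (Finset.HasAntidiagonal.sigmaAntidiagonalEquivProd x) :=
        (Finset.HasAntidiagonal.sigmaAntidiagonalEquivProd.tsum_eq F).symm
    _ = ∑' (m : ℕ) (x : antidiagonal m), F x := by
        refine Summable.tsum_sigma' (fun m => ?_) ((Finset.HasAntidiagonal.sigmaAntidiagonalEquivProd.summable_iff).mpr hFsum)
        exact Summable.of_finite
    _ = ∑' m : ℕ, ∑ p ∈ antidiagonal m, F p := by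
        exact tsum_congr fun m => Finset.tsum_subtype (antidiagonal m) F
    _ = l := by
        rw [tsum_eq_single 0]
        · simp [hF]
        · intro m hm
          exact antidiag_zero l m hm

/-! Analytic continuation part. -/

noncomputable def Hs : ℝ → ℝ := (FormalMultilinearSeries.ofScalars ℝ borelC).sum

lemma radius_ge :
    (ENNReal.ofNNReal (Real.toNNReal (Real.exp 1)⁻¹)) ≤
      (FormalMultilinearSeries.ofScalars ℝ borelC).radius := by
  apply FormalMultilinearSeries.le_radius_of_bound _ 1
  intro n
  rw [FormalMultilinearSeries.ofScalars_norm]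
  have h1 := borelC_le n
  have h2 := borelC_nonneg n
  rw [Real.norm_of_nonneg h2]
  have hcoe : ((Real.toNNReal (Real.exp 1)⁻¹ : ℝ≥0) : ℝ) = (Real.exp 1)⁻¹ :=
    Real.coe_toNNReal ((Real.exp 1)⁻¹) (by positivity)
  rw [hcoe]
  calc borelC n * ((Real.exp 1)⁻¹) ^ n ≤ (Real.exp 1) ^ n * ((Real.exp 1)⁻¹) ^ n := by
        exact mul_le_mul_of_nonneg_right h1 (by positivity)
    _ = 1 := by rw [← mul_pow, mul_inv_cancel₀ (Real.exp_ne_zero 1), one_pow]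

lemma Hs_hasFPower : HasFPowerSeriesOnBall Hs (FormalMultilinearSeries.ofScalars ℝ borelC) 0
    (FormalMultilinearSeries.ofScalars ℝ borelC).radius := by
  apply FormalMultilinearSeries.hasFPowerSeriesOnBall
  refine lt_of_lt_of_le ?_ radius_ge
  rw [ENNReal.coe_pos, ← NNReal.coe_pos,
    Real.coe_toNNReal ((Real.exp 1)⁻¹) (by positivity)]
  positivity

lemma Hs_analyticAt {y : ℝ} (hy : |y| < (Real.exp 1)⁻¹) : AnalyticAt ℝ Hs y := by
  apply Hs_hasFPower.analyticAt_of_mem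
  rw [EMetric.mem_ball, edist_dist, Real.dist_eq, sub_zero]
  refine lt_of_lt_of_le ?_ radius_ge
  rw [ENNReal.ofReal_lt_iff_lt_toReal (abs_nonneg y) (by simp)]
  simpa [Real.coe_toNNReal _ (by positivity : (0:ℝ) ≤ (Real.exp 1)⁻¹)] using hy

lemma Hs_eq {x : ℝ} (hx : |x| < (Real.exp 1)⁻¹) :
    Hs x = ∑' j : ℕ, ((j : ℝ) + 1) ^ j / (Nat.factorial (j+1)) * x ^ (j+1) := by
  have hlt : Real.exp 1 * |x| < 1 := by
    have := mul_lt_mul_of_pos_left hx (Real.exp_pos 1)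
    rwa [mul_inv_cancel₀ (Real.exp_ne_zero 1)] at this
  have hsum : Summable (fun n : ℕ => borelC n • x ^ n) := by
    apply Summable.of_norm
    refine Summable.of_nonneg_of_le (fun n => norm_nonneg _) (fun n => ?_)
      (summable_geometric_of_lt_one (by positivity) hlt)
    rw [norm_smul, Real.norm_of_nonneg (borelC_nonneg n), norm_pow, Real.norm_eq_abs]
    calc borelC n * |x| ^ n ≤ Real.exp 1 ^ n * |x| ^ n :=
          mul_le_mul_of_nonneg_right (borelC_le n) (by positivity)
      _ = (Real.exp 1 * |x|) ^ n := (mul_pow _ _ _).symm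
  have h1 : Hs x = ∑' n : ℕ, borelC n • x ^ n :=
    FormalMultilinearSeries.ofScalars_sum_eq borelC x
  rw [h1, Summable.tsum_eq_zero_add hsum]
  simp only [borelC, smul_eq_mul, pow_zero, mul_one, zero_mul, zero_add]

lemma map_into (t : ℝ) (ht : t ∈ Set.Ioo (0:ℝ) 1) : |t * Real.exp (-t)| < (Real.exp 1)⁻¹ := by
  obtain ⟨ht0, ht1⟩ := ht
  have hpos : 0 < t * Real.exp (-t) := mul_pos ht0 (Real.exp_pos _)
  rw [abs_of_pos hpos]
  have hlt : t < Real.exp (t - 1) := by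
    have := Real.add_one_lt_exp (x := t - 1) (by intro h; apply absurd (by linarith : t = 1) (ne_of_lt ht1))
    linarith
  calc t * Real.exp (-t) < Real.exp (t - 1) * Real.exp (-t) :=
        mul_lt_mul_of_pos_right hlt (Real.exp_pos _)
    _ = (Real.exp 1)⁻¹ := by
        rw [← Real.exp_add, ← Real.exp_neg]
        congr 1
        ring

lemma key_eqOn : Set.EqOn (fun t : ℝ => Hs (t * Real.exp (-t)) - t) 0 (Set.Ioo 0 1) := by
  have hana : AnalyticOnNhd ℝ (fun t : ℝ => Hs (t * Real.exp (-t)) - t) (Set.Ioo 0 1) := by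
    intro t ht
    have h1 : AnalyticAt ℝ Hs (t * Real.exp (-t)) := Hs_analyticAt (map_into t ht)
    have h2 : AnalyticAt ℝ (fun t : ℝ => t * Real.exp (-t)) t :=
      (analyticAt_id).mul ((analyticAt_id.neg).rexp)
    have h3' : AnalyticAt ℝ (Hs ∘ fun t : ℝ => t * Real.exp (-t)) t :=
      AnalyticAt.comp (g := Hs) (f := fun t : ℝ => t * Real.exp (-t)) (x := t) h1 h2
    have h3 : AnalyticAt ℝ (fun t : ℝ => Hs (t * Real.exp (-t))) t := h3'
    exact h3.sub analyticAt_id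
  apply hana.eqOn_zero_of_preconnected_of_eventuallyEq_zero
    ((convex_Ioo (0:ℝ) 1).isPreconnected) (z₀ := (1/8 : ℝ))
    (Set.mem_Ioo.mpr ⟨by norm_num, by norm_num⟩)
  have hmem : Set.Ioo (0:ℝ) (1/4) ∈ 𝓝 (1/8 : ℝ) :=
    isOpen_Ioo.mem_nhds (Set.mem_Ioo.mpr ⟨by norm_num, by norm_num⟩)
  filter_upwards [hmem] with t ht
  obtain ⟨ht0, ht4⟩ := ht
  have ht1 : t ∈ Set.Ioo (0:ℝ) 1 := ⟨ht0, lt_trans ht4 (by norm_num)⟩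
  have h := step1 t ht0 ht4
  have hHs : Hs (t * Real.exp (-t)) = t := by
    rw [Hs_eq (map_into t ht1)]
    exact h
  simp [hHs]

/-- For `0 < λ < 1`, the Borel(λ) probabilities sum to one:
`∑_{n=1}^{∞} e^{-λn}(λn)^{n-1}/n! = 1` (the sum is indexed by `n = j+1`, `j : ℕ`). -/
theorem stmt_7 (l : ℝ) (h0 : 0 < l) (h1 : l < 1) :
    ∑' j : ℕ, Real.exp (-(l * (j + 1))) * (l * (j + 1)) ^ j / (Nat.factorial (j + 1)) = 1 := by
  have hl : l ∈ Set.Ioo (0:ℝ) 1 := ⟨h0, h1⟩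
  have h := key_eqOn hl
  have hHs : Hs (l * Real.exp (-l)) = l := by
    have : Hs (l * Real.exp (-l)) - l = 0 := h
    linarith
  rw [Hs_eq (map_into l hl)] at hHs
  have hterm : ∀ j : ℕ, ((j : ℝ) + 1) ^ j / (Nat.factorial (j+1)) * (l * Real.exp (-l)) ^ (j+1)
      = l * (Real.exp (-(l * ((j : ℝ) + 1))) * (l * ((j : ℝ) + 1)) ^ j / (Nat.factorial (j+1))) := by
    intro j
    have hexp : Real.exp (-l) ^ (j+1) = Real.exp (-(l * ((j : ℝ) + 1))) := by
      rw [← Real.exp_nat_mul]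
      congr 1
      push_cast
      ring
    rw [mul_pow, hexp, mul_pow]
    ring
  have hmul : l * ∑' j : ℕ, Real.exp (-(l * ((j : ℝ) + 1))) * (l * ((j : ℝ) + 1)) ^ j /
      (Nat.factorial (j+1)) = l := by
    calc l * ∑' j : ℕ, Real.exp (-(l * ((j : ℝ) + 1))) * (l * ((j : ℝ) + 1)) ^ j /
        (Nat.factorial (j+1))
        = ∑' j : ℕ, l * (Real.exp (-(l * ((j : ℝ) + 1))) * (l * ((j : ℝ) + 1)) ^ j /
            (Nat.factorial (j+1))) := tsum_mul_left.symm
      _ = ∑' j : ℕ, ((j : ℝ) + 1) ^ j / (Nat.factorial (j+1)) * (l * Real.exp (-l)) ^ (j+1) :=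
          tsum_congr fun j => (hterm j).symm
      _ = l := hHs
  have hl0 : l ≠ 0 := ne_of_gt h0
  have := mul_left_cancel₀ hl0 (by rw [hmul, mul_one] : l * (∑' j : ℕ,
    Real.exp (-(l * ((j : ℝ) + 1))) * (l * ((j : ℝ) + 1)) ^ j / (Nat.factorial (j+1))) = l * 1)
  exact this
end

section
/- Let X₁, X₂, … be i.i.d. integer-valued random variables with mean μ and maximum value 1 (i.e. Xᵢ ≤ 1 almost surely), and let S_n = X₁+⋯+X_n. Then P(S_n > 0 for all n = 1,2,…) equals μ if μ > 0 and equals 0 if μ ≤ 0. -/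
open MeasureTheory ProbabilityTheory
open Finset Filter
open scoped ENNReal NNReal


open Finset
open Fin.NatCast

/-- cyclically extended partial sums -/
private def bcs (n : ℕ) (x : ℕ → ℤ) (m : ℕ) : ℤ := ∑ i ∈ Finset.range m, x (i % n)

private lemma bcs_succ (n : ℕ) (x : ℕ → ℤ) (m : ℕ) :
    bcs n x (m + 1) = bcs n x m + x (m % n) := Finset.sum_range_succ _ _

private lemma bcs_add_n (n : ℕ) (x : ℕ → ℤ) (m : ℕ) :
    bcs n x (m + n) = bcs n x m + bcs n x n := by
  induction m with
  | zero => simp [bcs]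
  | succ m ih =>
      have : m + 1 + n = (m + n) + 1 := by ring
      rw [this, bcs_succ, ih, Nat.add_mod_right, bcs_succ]
      ring

private lemma bcs_shift (n : ℕ) (x : ℕ → ℤ) (j k : ℕ) :
    ∑ i ∈ Finset.range k, x ((i + j) % n) = bcs n x (j + k) - bcs n x j := by
  induction k with
  | zero => simp
  | succ k ih =>
      rw [Finset.sum_range_succ, ih]
      have : j + (k + 1) = (j + k) + 1 := by ring
      rw [this, bcs_succ]
      have : (j + k) % n = (k + j) % n := by rw [Nat.add_comm]
      rw [this]; ring

section CycleLemma

variable (n : ℕ) (x : ℕ → ℤ)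

private lemma bcs_add_mul (q m : ℕ) : bcs n x (m + q * n) = bcs n x m + q * bcs n x n := by
  induction q with
  | zero => simp
  | succ q ih =>
      have : m + (q + 1) * n = (m + q * n) + n := by ring
      rw [this, bcs_add_n, ih]
      push_cast
      ring

variable {n x} (hn : 1 ≤ n) (hs : 1 ≤ bcs n x n) (hx : ∀ i, i < n → x i ≤ 1)

private lemma bcs_low (r : ℕ) (hr : r ≤ n) :
    -(∑ i ∈ Finset.range n, |x (i % n)|) ≤ bcs n x r := by
  have h1 : ∑ i ∈ Finset.range r, (-|x (i % n)|) ≤ bcs n x r := by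
    apply Finset.sum_le_sum
    intro i _
    exact neg_abs_le _
  have h2 : ∑ i ∈ Finset.range r, |x (i % n)| ≤ ∑ i ∈ Finset.range n, |x (i % n)| := by
    apply Finset.sum_le_sum_of_subset_of_nonneg
    · exact Finset.range_subset_range.2 hr
    · intro i _ _; exact abs_nonneg _
  rw [Finset.sum_neg_distrib] at h1
  linarith

private lemma bcs_decomp (m : ℕ) :
    bcs n x m = bcs n x (m % n) + (m / n : ℕ) * bcs n x n := by
  conv_lhs => rw [← Nat.mod_add_div m n, Nat.mul_comm]
  exact bcs_add_mul n x _ _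

include hn hs in
private lemma bcs_growth (m : ℕ) :
    (m / n : ℕ) - (∑ i ∈ Finset.range n, |x (i % n)|) ≤ bcs n x m := by
  have h1 := bcs_low (x := x) (m % n) (le_of_lt (Nat.mod_lt m hn))
  have h2 : ((m / n : ℕ) : ℤ) * 1 ≤ ((m / n : ℕ) : ℤ) * bcs n x n :=
    mul_le_mul_of_nonneg_left hs (by positivity)
  rw [bcs_decomp]
  linarith

end CycleLemma

section CycleMain

variable {n : ℕ} {x : ℕ → ℤ}

/-- the "good shifts" predicate matching the probability event -/
private def bgood (n : ℕ) (x : ℕ → ℤ) (j : ℕ) : Prop :=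
  ∀ k ∈ Finset.Icc 1 n, 0 < ∑ i ∈ Finset.range k, x ((i + j) % n)

private lemma bgood_iff (j : ℕ) :
    bgood n x j ↔ ∀ k, 1 ≤ k → k ≤ n → bcs n x j < bcs n x (j + k) := by
  unfold bgood
  constructor
  · intro h k h1 h2
    have := h k (Finset.mem_Icc.2 ⟨h1, h2⟩)
    rw [bcs_shift] at this
    linarith
  · intro h k hk
    obtain ⟨h1, h2⟩ := Finset.mem_Icc.1 hk
    rw [bcs_shift]
    have := h k h1 h2
    linarith

end CycleMain

section Count

private instance bgood_dec (n : ℕ) (x : ℕ → ℤ) : DecidablePred (bgood n x) := fun j => by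
  unfold bgood; infer_instance

private lemma cycle_count {n : ℕ} {x : ℕ → ℤ} (hn : 1 ≤ n) (hx : ∀ i, i < n → x i ≤ 1) :
    ((Finset.range n).filter (bgood n x)).card = (∑ i ∈ Finset.range n, x i).toNat := by
  have hsum : ∑ i ∈ Finset.range n, x i = bcs n x n := by
    apply Finset.sum_congr rfl
    intro i hi
    rw [Nat.mod_eq_of_lt (Finset.mem_range.1 hi)]
  rw [hsum]
  set s : ℤ := bcs n x n with hsdef
  rcases le_or_gt s 0 with hs | hs
  · -- no good shifts
    have : (Finset.range n).filter (bgood n x) = ∅ := by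
      apply Finset.filter_false_of_mem
      intro j _ hg
      have := (bgood_iff j).1 hg n hn le_rfl
      rw [bcs_add_n] at this
      linarith
    rw [this]
    simp [Int.toNat_of_nonpos hs]
  · -- s ≥ 1
    have hs1 : 1 ≤ s := hs
    set A : ℤ := ∑ i ∈ Finset.range n, |x (i % n)| with hA
    -- minimum of bcs over one period
    have hTne : ((Finset.range n).image (bcs n x)).Nonempty :=
      (Finset.nonempty_range_iff.2 (by omega)).image _
    set M : ℤ := ((Finset.range n).image (bcs n x)).min' hTne with hM
    obtain ⟨r0, hr0n, hr0⟩ : ∃ r0, r0 < n ∧ bcs n x r0 = M := by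
      obtain ⟨r0, hr0n, hr0⟩ := Finset.mem_image.1 (Finset.min'_mem _ hTne)
      exact ⟨r0, Finset.mem_range.1 hr0n, hr0⟩
    have hglobal : ∀ m, M ≤ bcs n x m := by
      intro m
      have h1 : M ≤ bcs n x (m % n) :=
        Finset.min'_le _ _ (Finset.mem_image_of_mem _ (Finset.mem_range.2 (Nat.mod_lt m hn)))
      have h2 : (0 : ℤ) ≤ ((m / n : ℕ) : ℤ) * s := by positivity
      rw [bcs_decomp (x := x) m, ← hsdef]
      linarith
    -- last-passage times
    set b : ℤ → ℕ := fun v => n * ((v + A).toNat + 1) with hb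
    have hbn : ∀ v, n ≤ b v := fun v => Nat.le_mul_of_pos_right n (by omega)
    have hkeyUB : ∀ v m, b v < m → v < bcs n x m := by
      intro v m hm
      have hdiv : (v + A).toNat + 1 ≤ m / n := by
        rw [Nat.le_div_iff_mul_le (by omega)]
        calc ((v + A).toNat + 1) * n = n * ((v + A).toNat + 1) := by ring
        _ ≤ m := le_of_lt hm
      have hgrow := bcs_growth hn hs1 (x := x) m
      have h1 : ((v + A).toNat + 1 : ℤ) ≤ ((m / n : ℕ) : ℤ) := by exact_mod_cast hdiv
      have h2 : v + A ≤ ((v + A).toNat : ℤ) := Int.self_le_toNat _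
      rw [← hA] at hgrow
      linarith
    set L : ℤ → ℕ := fun v => Nat.findGreatest (fun m => bcs n x m ≤ v) (b v) with hL
    -- properties of L for v in [M, M+s-1]
    have hLP : ∀ v, M ≤ v → bcs n x (L v) ≤ v := by
      intro v hv
      exact Nat.findGreatest_spec (P := fun m => bcs n x m ≤ v) (m := r0)
        (le_trans (le_of_lt hr0n) (hbn v)) (by show bcs n x r0 ≤ v; rw [hr0]; exact hv)
    have hLgt : ∀ v, M ≤ v → ∀ m, L v < m → v < bcs n x m := by
      intro v hv m hm
      rcases le_or_gt m (b v) with h | h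
      · have := Nat.findGreatest_is_greatest (P := fun m => bcs n x m ≤ v) hm h
        simp only [not_le] at this
        exact this
      · exact hkeyUB v m h
    have hLval : ∀ v, M ≤ v → bcs n x (L v) = v := by
      intro v hv
      have h1 := hLgt v hv (L v + 1) (Nat.lt_succ_self _)
      rw [bcs_succ] at h1
      have h2 : x (L v % n) ≤ 1 := hx _ (Nat.mod_lt _ hn)
      have h3 := hLP v hv
      linarith
    have hLlt : ∀ v, M ≤ v → v ≤ M + s - 1 → L v < n := by
      intro v hv1 hv2
      by_contra hcon
      push_neg at hcon
      have hdec : L v = (L v - n) + n := by omega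
      have := hLval v hv1
      rw [hdec, bcs_add_n, ← hsdef] at this
      have := hglobal (L v - n)
      linarith [hLval v hv1]
    have hLgood : ∀ v, M ≤ v → v ≤ M + s - 1 → bgood n x (L v) := by
      intro v hv1 hv2
      rw [bgood_iff]
      intro k hk1 hk2
      rw [hLval v hv1]
      exact hLgt v hv1 (L v + k) (by omega)
    -- conversely: good shifts j
    have hgoodmono : ∀ j, j < n → bgood n x j → ∀ m, j < m → bcs n x j < bcs n x m := by
      intro j hj hg m hm
      have hg' := (bgood_iff j).1 hg
      set k := m - j with hk
      have hm' : m = j + k := by omega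
      have hk1 : 1 ≤ k := by omega
      rw [hm']
      have hkd : j + k = (j + k % n) + (k / n) * n := by
        conv_lhs => rw [← Nat.mod_add_div k n]
        ring
      rcases Nat.eq_zero_or_pos (k % n) with hr | hr
      · -- k is a positive multiple of n
        have hq1 : 1 ≤ k / n := by
          rcases Nat.eq_zero_or_pos (k / n) with h | h
          · exfalso
            have h2 := Nat.mod_add_div k n
            rw [hr, h, Nat.mul_zero] at h2
            omega
          · exact h
        rw [hkd, hr, Nat.add_zero, bcs_add_mul]
        have : (1 : ℤ) * 1 ≤ ((k / n : ℕ) : ℤ) * s := by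
          apply mul_le_mul (by exact_mod_cast hq1) hs1 (by norm_num) (by positivity)
        linarith
      · rw [hkd, bcs_add_mul, ← hsdef]
        have h1 : bcs n x j < bcs n x (j + k % n) :=
          hg' _ hr (le_of_lt (Nat.mod_lt _ hn))
        have h2 : (0 : ℤ) ≤ ((k / n : ℕ) : ℤ) * s := by positivity
        linarith
    have hjval : ∀ j, j < n → bgood n x j →
        (M ≤ bcs n x j ∧ bcs n x j ≤ M + s - 1 ∧ L (bcs n x j) = j) := by
      intro j hj hg
      have hv1 : M ≤ bcs n x j := hglobal j
      have hv2 : bcs n x j ≤ M + s - 1 := by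
        have h1 : j < r0 + n := by omega
        have h2 := hgoodmono j hj hg (r0 + n) h1
        rw [bcs_add_n, hr0, ← hsdef] at h2
        linarith
      refine ⟨hv1, hv2, ?_⟩
      have hle : j ≤ L (bcs n x j) :=
        Nat.le_findGreatest (le_trans (le_of_lt hj) (hbn _)) le_rfl
      rcases lt_or_eq_of_le hle with hlt | heq
      · exfalso
        have := hgoodmono j hj hg (L (bcs n x j)) hlt
        have := hLP (bcs n x j) hv1
        linarith
      · exact heq.symm
    -- the bijection
    have hcard : ((Finset.range n).filter (bgood n x)).card
        = (Finset.Icc M (M + s - 1)).card := by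
      apply Finset.card_bij' (i := fun j _ => bcs n x j) (j := fun v _ => L v)
      · intro j hj
        obtain ⟨hjn, hjg⟩ := Finset.mem_filter.1 hj
        obtain ⟨h1, h2, _⟩ := hjval j (Finset.mem_range.1 hjn) hjg
        exact Finset.mem_Icc.2 ⟨h1, h2⟩
      · intro v hv
        obtain ⟨hv1, hv2⟩ := Finset.mem_Icc.1 hv
        exact Finset.mem_filter.2 ⟨Finset.mem_range.2 (hLlt v hv1 hv2), hLgood v hv1 hv2⟩
      · intro j hj
        obtain ⟨hjn, hjg⟩ := Finset.mem_filter.1 hj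
        exact (hjval j (Finset.mem_range.1 hjn) hjg).2.2
      · intro v hv
        obtain ⟨hv1, _⟩ := Finset.mem_Icc.1 hv
        exact hLval v hv1
    rw [hcard, Int.card_Icc]
    congr 1
    ring

end Count

section Prob

private lemma joint_map {Ω : Type*} [MeasurableSpace Ω] (μ : Measure Ω) [IsProbabilityMeasure μ]
    (X : ℕ → Ω → ℤ) (hmeas : ∀ i, Measurable (X i))
    (hindep : iIndepFun X μ)
    (hident : ∀ i, IdentDistrib (X i) (X 0) μ μ) (N : ℕ) :
    μ.map (fun ω (i : Fin N) => X i ω) = Measure.pi (fun _ : Fin N => μ.map (X 0)) := by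
  haveI : IsProbabilityMeasure (μ.map (X 0)) := Measure.isProbabilityMeasure_map (hmeas 0).aemeasurable
  have hπ : Measurable (fun ω (i : Fin N) => X i ω) :=
    measurable_pi_lambda _ (fun i => hmeas i)
  refine (Measure.pi_eq (fun s hs => ?_)).symm
  rw [Measure.map_apply hπ (MeasurableSet.univ_pi (fun i => hs i))]
  set t : ℕ → Set ℤ := fun i => if h : i < N then s ⟨i, h⟩ else Set.univ with ht
  have hpre : (fun ω (i : Fin N) => X i ω) ⁻¹' (Set.univ.pi s)
      = ⋂ i ∈ Finset.range N, X i ⁻¹' t i := by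
    ext ω
    simp only [Set.mem_preimage, Set.mem_pi, Set.mem_univ, forall_true_left, Set.mem_iInter,
      Finset.mem_range]
    constructor
    · intro h i hi
      simp only [ht, hi, dif_pos, Set.mem_preimage]
      exact h ⟨i, hi⟩
    · intro h i
      have := h i.val i.isLt
      simpa only [ht, i.isLt, dif_pos, Set.mem_preimage, Fin.eta] using this
  rw [hpre, hindep.measure_inter_preimage_eq_mul (Finset.range N) (fun i _ => trivial)]
  have h1 : ∀ i ∈ Finset.range N, μ (X i ⁻¹' t i) = μ.map (X 0) (t i) := by
    intro i _
    rw [← (hident i).map_eq, Measure.map_apply (hmeas i) trivial]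
  rw [Finset.prod_congr rfl h1, ← Fin.prod_univ_eq_prod_range (fun i => μ.map (X 0) (t i)) N]
  refine Finset.prod_congr rfl (fun i _ => ?_)
  simp only [ht, i.isLt, dif_pos, Fin.eta]

/-- event on sequences: the `j`-shifted cyclic partial sums are all positive -/
private def bset (N : ℕ) [NeZero N] (j : ℕ) : Set (Fin N → ℤ) :=
  {y | ∀ k ∈ Finset.Icc 1 N, 0 < ∑ i ∈ Finset.range k, y ((i + j : ℕ) : Fin N)}

private lemma bset_meas (N : ℕ) [NeZero N] (j : ℕ) : MeasurableSet (bset N j) := by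
  have : bset N j = ⋂ k ∈ Finset.Icc 1 N,
      (fun y : Fin N → ℤ => ∑ i ∈ Finset.range k, y ((i + j : ℕ) : Fin N)) ⁻¹' {z | 0 < z} := by
    ext y
    simp [bset, Set.mem_iInter]
  rw [this]
  refine MeasurableSet.biInter (Finset.Icc 1 N).countable_toSet (fun k _ => ?_)
  have hm : Measurable (fun y : Fin N → ℤ => ∑ i ∈ Finset.range k, y ((i + j : ℕ) : Fin N)) :=
    Finset.measurable_sum (Finset.range k)
      (fun i _ => measurable_pi_apply (((i + j : ℕ) : Fin N)))
  exact hm (show MeasurableSet {z : ℤ | 0 < z} from trivial)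

private lemma bset_shift (N : ℕ) [NeZero N] (ν : Measure ℤ) [IsProbabilityMeasure ν] (j : ℕ) :
    Measure.pi (fun _ : Fin N => ν) (bset N j) = Measure.pi (fun _ : Fin N => ν) (bset N 0) := by
  have e : Fin N ≃ Fin N := (Equiv.addRight ((j : Fin N))).symm
  clear e
  set e : Fin N ≃ Fin N := (Equiv.addRight ((j : Fin N))).symm with he
  have hT : ∀ (y : Fin N → ℤ) (i : Fin N),
      MeasurableEquiv.piCongrLeft (fun _ : Fin N => ℤ) e y i = y (i + (j : Fin N)) := by
    intro y i
    have h1 : i = e (e.symm i) := (e.apply_symm_apply i).symm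
    calc MeasurableEquiv.piCongrLeft (fun _ : Fin N => ℤ) e y i
        = MeasurableEquiv.piCongrLeft (fun _ : Fin N => ℤ) e y (e (e.symm i)) := by rw [← h1]
    _ = y (e.symm i) :=
        MeasurableEquiv.piCongrLeft_apply_apply (β := fun _ : Fin N => ℤ) e y (e.symm i)
    _ = y (i + (j : Fin N)) := rfl
  have hidx : ∀ i : ℕ, ((i + 0 : ℕ) : Fin N) + (j : Fin N) = ((i + j : ℕ) : Fin N) := by
    intro i
    apply Fin.ext
    simp [Fin.add_def, Fin.val_natCast, Nat.add_mod]
  have hpre : bset N j = (MeasurableEquiv.piCongrLeft (fun _ : Fin N => ℤ) e) ⁻¹' (bset N 0) := by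
    ext y
    simp only [bset, Set.mem_preimage, Set.mem_setOf_eq]
    refine forall₂_congr fun k hk => ?_
    have hsum : ∑ i ∈ Finset.range k,
          MeasurableEquiv.piCongrLeft (fun _ : Fin N => ℤ) e y ((i + 0 : ℕ) : Fin N)
        = ∑ i ∈ Finset.range k, y ((i + j : ℕ) : Fin N) := by
      refine Finset.sum_congr rfl fun i _ => ?_
      rw [hT, hidx]
    rw [hsum]
  rw [hpre, ← Measure.map_apply (MeasurableEquiv.piCongrLeft (fun _ : Fin N => ℤ) e).measurable
    (bset_meas N 0)]
  rw [MeasureTheory.Measure.pi_map_piCongrLeft e (fun _ : Fin N => ν)]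

end Prob

section Key

private lemma key_identity {Ω : Type*} [MeasurableSpace Ω] (μ : Measure Ω) [IsProbabilityMeasure μ]
    (X : ℕ → Ω → ℤ) (hmeas : ∀ i, Measurable (X i))
    (hindep : iIndepFun X μ)
    (hident : ∀ i, IdentDistrib (X i) (X 0) μ μ)
    (hboundAll : ∀ᵐ ω ∂μ, ∀ i, X i ω ≤ 1) (N : ℕ) (hN : 0 < N) :
    (N : ℝ≥0∞) * μ {ω | ∀ k, 1 ≤ k → k ≤ N → 0 < ∑ i ∈ Finset.range k, X i ω}
      = ∫⁻ ω, ((∑ i ∈ Finset.range N, X i ω).toNat : ℝ≥0∞) ∂μ := by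
  classical
  haveI : NeZero N := ⟨by omega⟩
  haveI : IsProbabilityMeasure (μ.map (X 0)) := Measure.isProbabilityMeasure_map (hmeas 0).aemeasurable
  have hπ : Measurable (fun ω (i : Fin N) => X i ω) :=
    measurable_pi_lambda _ (fun i => hmeas i)
  -- membership in the preimage events is the `bgood` predicate
  have hAj_mem : ∀ (j : ℕ) (ω : Ω),
      ω ∈ (fun ω (i : Fin N) => X i ω) ⁻¹' bset N j ↔ bgood N (fun i => X i ω) j := by
    intro j ω
    simp only [Set.mem_preimage, bset, Set.mem_setOf_eq, bgood]
    refine forall₂_congr fun k hk => ?_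
    have hs : ∑ i ∈ Finset.range k, X (((i + j : ℕ) : Fin N) : ℕ) ω
        = ∑ i ∈ Finset.range k, X ((i + j) % N) ω := by
      refine Finset.sum_congr rfl fun i _ => ?_
      rw [Fin.val_natCast]
    rw [hs]
  -- all shifted events have the same measure
  have hAeq : ∀ j : ℕ, μ ((fun ω (i : Fin N) => X i ω) ⁻¹' bset N j)
      = μ ((fun ω (i : Fin N) => X i ω) ⁻¹' bset N 0) := by
    intro j
    rw [← Measure.map_apply hπ (bset_meas N j), ← Measure.map_apply hπ (bset_meas N 0),
      joint_map μ X hmeas hindep hident N]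
    exact bset_shift N (μ.map (X 0)) j
  -- the unshifted event is the target event
  have hA0 : (fun ω (i : Fin N) => X i ω) ⁻¹' bset N 0
      = {ω | ∀ k, 1 ≤ k → k ≤ N → 0 < ∑ i ∈ Finset.range k, X i ω} := by
    ext ω
    rw [Set.mem_setOf_eq, hAj_mem 0 ω]
    unfold bgood
    constructor
    · intro h k h1 h2
      have := h k (Finset.mem_Icc.2 ⟨h1, h2⟩)
      have hs : ∑ i ∈ Finset.range k, (fun i => X i ω) ((i + 0) % N)
          = ∑ i ∈ Finset.range k, X i ω := by
        refine Finset.sum_congr rfl fun i hi => ?_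
        have : i < N := lt_of_lt_of_le (Finset.mem_range.1 hi) h2
        simp only [Nat.add_zero, Nat.mod_eq_of_lt this]
      rwa [hs] at this
    · intro h k hk
      obtain ⟨h1, h2⟩ := Finset.mem_Icc.1 hk
      have hs : ∑ i ∈ Finset.range k, (fun i => X i ω) ((i + 0) % N)
          = ∑ i ∈ Finset.range k, X i ω := by
        refine Finset.sum_congr rfl fun i hi => ?_
        have : i < N := lt_of_lt_of_le (Finset.mem_range.1 hi) h2
        simp only [Nat.add_zero, Nat.mod_eq_of_lt this]
      rw [hs]
      exact h k h1 h2
  -- sum over shifts, pointwise count of good shifts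
  have hcount : ∀ ω, (∑ j ∈ Finset.range N,
        ((fun ω (i : Fin N) => X i ω) ⁻¹' bset N j).indicator (1 : Ω → ℝ≥0∞) ω)
      = (((Finset.range N).filter (bgood N (fun i => X i ω))).card : ℝ≥0∞) := by
    intro ω
    have : ∀ j ∈ Finset.range N,
        ((fun ω (i : Fin N) => X i ω) ⁻¹' bset N j).indicator (1 : Ω → ℝ≥0∞) ω
        = if bgood N (fun i => X i ω) j then 1 else 0 := by
      intro j _
      rw [Set.indicator_apply]
      simp only [Pi.one_apply]
      exact if_congr (hAj_mem j ω) rfl rfl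
    rw [Finset.sum_congr rfl this, Finset.sum_boole]
  calc (N : ℝ≥0∞) * μ {ω | ∀ k, 1 ≤ k → k ≤ N → 0 < ∑ i ∈ Finset.range k, X i ω}
      = ∑ _j ∈ Finset.range N, μ ((fun ω (i : Fin N) => X i ω) ⁻¹' bset N 0) := by
        rw [Finset.sum_const, Finset.card_range, nsmul_eq_mul, hA0]
    _ = ∑ j ∈ Finset.range N, μ ((fun ω (i : Fin N) => X i ω) ⁻¹' bset N j) :=
        (Finset.sum_congr rfl fun j _ => (hAeq j)).symm
    _ = ∑ j ∈ Finset.range N, ∫⁻ ω, ((fun ω (i : Fin N) => X i ω) ⁻¹' bset N j).indicator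
          (1 : Ω → ℝ≥0∞) ω ∂μ :=
        Finset.sum_congr rfl fun j _ =>
          (lintegral_indicator_one (hπ (bset_meas N j))).symm
    _ = ∫⁻ ω, ∑ j ∈ Finset.range N, ((fun ω (i : Fin N) => X i ω) ⁻¹' bset N j).indicator
          (1 : Ω → ℝ≥0∞) ω ∂μ :=
        (lintegral_finset_sum _ fun j _ =>
          (measurable_one.indicator (hπ (bset_meas N j)))).symm
    _ = ∫⁻ ω, (((Finset.range N).filter (bgood N (fun i => X i ω))).card : ℝ≥0∞) ∂μ :=
        lintegral_congr fun ω => hcount ω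
    _ = ∫⁻ ω, ((∑ i ∈ Finset.range N, X i ω).toNat : ℝ≥0∞) ∂μ := by
        refine lintegral_congr_ae ?_
        filter_upwards [hboundAll] with ω hω
        rw [cycle_count hN (fun i _ => hω i)]

end Key

/-- Stationary ballot theorem (Takács): if `X₁, X₂, …` are i.i.d. integer-valued
random variables with mean `m` and `Xᵢ ≤ 1` a.s., and `Sₙ = X₁ + ⋯ + Xₙ`, then
`P(Sₙ > 0 for all n ≥ 1)` equals `m` if `m > 0` and `0` if `m ≤ 0`. -/
theorem stmt_8 {Ω : Type*} [MeasurableSpace Ω] (μ : Measure Ω) [IsProbabilityMeasure μ]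
    (X : ℕ → Ω → ℤ) (hmeas : ∀ i, Measurable (X i))
    (hindep : iIndepFun X μ)
    (hident : ∀ i, IdentDistrib (X i) (X 0) μ μ)
    (hbound : ∀ i, ∀ᵐ ω ∂μ, X i ω ≤ 1)
    (hint : Integrable (fun ω => (X 0 ω : ℝ)) μ)
    (m : ℝ) (hmean : ∫ ω, (X 0 ω : ℝ) ∂μ = m) :
    μ {ω | ∀ n : ℕ, 1 ≤ n → 0 < ∑ i ∈ Finset.range n, X i ω}
      = if 0 < m then ENNReal.ofReal m else 0 := by
  classical
  have hboundAll : ∀ᵐ ω ∂μ, ∀ i, X i ω ≤ 1 := (MeasureTheory.ae_all_iff).2 hbound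
  have hSmeas : ∀ k, Measurable (fun ω => ∑ i ∈ Finset.range k, X i ω) :=
    fun k => Finset.measurable_sum _ fun i _ => hmeas i
  -- strong law of large numbers
  have hXr_indep : Pairwise (Function.onFun (IndepFun · · μ) (fun i ω => (X i ω : ℝ))) := by
    intro i j hij
    exact (hindep.indepFun hij).comp measurable_from_top measurable_from_top
  have hXr_ident : ∀ i, IdentDistrib (fun ω => (X i ω : ℝ)) (fun ω => (X 0 ω : ℝ)) μ μ :=
    fun i => (hident i).comp measurable_from_top
  have hslln := strong_law_ae_real (fun i ω => (X i ω : ℝ)) hint hXr_indep hXr_ident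
  rw [hmean] at hslln
  -- the events
  set Ev : ℕ → Set Ω :=
    fun N => {ω | ∀ k, 1 ≤ k → k ≤ N → 0 < ∑ i ∈ Finset.range k, X i ω} with hEv
  have hEvMeas : ∀ N, MeasurableSet (Ev N) := by
    intro N
    have : Ev N = ⋂ k, ⋂ (_ : 1 ≤ k), ⋂ (_ : k ≤ N),
        (fun ω => ∑ i ∈ Finset.range k, X i ω) ⁻¹' {z : ℤ | 0 < z} := by
      ext ω
      simp [hEv, Set.mem_iInter]
    rw [this]
    exact MeasurableSet.iInter fun k => MeasurableSet.iInter fun _ =>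
      MeasurableSet.iInter fun _ => (hSmeas k) trivial
  have htarget : {ω | ∀ n : ℕ, 1 ≤ n → 0 < ∑ i ∈ Finset.range n, X i ω} = ⋂ N, Ev N := by
    ext ω
    simp only [Set.mem_setOf_eq, Set.mem_iInter, hEv]
    constructor
    · intro h N k h1 _
      exact h k h1
    · intro h n h1
      exact h n n h1 le_rfl
  have hmono : Antitone Ev := by
    intro a b hab ω h k h1 h2
    exact h k h1 (le_trans h2 hab)
  have hlim1 : Filter.Tendsto (fun N => μ (Ev N)) atTop (nhds (μ (⋂ N, Ev N))) :=
    MeasureTheory.tendsto_measure_iInter_atTop (fun N => (hEvMeas N).nullMeasurableSet) hmono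
      ⟨0, measure_ne_top μ _⟩
  -- the normalized positive-part integrands
  set F : ℕ → Ω → ℝ≥0∞ :=
    fun N ω => (N : ℝ≥0∞)⁻¹ * (((∑ i ∈ Finset.range N, X i ω).toNat : ℕ) : ℝ≥0∞) with hF
  have hg : ∀ N, Measurable fun ω : Ω => (((∑ i ∈ Finset.range N, X i ω).toNat : ℕ) : ℝ≥0∞) :=
    fun N => (measurable_from_top (f := fun z : ℤ => ((z.toNat : ℕ) : ℝ≥0∞))).comp (hSmeas N)
  have hFmeas : ∀ N, Measurable (F N) :=
    fun N => measurable_const.mul (hg N)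
  have hFbound : ∀ N, F N ≤ᵐ[μ] (fun _ => (1 : ℝ≥0∞)) := by
    intro N
    filter_upwards [hboundAll] with ω hω
    rcases Nat.eq_zero_or_pos N with h0 | hN
    · simp [hF, h0]
    · have h1 : (∑ i ∈ Finset.range N, X i ω) ≤ N := by
        calc (∑ i ∈ Finset.range N, X i ω) ≤ ∑ i ∈ Finset.range N, 1 :=
          Finset.sum_le_sum fun i _ => hω i
        _ = N := by simp
      have h2 : ((∑ i ∈ Finset.range N, X i ω).toNat : ℕ) ≤ N := Int.toNat_le.2 h1
      have h3 : (((∑ i ∈ Finset.range N, X i ω).toNat : ℕ) : ℝ≥0∞) ≤ (N : ℝ≥0∞) :=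
        Nat.cast_le.2 h2
      calc F N ω ≤ (N : ℝ≥0∞)⁻¹ * (N : ℝ≥0∞) := mul_le_mul_right h3 _
      _ = 1 := ENNReal.inv_mul_cancel (Nat.cast_ne_zero.2 (by omega)) (by simp)
  have hFtend : ∀ᵐ ω ∂μ, Filter.Tendsto (fun N => F N ω) atTop
      (nhds (ENNReal.ofReal (max m 0))) := by
    filter_upwards [hslln] with ω hω
    have h1 : Filter.Tendsto
        (fun N => max ((∑ i ∈ Finset.range N, (X i ω : ℝ)) / N) 0) atTop
        (nhds (max m 0)) := hω.max tendsto_const_nhds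
    have h2 := ENNReal.tendsto_ofReal h1
    refine h2.congr' ?_
    filter_upwards [Filter.eventually_ge_atTop 1] with N hN
    have hNpos : (0 : ℝ) < N := by exact_mod_cast hN
    have hcast : (∑ i ∈ Finset.range N, (X i ω : ℝ)) = ((∑ i ∈ Finset.range N, X i ω : ℤ) : ℝ) := by
      push_cast
      rfl
    have hmax : max ((∑ i ∈ Finset.range N, (X i ω : ℝ)) / N) 0
        = (max ((∑ i ∈ Finset.range N, X i ω : ℤ) : ℝ) 0) / N := by
      rw [hcast, ← max_div_div_right (le_of_lt hNpos), zero_div]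
    have htn : (((∑ i ∈ Finset.range N, X i ω).toNat : ℕ) : ℝ)
        = max ((∑ i ∈ Finset.range N, X i ω : ℤ) : ℝ) 0 := by
      have := Int.toNat_eq_max (∑ i ∈ Finset.range N, X i ω)
      have h4 : (((∑ i ∈ Finset.range N, X i ω).toNat : ℤ) : ℝ)
          = ((max (∑ i ∈ Finset.range N, X i ω) 0 : ℤ) : ℝ) := by rw [this]
      push_cast at h4
      exact_mod_cast h4
    rw [hmax, ENNReal.ofReal_div_of_pos hNpos, ← htn, ENNReal.ofReal_natCast,
      ENNReal.ofReal_natCast, ENNReal.div_eq_inv_mul]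
  have hdom := MeasureTheory.tendsto_lintegral_of_dominated_convergence
    (fun _ => (1 : ℝ≥0∞)) hFmeas hFbound (by simp) hFtend
  have hdom' : Filter.Tendsto (fun N => ∫⁻ ω, F N ω ∂μ) atTop
      (nhds (ENNReal.ofReal (max m 0))) := by
    simpa [lintegral_const] using hdom
  have hEq : ∀ᶠ N in atTop, ∫⁻ ω, F N ω ∂μ = μ (Ev N) := by
    filter_upwards [Filter.eventually_ge_atTop 1] with N hN
    have hNne : (N : ℝ≥0∞) ≠ 0 := Nat.cast_ne_zero.2 (by omega)
    have hkey' : (N : ℝ≥0∞) * μ (Ev N)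
        = ∫⁻ ω, (((∑ i ∈ Finset.range N, X i ω).toNat : ℕ) : ℝ≥0∞) ∂μ :=
      key_identity μ X hmeas hindep hident hboundAll N (by omega)
    show (∫⁻ ω, (N : ℝ≥0∞)⁻¹ * (((∑ i ∈ Finset.range N, X i ω).toNat : ℕ) : ℝ≥0∞) ∂μ)
      = μ (Ev N)
    rw [lintegral_const_mul _ (hg N), ← hkey',
      ← mul_assoc, ENNReal.inv_mul_cancel hNne (by simp), one_mul]
  have hlim2 : Filter.Tendsto (fun N => μ (Ev N)) atTop
      (nhds (ENNReal.ofReal (max m 0))) := hdom'.congr' hEq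
  rw [htarget, tendsto_nhds_unique hlim1 hlim2]
  split_ifs with h
  · rw [max_eq_left h.le]
  · rw [max_eq_right (not_lt.1 h)]
    simp
end

section
/- (Cycle lemma.) Let X₁,…,X_n be integer-valued, cyclically interchangeable random variables each at most 1, with partial sums S_i = X₁+⋯+X_i. Then for every integer 0 ≤ k ≤ n, P(S_i > 0 for all 1 ≤ i ≤ n | S_n = k) = k/n. -/
open Finset

namespace CycleAux

lemma Ico_int_singleton (b : ℤ) : Finset.Ico b (b+1) = {b} := by
  ext m; simp; omega

lemma sum_Ico_top {M : Type*} [AddCommMonoid M] (f : ℤ → M) {a b : ℤ} (h : a ≤ b) :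
    ∑ i ∈ Finset.Ico a (b+1), f i = (∑ i ∈ Finset.Ico a b, f i) + f b := by
  rw [← Finset.Ico_union_Ico_eq_Ico h (by omega : b ≤ b+1),
    Finset.sum_union (Finset.Ico_disjoint_Ico_consecutive _ _ _), Ico_int_singleton,
    Finset.sum_singleton]

lemma sum_Ico_bot {M : Type*} [AddCommMonoid M] (f : ℤ → M) {a b : ℤ} (h : a ≤ b) :
    ∑ i ∈ Finset.Ico a (b+1), f i = f a + ∑ i ∈ Finset.Ico (a+1) (b+1), f i := by
  rw [← Finset.Ico_union_Ico_eq_Ico (by omega : a ≤ a+1) (by omega : a+1 ≤ b+1),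
    Finset.sum_union (Finset.Ico_disjoint_Ico_consecutive _ _ _), Ico_int_singleton,
    Finset.sum_singleton]

variable {n : ℕ}

def y (hn : 0 < n) (x : Fin n → ℤ) (m : ℤ) : ℤ :=
  x ⟨(m % (n:ℤ)).toNat, by
    have h0 : (0:ℤ) < n := by exact_mod_cast hn
    have h1 := Int.emod_nonneg m (ne_of_gt h0)
    have h2 := Int.emod_lt_of_pos m h0
    omega⟩

lemma y_period (hn : 0 < n) (x : Fin n → ℤ) (m : ℤ) : y hn x (m + n) = y hn x m := by
  unfold y
  congr 1
  exact Fin.ext (by simp [Int.add_mul_emod_self_left])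

noncomputable def S (hn : 0 < n) (x : Fin n → ℤ) (m : ℤ) : ℤ :=
  (∑ i ∈ Finset.Ico (0:ℤ) m, y hn x i) - ∑ i ∈ Finset.Ico m 0, y hn x i

lemma S_zero (hn : 0 < n) (x : Fin n → ℤ) : S hn x 0 = 0 := by simp [S]

lemma S_succ (hn : 0 < n) (x : Fin n → ℤ) (m : ℤ) :
    S hn x (m + 1) = S hn x m + y hn x m := by
  rcases le_or_gt 0 m with h | h
  · have h1 : Finset.Ico (m+1) (0:ℤ) = ∅ := Finset.Ico_eq_empty (by omega)
    have h2 : Finset.Ico m (0:ℤ) = ∅ := Finset.Ico_eq_empty (by omega)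
    rw [S, S, h1, h2, sum_Ico_top _ h]
    ring
  · have h1 : Finset.Ico (0:ℤ) (m+1) = ∅ := Finset.Ico_eq_empty (by omega)
    have h2 : Finset.Ico (0:ℤ) m = ∅ := Finset.Ico_eq_empty (by omega)
    have h3 : Finset.Ico m (0:ℤ) = Finset.Ico m ((-1)+1) := by norm_num
    rw [S, S, h1, h2, h3, sum_Ico_bot _ (by omega)]
    have h4 : Finset.Ico (m+1) ((-1)+1 : ℤ) = Finset.Ico (m+1) 0 := by norm_num
    rw [h4]; ring

lemma S_diff (hn : 0 < n) (x : Fin n → ℤ) {a b : ℤ} (h : a ≤ b) :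
    S hn x b = S hn x a + ∑ i ∈ Finset.Ico a b, y hn x i := by
  refine Int.le_induction (motive := fun b _ => S hn x b = S hn x a + ∑ i ∈ Finset.Ico a b, y hn x i) ?_ ?_ b h
  · simp
  · intro b hb ih
    rw [S_succ, ih, sum_Ico_top _ hb]
    ring


lemma window_base (hn : 0 < n) (x : Fin n → ℤ) :
    ∑ i ∈ Finset.Ico (0:ℤ) n, y hn x i = ∑ i, x i := by
  refine Finset.sum_nbij' (fun m => (⟨m.toNat % n, Nat.mod_lt _ hn⟩ : Fin n))
    (fun i => (i : ℤ)) ?_ ?_ ?_ ?_ ?_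
  · intro a ha; exact Finset.mem_univ _
  · intro i _
    simp only [Finset.mem_Ico]
    constructor
    · exact Int.natCast_nonneg _
    · exact_mod_cast i.isLt
  · intro a ha
    simp only [Finset.mem_Ico] at ha
    have h5 : a.toNat % n = a.toNat := Nat.mod_eq_of_lt (by omega)
    show ((a.toNat % n : ℕ) : ℤ) = a
    rw [h5]; omega
  · intro i _
    apply Fin.ext
    show ((i:ℤ)).toNat % n = (i:Fin n).val
    simp [Nat.mod_eq_of_lt i.isLt]
  · intro a ha
    simp only [Finset.mem_Ico] at ha
    unfold y
    congr 1
    apply Fin.ext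
    show (a % (n:ℤ)).toNat = a.toNat % n
    have h1 : a % (n:ℤ) = a := Int.emod_eq_of_lt (by omega) (by omega)
    rw [h1, Nat.mod_eq_of_lt (by omega)]

lemma window_const (hn : 0 < n) (x : Fin n → ℤ) (m : ℤ) :
    ∑ i ∈ Finset.Ico m (m + n), y hn x i = ∑ i, x i := by
  have step : ∀ m : ℤ, ∑ i ∈ Finset.Ico (m+1) (m+1+n), y hn x i
      = ∑ i ∈ Finset.Ico m (m+n), y hn x i := by
    intro m
    have e1 : m + 1 + (n:ℤ) = (m + n) + 1 := by ring
    rw [e1]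
    have A := sum_Ico_top (y hn x) (by omega : m ≤ m + (n:ℤ))
    have B := sum_Ico_bot (y hn x) (by omega : m ≤ m + (n:ℤ))
    have C := y_period hn x m
    omega
  induction m using Int.induction_on with
  | zero => simpa using window_base hn x
  | succ i ih => rw [step]; exact ih
  | pred i ih =>
      have h6 := step (-(i:ℤ) - 1)
      rw [show -(i:ℤ) - 1 + 1 = -(i:ℤ) by ring] at h6
      rw [h6] at ih
      exact ih

lemma S_period (hn : 0 < n) (x : Fin n → ℤ) (m : ℤ) :
    S hn x (m + n) = S hn x m + ∑ i, x i := by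
  rw [S_diff hn x (by omega : m ≤ m + n), window_const]

lemma S_add_mul (hn : 0 < n) (x : Fin n → ℤ) (m : ℤ) (t : ℕ) :
    S hn x (m + t * n) = S hn x m + t * ∑ i, x i := by
  induction t with
  | zero => simp
  | succ t ih =>
      have e1 : m + ((t:ℤ)+1) * n = (m + t * n) + n := by ring
      push_cast
      rw [e1, S_period, ih]
      ring

lemma S_mul (hn : 0 < n) (x : Fin n → ℤ) (t : ℤ) :
    S hn x (t * n) = t * ∑ i, x i := by
  induction t using Int.induction_on with
  | zero => simp [S_zero]
  | succ i ih =>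
      have e1 : ((i:ℤ)+1) * n = i * n + n := by ring
      rw [e1, S_period, ih]; ring
  | pred i ih =>
      have h6 := S_period hn x ((-(i:ℤ)-1) * n)
      rw [show (-(i:ℤ)-1) * n + n = -(i:ℤ) * n by ring] at h6
      rw [h6] at ih
      linarith [ih]


lemma y_le (hn : 0 < n) (x : Fin n → ℤ) (hb : ∀ i, x i ≤ 1) (m : ℤ) : y hn x m ≤ 1 :=
  hb _

def Good (hn : 0 < n) (x : Fin n → ℤ) (j : ℤ) : Prop :=
  ∀ m : ℤ, j < m → S hn x j < S hn x m

lemma good_of_window (hn : 0 < n) (x : Fin n → ℤ) (hsum : 0 ≤ ∑ i, x i) (j : ℤ)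
    (h : ∀ m, j < m → m ≤ j + n → S hn x j < S hn x m) : Good hn x j := by
  intro m hm
  have hn' : (0:ℤ) < n := by exact_mod_cast hn
  set d : ℤ := m - j - 1 with hd
  have hd0 : 0 ≤ d := by omega
  have hr0 : 0 ≤ d % n := Int.emod_nonneg d (ne_of_gt hn')
  have hrn : d % n < n := Int.emod_lt_of_pos d hn'
  have ht0 : 0 ≤ d / n := Int.ediv_nonneg hd0 (le_of_lt hn')
  have hdec : (n:ℤ) * (d / n) + d % n = d := Int.mul_ediv_add_emod d n
  set m0 : ℤ := j + 1 + d % n with hm0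
  have hmeq : m = m0 + (d / n).toNat * (n:ℤ) := by
    have e : ((d / n).toNat : ℤ) = d / n := Int.toNat_of_nonneg ht0
    rw [e]
    linarith [hdec]
  have hS := S_add_mul hn x m0 (d / n).toNat
  rw [← hmeq] at hS
  have h1 : S hn x j < S hn x m0 := h m0 (by omega) (by omega)
  have h2 : (0:ℤ) ≤ ((d / n).toNat : ℤ) * ∑ i, x i :=
    mul_nonneg (by positivity) hsum
  have e0 : ((d / n).toNat : ℤ) = d / n := Int.toNat_of_nonneg ht0
  rw [e0] at hS h2
  linarith [hS, h1, h2]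

lemma S_lower (hn : 0 < n) (x : Fin n → ℤ) (c : ℤ)
    (hc : ∀ m : ℤ, 0 ≤ m → m ≤ (n:ℤ) → c ≤ S hn x m) :
    ∀ q : ℕ, ∀ m : ℤ, (q:ℤ) * n ≤ m → m ≤ ((q:ℤ)+1) * n → c + q * (∑ i, x i) ≤ S hn x m := by
  intro q
  induction q with
  | zero => intro m h1 h2; simpa using hc m (by simpa using h1) (by omega)
  | succ q ih =>
      intro m h1 h2
      have h3 := S_period hn x (m - n)
      rw [show m - (n:ℤ) + n = m by ring] at h3
      have h4 := ih (m - n) (by push_cast at h1 h2 ⊢; linarith) (by push_cast at h1 h2 ⊢; linarith)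
      push_cast
      push_cast at h4
      linarith

lemma shift_sum (hn : 0 < n) (x : Fin n → ℤ) (j i : Fin n) :
    ∑ i' ∈ Finset.Iic i, x (i' + j) = S hn x ((j:ℤ) + i + 1) - S hn x j := by
  rw [S_diff hn x (by omega : (j:ℤ) ≤ (j:ℤ) + i + 1)]
  have : ∑ m ∈ Finset.Ico (j:ℤ) ((j:ℤ) + i + 1), y hn x m
      = ∑ i' ∈ Finset.Iic i, x (i' + j) := by
    refine Finset.sum_nbij' (fun m => (⟨(m - (j:ℤ)).toNat % n, Nat.mod_lt _ hn⟩ : Fin n))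
      (fun i' => (j:ℤ) + i') ?_ ?_ ?_ ?_ ?_
    · intro m hm
      simp only [Finset.mem_Ico] at hm
      simp only [Finset.mem_Iic]
      have hlt : (m - (j:ℤ)).toNat % n = (m - (j:ℤ)).toNat := Nat.mod_eq_of_lt (by omega)
      rw [Fin.le_def]
      show (m - (j:ℤ)).toNat % n ≤ i.val
      omega
    · intro i' hi'
      simp only [Finset.mem_Iic] at hi'
      simp only [Finset.mem_Ico]
      rw [Fin.le_def] at hi'
      constructor
      · omega
      · push_cast; omega
    · intro m hm
      simp only [Finset.mem_Ico] at hm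
      show (j:ℤ) + ((m - (j:ℤ)).toNat % n : ℕ) = m
      have hlt : (m - (j:ℤ)).toNat % n = (m - (j:ℤ)).toNat := Nat.mod_eq_of_lt (by omega)
      rw [hlt]
      omega
    · intro i' hi'
      apply Fin.ext
      show ((j:ℤ) + i' - (j:ℤ)).toNat % n = i'.val
      rw [show (j:ℤ) + i' - (j:ℤ) = (i':ℤ) by ring]
      simp [Nat.mod_eq_of_lt i'.isLt]
    · intro m hm
      simp only [Finset.mem_Ico] at hm
      unfold y
      congr 1
      apply Fin.ext
      show (m % (n:ℤ)).toNat = ((m - (j:ℤ)).toNat % n + j.val) % n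
      have hj : (0:ℤ) ≤ j := by positivity
      have e1 : ((m - (j:ℤ)).toNat : ℤ) = m - j := Int.toNat_of_nonneg (by omega)
      have hn' : (0:ℤ) < n := by exact_mod_cast hn
      have e3 : (((m - (j:ℤ)).toNat % n : ℕ) : ℤ) = (m - j) % n := by
        push_cast [Int.natCast_emod]
        rw [e1]
      zify
      rw [Int.toNat_of_nonneg (Int.emod_nonneg m (ne_of_gt hn'))]
      push_cast [Int.natCast_emod]
      rw [e1]
      calc m % (n:ℤ) = ((m - (j:ℤ)) + (j:ℤ)) % n := by ring_nf
        _ = ((m - (j:ℤ)) % n + (j:ℤ)) % n := by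
              conv_lhs => rw [Int.add_emod]
              conv_rhs => rw [Int.add_emod, Int.emod_emod_of_dvd _ dvd_rfl]
  rw [this]
  ring


lemma C_iff_good (hn : 0 < n) (x : Fin n → ℤ) (hsum : 0 ≤ ∑ i, x i) (j : Fin n) :
    (∀ i : Fin n, 0 < ∑ i' ∈ Finset.Iic i, x (i' + j)) ↔ Good hn x (j:ℤ) := by
  constructor
  · intro hC
    apply good_of_window hn x hsum
    intro m h1 h2
    set i : Fin n := ⟨(m - (j:ℤ) - 1).toNat, by omega⟩ with hi
    have hiv : ((i:ℕ) : ℤ) = m - (j:ℤ) - 1 := by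
      show (((m - (j:ℤ) - 1).toNat : ℕ) : ℤ) = m - (j:ℤ) - 1
      omega
    have := hC i
    rw [shift_sum hn x j i] at this
    rw [hiv] at this
    have e : (j:ℤ) + (m - (j:ℤ) - 1) + 1 = m := by ring
    rw [e] at this
    omega
  · intro hG i
    rw [shift_sum hn x j i]
    have h9 : (0:ℤ) ≤ i := by positivity
    have := hG ((j:ℤ) + i + 1) (by omega)
    omega


lemma card_good (hn : 0 < n) (x : Fin n → ℤ) (hb : ∀ i, x i ≤ 1) (k : ℕ) (hk : k ≤ n)
    (hs : ∑ i, x i = (k:ℤ)) :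
    (Finset.univ.filter
      (fun j : Fin n => ∀ i : Fin n, 0 < ∑ i' ∈ Finset.Iic i, x (i' + j))).card = k := by
  classical
  have hn' : (0:ℤ) < n := by exact_mod_cast hn
  have hsum : 0 ≤ ∑ i, x i := by rw [hs]; positivity
  have hfe : Finset.univ.filter
      (fun j : Fin n => ∀ i : Fin n, 0 < ∑ i' ∈ Finset.Iic i, x (i' + j))
      = Finset.univ.filter (fun j : Fin n => Good hn x (j:ℤ)) :=
    Finset.filter_congr (fun j _ => by rw [C_iff_good hn x hsum j])
  rw [hfe]
  rcases Nat.eq_zero_or_pos k with hk0 | hk1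
  · subst hk0
    simp only [Nat.cast_zero] at hs
    rw [Finset.card_eq_zero, Finset.filter_eq_empty_iff]
    intro j _ hG
    have h1 := hG ((j:ℤ) + n) (by omega)
    have hp := S_period hn x (j:ℤ)
    rw [hs] at hp
    omega
  · have hk1' : (1:ℤ) ≤ (k:ℤ) := by exact_mod_cast hk1
    set c : ℤ := (Finset.Icc (0:ℤ) n).inf' ⟨0, by simp [hn'.le]⟩ (S hn x) with hc
    have hcle : ∀ m : ℤ, 0 ≤ m → m ≤ (n:ℤ) → c ≤ S hn x m := fun m h1 h2 =>
      Finset.inf'_le _ (by simp [h1, h2])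
    have hlow := S_lower hn x c hcle
    have hpos0 : ∀ m : ℤ, 0 ≤ m → c ≤ S hn x m := by
      intro m hm
      have h1 := Int.mul_ediv_add_emod m n
      have h2 := Int.emod_nonneg m (ne_of_gt hn')
      have h3 := Int.emod_lt_of_pos m hn'
      have ht0 : 0 ≤ m / n := Int.ediv_nonneg hm hn'.le
      set q : ℕ := (m / n).toNat with hq
      have hqe : (q:ℤ) = m / n := Int.toNat_of_nonneg ht0
      have hb1 : (q:ℤ) * n ≤ m := by rw [hqe]; linarith [mul_comm (m / (n:ℤ)) (n:ℤ)]
      have hb2 : m ≤ ((q:ℤ)+1) * n := by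
        rw [hqe]; linarith [mul_comm (m / (n:ℤ)) (n:ℤ)]
      have h4 := hlow q m hb1 hb2
      have hq0 : 0 ≤ (q:ℤ) * ∑ i, x i := mul_nonneg (by positivity) hsum
      linarith
    have hτex : ∀ v : ℤ, ∃ g : ℤ, S hn x g ≤ v ∧ ∀ z : ℤ, S hn x z ≤ v → z ≤ g := by
      intro v
      have hbdd : ∃ b : ℤ, ∀ z : ℤ, S hn x z ≤ v → z ≤ b := by
        refine ⟨(((v - c).toNat + 1) : ℕ) * n, ?_⟩
        intro z hz
        by_contra hcon
        push_neg at hcon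
        set q : ℕ := (v - c).toNat + 1 with hqdef
        have hqn0 : (0:ℤ) ≤ (q:ℤ) * n := by positivity
        have hzpos : 0 ≤ z := by linarith
        have h1 := Int.mul_ediv_add_emod z n
        have h2 := Int.emod_nonneg z (ne_of_gt hn')
        have h3 := Int.emod_lt_of_pos z hn'
        have ht0 : 0 ≤ z / n := Int.ediv_nonneg hzpos hn'.le
        set q' : ℕ := (z / n).toNat with hq'
        have hqe : (q':ℤ) = z / n := Int.toNat_of_nonneg ht0
        have hb1 : (q':ℤ) * n ≤ z := by rw [hqe]; linarith [mul_comm (z / (n:ℤ)) (n:ℤ)]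
        have hb2 : z ≤ ((q':ℤ)+1) * n := by
          rw [hqe]; linarith [mul_comm (z / (n:ℤ)) (n:ℤ)]
        have h4 := hlow q' z hb1 hb2
        have hqq : (q:ℤ) ≤ (q':ℤ) := by nlinarith
        have h5 : (q:ℤ) * ∑ i, x i ≤ (q':ℤ) * ∑ i, x i :=
          mul_le_mul_of_nonneg_right hqq hsum
        have h6 : (q:ℤ) ≤ (q:ℤ) * ∑ i, x i := by
          rw [hs]; nlinarith
        have h7 : v - c < (q:ℤ) := by
          rw [hqdef]; push_cast; omega
        linarith
      have hinh : ∃ z : ℤ, S hn x z ≤ v := by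
        refine ⟨(min v 0) * n, ?_⟩
        rw [S_mul hn x, hs]
        have hm0 : min v 0 ≤ 0 := min_le_right _ _
        have hmv : min v 0 ≤ v := min_le_left _ _
        nlinarith
      obtain ⟨g, h1, h2⟩ := Int.exists_greatest_of_bdd hbdd hinh
      exact ⟨g, h1, h2⟩
    choose τ hτ1 hτ2 using hτex
    have hyle : ∀ m : ℤ, y hn x m ≤ 1 := y_le hn x hb
    have hSτ : ∀ v, S hn x (τ v) = v := by
      intro v
      have h1 : ¬ (S hn x (τ v + 1) ≤ v) := fun h => by have := hτ2 v _ h; omega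
      have h2 := S_succ hn x (τ v)
      have h3 := hyle (τ v)
      have h4 := hτ1 v
      omega
    have hτmono : ∀ v w, v ≤ w → τ v ≤ τ w := fun v w h =>
      hτ2 w (τ v) (by rw [hSτ v]; exact h)
    have hτshift : ∀ v, τ (v + k) = τ v + n := by
      intro v
      have hup : τ v + n ≤ τ (v + k) := by
        apply hτ2
        have hp := S_period hn x (τ v)
        rw [hs, hSτ] at hp
        omega
      have hdown : τ (v + k) ≤ τ v + n := by
        have h5 : S hn x (τ (v+(k:ℤ)) - n) ≤ v := by
          have hp := S_period hn x (τ (v+(k:ℤ)) - n)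
          rw [show τ (v+(k:ℤ)) - (n:ℤ) + n = τ (v+(k:ℤ)) by ring, hs, hSτ] at hp
          omega
        have := hτ2 v _ h5
        omega
      omega
    have hτgood : ∀ v, Good hn x (τ v) := by
      intro v m hm
      rw [hSτ]
      by_contra hcon
      push_neg at hcon
      have := hτ2 v m hcon
      omega
    have hgoodτ : ∀ j : ℤ, Good hn x j → τ (S hn x j) = j := by
      intro j hG
      have h1 : j ≤ τ (S hn x j) := hτ2 _ j le_rfl
      have h2 : τ (S hn x j) ≤ j := by
        by_contra hcon
        push_neg at hcon
        have h3 := hG _ hcon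
        have h4 := hτ1 (S hn x j)
        omega
      omega
    obtain ⟨v₀, hv₀, hleast⟩ := Int.exists_least_of_bdd (P := fun v => 0 ≤ τ v)
      ⟨c, fun z hz => by have h9 := hpos0 (τ z) hz; rw [hSτ] at h9; exact h9⟩
      ⟨0, hτ2 0 0 (le_of_eq (S_zero hn x))⟩
    have hchar : ∀ v : ℤ, (0 ≤ τ v ∧ τ v < n) ↔ (v₀ ≤ v ∧ v < v₀ + k) := by
      intro v
      constructor
      · rintro ⟨h1, h2⟩
        refine ⟨hleast v h1, ?_⟩
        by_contra hcon
        push_neg at hcon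
        have h3 : v₀ ≤ v - k := by omega
        have h4 : 0 ≤ τ (v - k) := le_trans hv₀ (hτmono _ _ h3)
        have h5 := hτshift (v - k)
        rw [show v - (k:ℤ) + k = v by ring] at h5
        omega
      · rintro ⟨h1, h2⟩
        refine ⟨le_trans hv₀ (hτmono _ _ h1), ?_⟩
        have h3 : ¬ (0 ≤ τ (v - k)) := fun h => by have := hleast _ h; omega
        have h5 := hτshift (v - k)
        rw [show v - (k:ℤ) + k = v by ring] at h5
        omega
    have hmem : ∀ v ∈ Finset.Ico v₀ (v₀ + (k:ℤ)), (τ v).toNat < n := by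
      intro v hv
      have hv' := Finset.mem_Ico.mp hv
      have := (hchar v).mpr hv'
      omega
    have hcards : (Finset.Ico v₀ (v₀ + (k:ℤ))).card
        = (Finset.univ.filter (fun j : Fin n => Good hn x (j:ℤ))).card := by
      refine Finset.card_bij' (fun v hv => (⟨(τ v).toNat, hmem v hv⟩ : Fin n))
        (fun g _ => S hn x ((g : Fin n) : ℤ)) ?_ ?_ ?_ ?_
      · intro v hv
        have hv' := Finset.mem_Ico.mp hv
        have h0 : 0 ≤ τ v := ((hchar v).mpr hv').1
        simp only [Finset.mem_filter, Finset.mem_univ, true_and]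
        show Good hn x (((τ v).toNat : ℕ) : ℤ)
        rw [Int.toNat_of_nonneg h0]
        exact hτgood v
      · intro g hg
        have hG : Good hn x ((g:Fin n):ℤ) := (Finset.mem_filter.mp hg).2
        have he : τ (S hn x ((g:Fin n):ℤ)) = ((g:Fin n):ℤ) := hgoodτ _ hG
        rw [Finset.mem_Ico]
        refine (hchar (S hn x ((g:Fin n):ℤ))).mp ⟨?_, ?_⟩
        · rw [he]; positivity
        · rw [he]; exact_mod_cast g.isLt
      · intro v hv
        have hv' := Finset.mem_Ico.mp hv
        have h0 : 0 ≤ τ v := ((hchar v).mpr hv').1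
        show S hn x (((τ v).toNat : ℕ) : ℤ) = v
        rw [Int.toNat_of_nonneg h0]
        exact hSτ v
      · intro g hg
        have hG : Good hn x ((g:Fin n):ℤ) := (Finset.mem_filter.mp hg).2
        apply Fin.ext
        show (τ (S hn x ((g:Fin n):ℤ))).toNat = (g : Fin n).val
        rw [hgoodτ _ hG]
        simp
    rw [← hcards, Int.card_Ico]
    omega

end CycleAux

open MeasureTheory ProbabilityTheory


/-- Cycle lemma: let `X₁,…,Xₙ` be integer-valued, cyclically interchangeable
random variables, each at most `1` a.s., with partial sums `Sᵢ = X₁ + ⋯ + Xᵢ`.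
Then for every `0 ≤ k ≤ n`,
`P(Sᵢ > 0 ∀ 1 ≤ i ≤ n ∧ Sₙ = k) = (k/n)·P(Sₙ = k)`, i.e. the conditional
probability given `Sₙ = k` (an event of positive probability) is `k/n`. -/
theorem stmt_9 {Ω : Type*} [MeasurableSpace Ω] (μ : Measure Ω) [IsProbabilityMeasure μ]
    (n : ℕ) (hn : 1 ≤ n) (X : Fin n → Ω → ℤ) (hmeas : ∀ i, Measurable (X i))
    (hcyc : ∀ j : Fin n,
      IdentDistrib (fun ω => fun i : Fin n => X (i + j) ω)
        (fun ω => fun i : Fin n => X i ω) μ μ)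
    (hbound : ∀ i, ∀ᵐ ω ∂μ, X i ω ≤ 1)
    (k : ℕ) (hk : k ≤ n)
    (hpos : 0 < μ {ω | ∑ j : Fin n, X j ω = (k : ℤ)}) :
    μ ({ω | ∀ i : Fin n, 0 < ∑ j ∈ Finset.Iic i, X j ω} ∩
        {ω | ∑ j : Fin n, X j ω = (k : ℤ)})
      = ((k : ENNReal) / n) * μ {ω | ∑ j : Fin n, X j ω = (k : ℤ)} := by
  classical
  haveI hnz : NeZero n := ⟨by omega⟩
  set B : Set (Fin n → ℤ) :=
    {f | (∀ i : Fin n, 0 < ∑ i' ∈ Finset.Iic i, f i') ∧ ∑ i, f i = (k:ℤ)} with hB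
  have hBmeas : MeasurableSet B := (Set.to_countable B).measurableSet
  set A : Fin n → Set Ω := fun j => (fun ω => fun i : Fin n => X (i + j) ω) ⁻¹' B with hA
  have hφmeas : ∀ j : Fin n, Measurable (fun ω => fun i : Fin n => X (i + j) ω) :=
    fun j => measurable_pi_lambda _ (fun i => hmeas _)
  have hAmeas : ∀ j, MeasurableSet (A j) := fun j => (hφmeas j) hBmeas
  have hA0 : A 0 = {ω | ∀ i : Fin n, 0 < ∑ j ∈ Finset.Iic i, X j ω} ∩
      {ω | ∑ j : Fin n, X j ω = (k : ℤ)} := by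
    ext ω
    show (fun i : Fin n => X (i + 0) ω) ∈ B ↔ _
    simp only [add_zero, hB, Set.mem_setOf_eq, Set.mem_inter_iff]
  have hsum_shift : ∀ (j : Fin n) (ω : Ω), ∑ i : Fin n, X (i + j) ω = ∑ i, X i ω :=
    fun j ω => Fintype.sum_equiv (Equiv.addRight j) _ _ (fun _ => rfl)
  set T : Set Ω := {ω | ∑ j : Fin n, X j ω = (k:ℤ)} with hT
  have hSmeas : Measurable (fun ω => ∑ j : Fin n, X j ω) := by
    apply Finset.measurable_sum
    intro i _
    exact hmeas i
  have hTmeas : MeasurableSet T := by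
    have : T = (fun ω => ∑ j : Fin n, X j ω) ⁻¹' {(k:ℤ)} := by
      ext ω; simp [hT]
    rw [this]
    exact hSmeas (measurableSet_singleton _)
  have hμA : ∀ j : Fin n, μ (A j) = μ (A 0) := by
    intro j
    have h1 := (hcyc j).measure_mem_eq hBmeas
    have h2 := (hcyc 0).measure_mem_eq hBmeas
    rw [hA]
    simp only at h1 h2 ⊢
    rw [h1, ← h2]
  have hae : ∀ᵐ ω ∂μ, ∑ j : Fin n, (A j).indicator (fun _ => (1:ENNReal)) ω
      = T.indicator (fun _ => (k:ENNReal)) ω := by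
    have hball : ∀ᵐ ω ∂μ, ∀ i, X i ω ≤ 1 := (ae_all_iff).mpr hbound
    filter_upwards [hball] with ω hω
    by_cases hTm : ω ∈ T
    · have hTk : ∑ i, X i ω = (k:ℤ) := hTm
      have hmemiff : ∀ j : Fin n, ω ∈ A j ↔
          (∀ i : Fin n, 0 < ∑ i' ∈ Finset.Iic i, X (i' + j) ω) := by
        intro j
        simp only [hA, hB, Set.mem_preimage, Set.mem_setOf_eq]
        constructor
        · exact fun h => h.1
        · intro h
          exact ⟨h, by rw [hsum_shift j ω]; exact hTk⟩
      rw [Set.indicator_of_mem hTm]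
      calc ∑ j : Fin n, (A j).indicator (fun _ => (1:ENNReal)) ω
          = ∑ j : Fin n, (if (∀ i : Fin n, 0 < ∑ i' ∈ Finset.Iic i, X (i' + j) ω)
              then (1:ENNReal) else 0) := by
            refine Finset.sum_congr rfl (fun j _ => ?_)
            rw [Set.indicator_apply]
            exact if_congr (hmemiff j) rfl rfl
        _ = ((Finset.univ.filter
              (fun j : Fin n => ∀ i : Fin n, 0 < ∑ i' ∈ Finset.Iic i, X (i' + j) ω)).card
              : ENNReal) := by rw [Finset.sum_boole]
        _ = (k:ENNReal) := by
            have hcg := CycleAux.card_good (by omega) (fun i => X i ω) hω k hk hTk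
            exact_mod_cast hcg
    · rw [Set.indicator_of_notMem hTm]
      apply Finset.sum_eq_zero
      intro j _
      apply Set.indicator_of_notMem
      intro hmem
      apply hTm
      have h2 : ∑ i, X (i + j) ω = (k:ℤ) := hmem.2
      show ∑ i, X i ω = (k:ℤ)
      rw [← hsum_shift j ω]
      exact h2
  have key : (n : ENNReal) * μ (A 0) = (k : ENNReal) * μ T := by
    have h1 : ∑ _j : Fin n, μ (A 0) = (n:ENNReal) * μ (A 0) := by
      rw [Finset.sum_const, Finset.card_univ, Fintype.card_fin, nsmul_eq_mul]
    have h2 : ∑ j : Fin n, μ (A j)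
        = ∫⁻ ω, ∑ j : Fin n, (A j).indicator (fun _ => (1:ENNReal)) ω ∂μ := by
      rw [lintegral_finset_sum]
      · refine Finset.sum_congr rfl (fun j _ => ?_)
        rw [lintegral_indicator_const (hAmeas j), one_mul]
      · intro j _
        exact measurable_const.indicator (hAmeas j)
    have h3 : ∫⁻ ω, ∑ j : Fin n, (A j).indicator (fun _ => (1:ENNReal)) ω ∂μ
        = ∫⁻ ω, T.indicator (fun _ => (k:ENNReal)) ω ∂μ := lintegral_congr_ae hae
    have h4 : ∑ j : Fin n, μ (A j) = ∑ _j : Fin n, μ (A 0) :=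
      Finset.sum_congr rfl (fun j _ => hμA j)
    rw [← h1, ← h4, h2, h3, lintegral_indicator_const hTmeas]
  rw [← hA0]
  have hn0' : (n:ENNReal) ≠ 0 := by
    simp only [ne_eq, Nat.cast_eq_zero]
    omega
  have hnt : (n:ENNReal) ≠ ⊤ := ENNReal.natCast_ne_top n
  calc μ (A 0) = (n:ENNReal) * μ (A 0) / n := by
        rw [mul_comm, mul_div_assoc, ENNReal.div_self hn0' hnt, mul_one]
    _ = (k:ENNReal) * μ T / n := by rw [key]
    _ = (k:ENNReal)/n * μ T := by
        rw [div_eq_mul_inv, div_eq_mul_inv, mul_right_comm]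
end
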